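/- arXiv:1405.6229 — 11 statements merged into one kernel-verified Lean document; each statement's English description precedes it below -/
import Mathlib

section
/- For real numbers a, b and p ≥ 2, the inequality 2^(p-1)(|a|^p + |b|^p) ≥ |a+b|^p + |a-b|^p holds. -/
theorem clarkson_scalar (a b p : ℝ) (hp : 2 ≤ p) :
    |a + b| ^ p + |a - b| ^ p ≤ 2 ^ (p - 1) * (|a| ^ p + |b| ^ p) := by
  have hq : (1 : ℝ) ≤ p / 2 := by linarith
  -- work with nnnorms
  set x := ‖a + b‖₊
  set y := ‖a - b‖₊
  set u := ‖a‖₊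
  set v := ‖b‖₊
  have key : x ^ p + y ^ p ≤ 2 ^ (p - 1) * (u ^ p + v ^ p) := by
    have parallel : x ^ (2 : ℝ) + y ^ (2 : ℝ) = 2 * (u ^ (2 : ℝ) + v ^ (2 : ℝ)) := by
      have : ((x ^ (2 : ℝ) + y ^ (2 : ℝ) : NNReal) : ℝ)
          = ((2 * (u ^ (2 : ℝ) + v ^ (2 : ℝ)) : NNReal) : ℝ) := by
        push_cast [NNReal.coe_rpow]
        simp only [x, y, u, v, coe_nnnorm, Real.norm_eq_abs]
        rw [Real.rpow_two, Real.rpow_two, Real.rpow_two, Real.rpow_two,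
          sq_abs, sq_abs, sq_abs, sq_abs]
        ring
      exact_mod_cast this
    calc x ^ p + y ^ p
        = (x ^ (2 : ℝ)) ^ (p / 2) + (y ^ (2 : ℝ)) ^ (p / 2) := by
          rw [← NNReal.rpow_mul, ← NNReal.rpow_mul, show 2 * (p / 2) = p from by ring]
      _ ≤ (x ^ (2 : ℝ) + y ^ (2 : ℝ)) ^ (p / 2) :=
          NNReal.add_rpow_le_rpow_add _ _ hq
      _ = (2 * (u ^ (2 : ℝ) + v ^ (2 : ℝ))) ^ (p / 2) := by rw [parallel]
      _ = 2 ^ (p / 2) * (u ^ (2 : ℝ) + v ^ (2 : ℝ)) ^ (p / 2) := by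
          rw [NNReal.mul_rpow]
      _ ≤ 2 ^ (p / 2) * (2 ^ (p / 2 - 1) * ((u ^ (2 : ℝ)) ^ (p / 2) + (v ^ (2 : ℝ)) ^ (p / 2))) :=
          mul_le_mul_right (NNReal.rpow_add_le_mul_rpow_add_rpow _ _ hq) _
      _ = 2 ^ (p - 1) * (u ^ p + v ^ p) := by
          rw [← mul_assoc, ← NNReal.rpow_add two_ne_zero, ← NNReal.rpow_mul,
            ← NNReal.rpow_mul, show 2 * (p / 2) = p from by ring,
            show p / 2 + (p / 2 - 1) = p - 1 from by ring]
  have := (NNReal.coe_le_coe).2 key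
  push_cast [NNReal.coe_rpow] at this
  simpa only [x, y, u, v, coe_nnnorm, Real.norm_eq_abs] using this
end

section
/- Let p ∈ [2, ∞) and let φ, ψ ∈ L^p(μ) for a measure space (X, μ). Then 2^(p-1)(‖φ‖_p^p + ‖ψ‖_p^p) ≥ ‖φ+ψ‖_p^p + ‖φ-ψ‖_p^p. -/
open MeasureTheory ENNReal

private lemma clarkson_nnreal_aux (p : ℝ) (hp : 2 ≤ p) (a b : ℝ) :
    ‖a + b‖₊ ^ p + ‖a - b‖₊ ^ p ≤ 2 ^ (p - 1) * (‖a‖₊ ^ p + ‖b‖₊ ^ p) := by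
  have hp0 : (0:ℝ) < p := by linarith
  set u := ‖a + b‖₊
  set v := ‖a - b‖₊
  set s := ‖a‖₊
  set t := ‖b‖₊
  have h2 : u ^ (2:ℝ) + v ^ (2:ℝ) = 2 * (s ^ (2:ℝ) + t ^ (2:ℝ)) := by
    apply NNReal.coe_injective
    push_cast [NNReal.coe_rpow]
    have h2' : ((2:ℝ) : ℝ) = ((2:ℕ) : ℝ) := by norm_num
    rw [h2']
    rw [Real.rpow_natCast, Real.rpow_natCast, Real.rpow_natCast, Real.rpow_natCast]
    simp only [u, v, s, t, coe_nnnorm, Real.norm_eq_abs]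
    rw [sq_abs, sq_abs, sq_abs, sq_abs]
    ring
  have h1 : (u ^ p + v ^ p) ^ (1/p) ≤ (u ^ (2:ℝ) + v ^ (2:ℝ)) ^ (1/(2:ℝ)) :=
    NNReal.rpow_add_rpow_le u v two_pos hp
  have h1' : u ^ p + v ^ p ≤ (u ^ (2:ℝ) + v ^ (2:ℝ)) ^ (p/2) := by
    have h := NNReal.rpow_le_rpow h1 hp0.le
    rwa [← NNReal.rpow_mul, ← NNReal.rpow_mul, one_div_mul_cancel hp0.ne',
      NNReal.rpow_one, one_div, inv_mul_eq_div] at h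
  rw [h2] at h1'
  have h3 : (2 * (s ^ (2:ℝ) + t ^ (2:ℝ))) ^ (p/2)
      = 2 ^ (p/2) * (s ^ (2:ℝ) + t ^ (2:ℝ)) ^ (p/2) := by
    rw [NNReal.mul_rpow]
  have h4 : (s ^ (2:ℝ) + t ^ (2:ℝ)) ^ (p/2)
      ≤ 2 ^ (p/2 - 1) * ((s ^ (2:ℝ)) ^ (p/2) + (t ^ (2:ℝ)) ^ (p/2)) :=
    NNReal.rpow_add_le_mul_rpow_add_rpow _ _ (by linarith)
  have h5 : (s ^ (2:ℝ)) ^ (p/2) = s ^ p := by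
    rw [← NNReal.rpow_mul]; congr 1; ring
  have h6 : (t ^ (2:ℝ)) ^ (p/2) = t ^ p := by
    rw [← NNReal.rpow_mul]; congr 1; ring
  rw [h5, h6] at h4
  calc u ^ p + v ^ p ≤ 2 ^ (p/2) * (s ^ (2:ℝ) + t ^ (2:ℝ)) ^ (p/2) := by
        rw [← h3]; exact h1'
    _ ≤ 2 ^ (p/2) * (2 ^ (p/2 - 1) * (s ^ p + t ^ p)) := by
        exact mul_le_mul_right h4 _
    _ = 2 ^ (p - 1) * (s ^ p + t ^ p) := by
        rw [← mul_assoc, ← NNReal.rpow_add two_ne_zero]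
        ring_nf

private lemma clarkson_ennreal_aux (p : ℝ) (hp : 2 ≤ p) (a b : ℝ) :
    (‖a + b‖₊ : ℝ≥0∞) ^ p + (‖a - b‖₊ : ℝ≥0∞) ^ p
      ≤ (2 : ℝ≥0∞) ^ (p - 1) * ((‖a‖₊ : ℝ≥0∞) ^ p + (‖b‖₊ : ℝ≥0∞) ^ p) := by
  have hp0 : (0:ℝ) ≤ p := by linarith
  have hp1 : (0:ℝ) ≤ p - 1 := by linarith
  have h := clarkson_nnreal_aux p hp a b
  rw [ENNReal.coe_two.symm,
    ← ENNReal.coe_rpow_of_nonneg _ hp0, ← ENNReal.coe_rpow_of_nonneg _ hp0,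
    ← ENNReal.coe_rpow_of_nonneg _ hp0, ← ENNReal.coe_rpow_of_nonneg _ hp0,
    ← ENNReal.coe_rpow_of_nonneg _ hp1, ← ENNReal.coe_add, ← ENNReal.coe_add,
    ← ENNReal.coe_mul]
  exact ENNReal.coe_le_coe.2 h

theorem clarkson_first_Lp {X : Type*} [MeasurableSpace X] (μ : Measure X)
    (p : ℝ) (hp : 2 ≤ p) (φ ψ : Lp ℝ (ENNReal.ofReal p) μ) :
    ‖φ + ψ‖ ^ p + ‖φ - ψ‖ ^ p ≤ 2 ^ (p - 1) * (‖φ‖ ^ p + ‖ψ‖ ^ p) := by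
  have hp0 : (0:ℝ) < p := by linarith
  have hq0 : ENNReal.ofReal p ≠ 0 := by simp [ENNReal.ofReal_eq_zero]; linarith
  have hq_top : ENNReal.ofReal p ≠ ∞ := ENNReal.ofReal_ne_top
  have hqr : (ENNReal.ofReal p).toReal = p := ENNReal.toReal_ofReal hp0.le
  have key : ∀ f : Lp ℝ (ENNReal.ofReal p) μ,
      ‖f‖ ^ p = (∫⁻ x, (‖f x‖₊ : ℝ≥0∞) ^ p ∂μ).toReal := by
    intro f
    rw [Lp.norm_def, eLpNorm_eq_lintegral_rpow_enorm_toReal hq0 hq_top]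
    simp only [enorm_eq_nnnorm]
    rw [hqr,
      ENNReal.toReal_rpow, ← ENNReal.rpow_mul, one_div_mul_cancel hp0.ne',
      ENNReal.rpow_one]
  have fint : ∀ f : Lp ℝ (ENNReal.ofReal p) μ,
      (∫⁻ x, (‖f x‖₊ : ℝ≥0∞) ^ p ∂μ) ≠ ∞ := by
    intro f
    have := lintegral_rpow_enorm_lt_top_of_eLpNorm_lt_top hq0 hq_top
      (Lp.eLpNorm_lt_top f)
    rw [hqr] at this
    exact this.ne
  have hadd : (∫⁻ x, (‖(φ + ψ) x‖₊ : ℝ≥0∞) ^ p ∂μ)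
      = ∫⁻ x, (‖φ x + ψ x‖₊ : ℝ≥0∞) ^ p ∂μ := by
    refine lintegral_congr_ae ((Lp.coeFn_add φ ψ).mono fun x hx => ?_)
    simp only [Pi.add_apply] at hx
    simp only [hx]
  have hsub : (∫⁻ x, (‖(φ - ψ) x‖₊ : ℝ≥0∞) ^ p ∂μ)
      = ∫⁻ x, (‖φ x - ψ x‖₊ : ℝ≥0∞) ^ p ∂μ := by
    refine lintegral_congr_ae ((Lp.coeFn_sub φ ψ).mono fun x hx => ?_)
    simp only [Pi.sub_apply] at hx
    simp only [hx]
  have hAne : (∫⁻ x, (‖φ x + ψ x‖₊ : ℝ≥0∞) ^ p ∂μ) ≠ ∞ := hadd ▸ fint (φ + ψ)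
  have hBne : (∫⁻ x, (‖φ x - ψ x‖₊ : ℝ≥0∞) ^ p ∂μ) ≠ ∞ := hsub ▸ fint (φ - ψ)
  have hCne : (∫⁻ x, (‖φ x‖₊ : ℝ≥0∞) ^ p ∂μ) ≠ ∞ := fint φ
  have hDne : (∫⁻ x, (‖ψ x‖₊ : ℝ≥0∞) ^ p ∂μ) ≠ ∞ := fint ψ
  have meas : ∀ f : Lp ℝ (ENNReal.ofReal p) μ,
      AEMeasurable (fun x => (‖f x‖₊ : ℝ≥0∞) ^ p) μ := fun f =>
    ((Lp.aestronglyMeasurable f).aemeasurable.nnnorm.coe_nnreal_ennreal).pow_const p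
  have h2top : (2 : ℝ≥0∞) ^ (p - 1) ≠ ∞ :=
    (ENNReal.rpow_lt_top_of_nonneg (by linarith) (by norm_num)).ne
  have hABle : (∫⁻ x, (‖φ x + ψ x‖₊ : ℝ≥0∞) ^ p ∂μ)
      + (∫⁻ x, (‖φ x - ψ x‖₊ : ℝ≥0∞) ^ p ∂μ)
      ≤ (2 : ℝ≥0∞) ^ (p - 1) * ((∫⁻ x, (‖φ x‖₊ : ℝ≥0∞) ^ p ∂μ)
        + (∫⁻ x, (‖ψ x‖₊ : ℝ≥0∞) ^ p ∂μ)) := by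
    calc (∫⁻ x, (‖φ x + ψ x‖₊ : ℝ≥0∞) ^ p ∂μ)
          + (∫⁻ x, (‖φ x - ψ x‖₊ : ℝ≥0∞) ^ p ∂μ)
        = ∫⁻ x, ((‖φ x + ψ x‖₊ : ℝ≥0∞) ^ p + (‖φ x - ψ x‖₊ : ℝ≥0∞) ^ p) ∂μ := by
          rw [lintegral_add_left' (by
            exact (((Lp.aestronglyMeasurable φ).aemeasurable.add
              (Lp.aestronglyMeasurable ψ).aemeasurable).nnnorm.coe_nnreal_ennreal).pow_const p)]
      _ ≤ ∫⁻ x, (2 : ℝ≥0∞) ^ (p - 1) * ((‖φ x‖₊ : ℝ≥0∞) ^ p + (‖ψ x‖₊ : ℝ≥0∞) ^ p) ∂μ :=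
          lintegral_mono fun x => clarkson_ennreal_aux p hp (φ x) (ψ x)
      _ = _ := by
          rw [lintegral_const_mul' _ _ h2top, lintegral_add_left' (meas φ)]
  have hRHSne : (2 : ℝ≥0∞) ^ (p - 1) * ((∫⁻ x, (‖φ x‖₊ : ℝ≥0∞) ^ p ∂μ)
      + (∫⁻ x, (‖ψ x‖₊ : ℝ≥0∞) ^ p ∂μ)) ≠ ∞ :=
    ENNReal.mul_ne_top h2top (ENNReal.add_ne_top.2 ⟨hCne, hDne⟩)
  have hfin := ENNReal.toReal_mono hRHSne hABle
  rw [key, key, key, key, hadd, hsub]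
  rw [ENNReal.toReal_add hAne hBne, ENNReal.toReal_mul,
    ENNReal.toReal_add hCne hDne, ← ENNReal.toReal_rpow] at hfin
  simpa using hfin
end

section
/- Let p ∈ [1, 2] and φ, ψ ∈ L^p(μ). Then (‖φ‖_p + ‖ψ‖_p)^p + |‖φ‖_p - ‖ψ‖_p|^p ≤ ‖φ+ψ‖_p^p + ‖φ-ψ‖_p^p. -/
open Real MeasureTheory

noncomputable def hanA (p r : ℝ) : ℝ := (1+r)^(p-1) + (1-r)^(p-1)
noncomputable def hanB (p r : ℝ) : ℝ := r^(1-p) * ((1+r)^(p-1) - (1-r)^(p-1))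
noncomputable def hanG (p c r : ℝ) : ℝ := hanA p r + hanB p r * c
noncomputable def hanA' (p r : ℝ) : ℝ := (p-1)*((1+r)^(p-2) - (1-r)^(p-2))

lemma hanG_hasDerivAt {p : ℝ} (c : ℝ) {r : ℝ} (h0 : 0 < r) (h1 : r < 1) :
    HasDerivAt (hanG p c) (hanA' p r * (1 - c * r^(-p))) r := by
  have hr1 : (0:ℝ) < 1 + r := by linarith
  have hr2 : (0:ℝ) < 1 - r := by linarith
  have d1 : HasDerivAt (fun r : ℝ => 1 + r) 1 r := by
    simpa using (hasDerivAt_id r).const_add 1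
  have d2 : HasDerivAt (fun r : ℝ => 1 - r) (-1) r := by
    simpa using (hasDerivAt_id r).const_sub 1
  have e1 : HasDerivAt (fun r : ℝ => (1+r)^(p-1)) (1 * (p-1) * (1+r)^(p-1-1)) r :=
    d1.rpow_const (Or.inl hr1.ne')
  have e2 : HasDerivAt (fun r : ℝ => (1-r)^(p-1)) ((-1) * (p-1) * (1-r)^(p-1-1)) r :=
    d2.rpow_const (Or.inl hr2.ne')
  have e3 : HasDerivAt (fun r : ℝ => r^(1-p)) (1 * (1-p) * r^(1-p-1)) r :=
    (hasDerivAt_id r).rpow_const (Or.inl h0.ne')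
  have eA : HasDerivAt (hanA p) (hanA' p r) r := by
    have := e1.add e2
    refine this.congr_deriv ?_
    unfold hanA'
    ring_nf
  have eB : HasDerivAt (hanB p)
      (1 * (1-p) * r^(1-p-1) * ((1+r)^(p-1) - (1-r)^(p-1))
        + r^(1-p) * (1 * (p-1) * (1+r)^(p-1-1) - (-1) * (p-1) * (1-r)^(p-1-1))) r :=
    e3.mul (e1.sub e2)
  have key : HasDerivAt (hanG p c)
      (hanA' p r + (1 * (1-p) * r^(1-p-1) * ((1+r)^(p-1) - (1-r)^(p-1))
        + r^(1-p) * (1 * (p-1) * (1+r)^(p-1-1) - (-1) * (p-1) * (1-r)^(p-1-1))) * c) r :=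
    eA.add (eB.mul_const c)
  convert key using 1
  -- algebraic identity
  have h1p : (1+r)^(p-1) = (1+r)^(p-2) * (1+r) := by
    rw [← Real.rpow_add_one hr1.ne']; ring_nf
  have h2p : (1-r)^(p-1) = (1-r)^(p-2) * (1-r) := by
    rw [← Real.rpow_add_one hr2.ne']; ring_nf
  have h3p : r^(1-p) = r^(-p) * r := by
    rw [← Real.rpow_add_one h0.ne']; ring_nf
  have h4p : r^(1-p-1) = r^(-p) := by norm_num
  rw [h4p, h1p, h2p, h3p]
  unfold hanA'
  rw [show p-1-1 = p-2 by ring]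
  ring


lemma hanA'_nonpos {p : ℝ} (hp1 : 1 ≤ p) (hp2 : p ≤ 2) {r : ℝ} (h0 : 0 < r) (h1 : r < 1) :
    hanA' p r ≤ 0 := by
  have h2 : (0:ℝ) < 1 - r := by linarith
  have : (1+r)^(p-2) ≤ (1-r)^(p-2) :=
    Real.rpow_le_rpow_of_nonpos h2 (by linarith) (by linarith)
  have hp : 0 ≤ p - 1 := by linarith
  unfold hanA'
  exact mul_nonpos_of_nonneg_of_nonpos hp (by linarith)

lemma hanG_continuousAt {p : ℝ} (hp1 : 1 ≤ p) (c : ℝ) {x : ℝ} (hx : 0 < x) :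
    ContinuousAt (hanG p c) x := by
  have c1 : ContinuousAt (fun r : ℝ => (1+r)^(p-1)) x := by
    apply ContinuousAt.rpow_const (by fun_prop) (Or.inr (by linarith))
  have c2 : ContinuousAt (fun r : ℝ => (1-r)^(p-1)) x := by
    apply ContinuousAt.rpow_const (by fun_prop) (Or.inr (by linarith))
  have c3 : ContinuousAt (fun r : ℝ => r^(1-p)) x := by
    apply ContinuousAt.rpow_const (by fun_prop) (Or.inl hx.ne')
  unfold hanG hanA hanB
  exact ((c1.add c2).add (((c3.mul (c1.sub c2))).mul continuousAt_const))

lemma hanG_le_max {p : ℝ} (hp1 : 1 ≤ p) (hp2 : p ≤ 2) {R r : ℝ}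
    (hR0 : 0 < R) (hR1 : R ≤ 1) (hr0 : 0 < r) (hr1 : r ≤ 1) :
    hanG p (R^p) r ≤ hanG p (R^p) R := by
  have hp0 : (0:ℝ) < p := by linarith
  rcases le_total r R with hle | hle
  · -- monotone on [r, R]
    have mono : MonotoneOn (hanG p (R^p)) (Set.Icc r R) := by
      apply monotoneOn_of_deriv_nonneg (convex_Icc r R)
      · exact fun x hx => (hanG_continuousAt hp1 _ (lt_of_lt_of_le hr0 hx.1)).continuousWithinAt
      · intro x hx
        rw [interior_Icc] at hx
        exact (hanG_hasDerivAt _ (hr0.trans hx.1) (lt_of_lt_of_le hx.2 hR1)).differentiableAt.differentiableWithinAt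
      · intro x hx
        rw [interior_Icc] at hx
        have hx0 : 0 < x := hr0.trans hx.1
        have hx1 : x < 1 := lt_of_lt_of_le hx.2 hR1
        rw [(hanG_hasDerivAt _ hx0 hx1).deriv]
        have hA := hanA'_nonpos hp1 hp2 hx0 hx1
        have h1 : x^p ≤ R^p := Real.rpow_le_rpow hx0.le hx.2.le hp0.le
        have hxp : (0:ℝ) < x^p := Real.rpow_pos_of_pos hx0 p
        have h2 : (1:ℝ) ≤ R^p * x^(-p) := by
          rw [Real.rpow_neg hx0.le, ← div_eq_mul_inv, le_div_iff₀ hxp, one_mul]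
          exact h1
        nlinarith
    exact mono (Set.mem_Icc.mpr ⟨le_refl r, hle⟩) (Set.mem_Icc.mpr ⟨hle, le_refl R⟩) hle
  · -- antitone on [R, r]
    have anti : AntitoneOn (hanG p (R^p)) (Set.Icc R r) := by
      apply antitoneOn_of_deriv_nonpos (convex_Icc R r)
      · exact fun x hx => (hanG_continuousAt hp1 _ (lt_of_lt_of_le hR0 hx.1)).continuousWithinAt
      · intro x hx
        rw [interior_Icc] at hx
        exact (hanG_hasDerivAt _ (hR0.trans hx.1) (lt_of_lt_of_le hx.2 hr1)).differentiableAt.differentiableWithinAt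
      · intro x hx
        rw [interior_Icc] at hx
        have hx0 : 0 < x := hR0.trans hx.1
        have hx1 : x < 1 := lt_of_lt_of_le hx.2 hr1
        rw [(hanG_hasDerivAt _ hx0 hx1).deriv]
        have hA := hanA'_nonpos hp1 hp2 hx0 hx1
        have h1 : R^p ≤ x^p := Real.rpow_le_rpow hR0.le hx.1.le hp0.le
        have hxp : (0:ℝ) < x^p := Real.rpow_pos_of_pos hx0 p
        have h2 : R^p * x^(-p) ≤ 1 := by
          rw [Real.rpow_neg hx0.le, ← div_eq_mul_inv, div_le_one hxp]
          exact h1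
        have hRp : (0:ℝ) ≤ R^p := (Real.rpow_pos_of_pos hR0 p).le
        have hxn : (0:ℝ) ≤ x^(-p) := Real.rpow_nonneg hx0.le _
        nlinarith
    exact anti (Set.mem_Icc.mpr ⟨le_refl R, hle⟩) (Set.mem_Icc.mpr ⟨hle, le_refl r⟩) hle


lemma hanG_value {p : ℝ} (hp0 : 0 < p) {R : ℝ} (hR0 : 0 < R) (hR1 : R ≤ 1) :
    hanG p (R^p) R = (1+R)^p + (1-R)^p := by
  have h1 : R^(1-p) * R^p = R := by
    rw [← Real.rpow_add hR0]; norm_num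
  have h2 : (1+R)^(p-1) * (1+R) = (1+R)^p := by
    rw [← Real.rpow_add_one (by linarith : (1:ℝ)+R ≠ 0)]; norm_num
  have h3 : (1-R)^(p-1) * (1-R) = (1-R)^p := by
    rcases eq_or_lt_of_le hR1 with h | h
    · rw [← h]; simp [Real.zero_rpow hp0.ne']
    · rw [← Real.rpow_add_one (by linarith : (1:ℝ)-R ≠ 0)]; norm_num
  unfold hanG hanA hanB
  rw [mul_comm (R^(1-p)) _, mul_assoc, h1]
  nlinarith [h2, h3]

lemma hanA_sub_hanB_nonneg {p : ℝ} (hp1 : 1 ≤ p) (hp2 : p ≤ 2) {r : ℝ}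
    (hr0 : 0 < r) (hr1 : r ≤ 1) : hanB p r ≤ hanA p r := by
  have anti : AntitoneOn (hanG p (-1)) (Set.Icc r 1) := by
    apply antitoneOn_of_deriv_nonpos (convex_Icc r 1)
    · exact fun x hx => (hanG_continuousAt hp1 _ (lt_of_lt_of_le hr0 hx.1)).continuousWithinAt
    · intro x hx
      rw [interior_Icc] at hx
      exact (hanG_hasDerivAt _ (hr0.trans hx.1) hx.2).differentiableAt.differentiableWithinAt
    · intro x hx
      rw [interior_Icc] at hx
      have hx0 : 0 < x := hr0.trans hx.1
      have hA := hanA'_nonpos hp1 hp2 hx0 hx.2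
      have hxn : (0:ℝ) ≤ x^(-p) := Real.rpow_nonneg hx0.le _
      rw [(hanG_hasDerivAt _ hx0 hx.2).deriv]
      nlinarith
  have h1 : hanG p (-1) 1 = 2 * (0:ℝ)^(p-1) := by
    unfold hanG hanA hanB
    norm_num
    ring
  have h2 : (0:ℝ) ≤ hanG p (-1) 1 := by
    rw [h1]; positivity
  have := anti (Set.mem_Icc.mpr ⟨le_refl r, hr1⟩) (Set.mem_Icc.mpr ⟨hr1, le_refl 1⟩) hr1
  unfold hanG at this h2
  linarith

lemma hanA_le_two {p : ℝ} (hp1 : 1 ≤ p) (hp2 : p ≤ 2) {r : ℝ}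
    (hr0 : 0 ≤ r) (hr1 : r ≤ 1) : hanA p r ≤ 2 := by
  have hEq : hanA p = hanG p 0 := by
    funext x; simp [hanG]
  have hcont : Continuous (hanA p) := by
    unfold hanA
    apply Continuous.add
    · apply Continuous.rpow_const (by fun_prop)
      exact fun x => Or.inr (by linarith)
    · apply Continuous.rpow_const (by fun_prop)
      exact fun x => Or.inr (by linarith)
  have anti : AntitoneOn (hanA p) (Set.Icc 0 1) := by
    apply antitoneOn_of_deriv_nonpos (convex_Icc 0 1) hcont.continuousOn
    · intro x hx
      rw [interior_Icc] at hx
      rw [hEq]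
      exact (hanG_hasDerivAt _ hx.1 hx.2).differentiableAt.differentiableWithinAt
    · intro x hx
      rw [interior_Icc] at hx
      rw [hEq, (hanG_hasDerivAt _ hx.1 hx.2).deriv]
      have hA := hanA'_nonpos hp1 hp2 hx.1 hx.2
      nlinarith
  have := anti (Set.mem_Icc.mpr ⟨le_refl 0, by norm_num⟩) (Set.mem_Icc.mpr ⟨hr0, hr1⟩) hr0
  have h0 : hanA p 0 = 2 := by unfold hanA; norm_num
  linarith

-- normalized scalar inequality
lemma hanG_le {p : ℝ} (hp1 : 1 ≤ p) (hp2 : p ≤ 2) {R r : ℝ}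
    (hR0 : 0 ≤ R) (hR1 : R ≤ 1) (hr0 : 0 < r) (hr1 : r ≤ 1) :
    hanA p r + hanB p r * R^p ≤ (1+R)^p + (1-R)^p := by
  have hp0 : (0:ℝ) < p := by linarith
  rcases eq_or_lt_of_le hR0 with h | h
  · rw [← h]
    rw [Real.zero_rpow hp0.ne']
    simp [Real.one_rpow]
    calc hanA p r ≤ 2 := hanA_le_two hp1 hp2 hr0.le hr1
    _ = (1:ℝ)^p + 1^p := by rw [Real.one_rpow]; norm_num
    _ ≤ _ := by norm_num
  · have := (hanG_le_max hp1 hp2 h hR1 hr0 hr1).trans_eq (hanG_value hp0 h hR1)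
    unfold hanG at this
    exact this

lemma hanG_value' {p : ℝ} (hp0 : 0 < p) {R : ℝ} (hR0 : 0 < R) (hR1 : R ≤ 1) :
    hanA p R + hanB p R * R^p = (1+R)^p + (1-R)^p := by
  have := hanG_value hp0 hR0 hR1
  unfold hanG at this
  exact this


lemma han_scalar_ord {p : ℝ} (hp1 : 1 ≤ p) (hp2 : p ≤ 2) {r : ℝ}
    (hr0 : 0 < r) (hr1 : r ≤ 1) {a b : ℝ} (hb : 0 ≤ b) (hab : b ≤ a) :
    hanA p r * a^p + hanB p r * b^p ≤ (a+b)^p + (a-b)^p := by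
  have hp0 : (0:ℝ) < p := by linarith
  rcases eq_or_lt_of_le (hb.trans hab) with h | ha
  · have hb0 : b = 0 := le_antisymm (hab.trans h.symm.le) hb
    rw [← h, hb0]
    simp [Real.zero_rpow hp0.ne']
  · set R := b / a with hR
    have hR0 : 0 ≤ R := div_nonneg hb ha.le
    have hR1 : R ≤ 1 := (div_le_one ha).mpr hab
    have hbR : b = a * R := by rw [hR, mul_div_assoc']; exact (eq_div_iff ha.ne').mpr (mul_comm b a)
    have hap : (0:ℝ) < a^p := Real.rpow_pos_of_pos ha p
    have key := hanG_le hp1 hp2 hR0 hR1 hr0 hr1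
    have e1 : (a+b)^p = a^p * (1+R)^p := by
      rw [← Real.mul_rpow ha.le (by linarith)]
      congr 1
      rw [hbR]; ring
    have e2 : (a-b)^p = a^p * (1-R)^p := by
      rw [← Real.mul_rpow ha.le (by linarith)]
      congr 1
      rw [hbR]; ring
    have e3 : b^p = a^p * R^p := by
      rw [hbR, Real.mul_rpow ha.le hR0]
    rw [e1, e2, e3]
    calc hanA p r * a^p + hanB p r * (a^p * R^p)
        = a^p * (hanA p r + hanB p r * R^p) := by ring
      _ ≤ a^p * ((1+R)^p + (1-R)^p) := by
          exact mul_le_mul_of_nonneg_left key hap.le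
      _ = a^p * (1+R)^p + a^p * (1-R)^p := by ring

lemma han_scalar_abs {p : ℝ} (hp1 : 1 ≤ p) (hp2 : p ≤ 2) {r : ℝ}
    (hr0 : 0 < r) (hr1 : r ≤ 1) {x y : ℝ} (hx : 0 ≤ x) (hy : 0 ≤ y) :
    hanA p r * x^p + hanB p r * y^p ≤ (x+y)^p + |x-y|^p := by
  have hp0 : (0:ℝ) < p := by linarith
  rcases le_total y x with h | h
  · rw [abs_of_nonneg (by linarith)]
    exact han_scalar_ord hp1 hp2 hr0 hr1 hy h
  · rw [abs_of_nonpos (by linarith), neg_sub]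
    have swap : hanA p r * x^p + hanB p r * y^p ≤ hanA p r * y^p + hanB p r * x^p := by
      have h1 := hanA_sub_hanB_nonneg hp1 hp2 hr0 hr1
      have h2 : x^p ≤ y^p := Real.rpow_le_rpow hx h hp0.le
      nlinarith
    calc hanA p r * x^p + hanB p r * y^p
        ≤ hanA p r * y^p + hanB p r * x^p := swap
      _ ≤ (y+x)^p + (y-x)^p := han_scalar_ord hp1 hp2 hr0 hr1 hx h
      _ = (x+y)^p + (y-x)^p := by rw [add_comm y x]

lemma abs_pair_rpow (p a b : ℝ) :
    (|a|+|b|)^p + |(|a| - |b|)|^p = |a+b|^p + |a-b|^p := by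
  rcases le_total 0 a with ha | ha <;> rcases le_total 0 b with hb | hb
  · rw [abs_of_nonneg ha, abs_of_nonneg hb, abs_of_nonneg (by linarith : (0:ℝ) ≤ a+b)]
  · rw [abs_of_nonneg ha, abs_of_nonpos hb,
      show a + -b = a - b by ring, show a - -b = a + b by ring,
      abs_of_nonneg (by linarith : (0:ℝ) ≤ a-b), add_comm (|a+b|^p)]
  · rw [abs_of_nonpos ha, abs_of_nonneg hb,
      show -a + b = -(a - b) by ring, show -a - b = -(a + b) by ring,
      abs_neg, abs_of_nonpos (by linarith : a-b ≤ 0)]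
    exact add_comm _ _
  · rw [abs_of_nonpos ha, abs_of_nonpos hb,
      show -a + -b = -(a + b) by ring, show -a - -b = -(a - b) by ring,
      abs_neg, abs_of_nonpos (by linarith : a+b ≤ 0)]

lemma han_pointwise {p : ℝ} (hp1 : 1 ≤ p) (hp2 : p ≤ 2) {r : ℝ}
    (hr0 : 0 < r) (hr1 : r ≤ 1) (a b : ℝ) :
    hanA p r * |a|^p + hanB p r * |b|^p ≤ |a+b|^p + |a-b|^p := by
  rw [← abs_pair_rpow]
  exact han_scalar_abs hp1 hp2 hr0 hr1 (abs_nonneg a) (abs_nonneg b)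


section Integration

variable {X : Type*} [MeasurableSpace X] (μ : Measure X) {p : ℝ}

lemma han_norm_rpow (hp1 : 1 ≤ p) (f : Lp ℝ (ENNReal.ofReal p) μ) :
    ‖f‖ ^ p = ∫ a, |f a| ^ p ∂μ := by
  have hp0 : (0:ℝ) < p := by linarith
  have hP0 : ENNReal.ofReal p ≠ 0 := ne_of_gt (ENNReal.ofReal_pos.mpr hp0)
  have hPt : ENNReal.ofReal p ≠ ⊤ := ENNReal.ofReal_ne_top
  have h := (Lp.memLp f).eLpNorm_eq_integral_rpow_norm hP0 hPt
  have hI : (0:ℝ) ≤ ∫ a, ‖f a‖ ^ p ∂μ :=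
    integral_nonneg fun a => Real.rpow_nonneg (norm_nonneg _) _
  have htr : (ENNReal.ofReal p).toReal = p := ENNReal.toReal_ofReal hp0.le
  rw [Lp.norm_def, h, htr, ENNReal.toReal_ofReal (Real.rpow_nonneg hI _),
    Real.rpow_inv_rpow hI hp0.ne']
  simp [Real.norm_eq_abs]

lemma han_integrable (hp1 : 1 ≤ p) (f : Lp ℝ (ENNReal.ofReal p) μ) :
    Integrable (fun a => |f a| ^ p) μ := by
  have hp0 : (0:ℝ) < p := by linarith
  have hP0 : ENNReal.ofReal p ≠ 0 := ne_of_gt (ENNReal.ofReal_pos.mpr hp0)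
  have h := (Lp.memLp f).integrable_norm_rpow hP0 ENNReal.ofReal_ne_top
  rw [ENNReal.toReal_ofReal hp0.le] at h
  simpa [Real.norm_eq_abs] using h

lemma hanner_aux (hp1 : 1 ≤ p) (hp2 : p ≤ 2) (φ ψ : Lp ℝ (ENNReal.ofReal p) μ)
    (hBA : ‖ψ‖ ≤ ‖φ‖) :
    (‖φ‖ + ‖ψ‖) ^ p + |‖φ‖ - ‖ψ‖| ^ p ≤ ‖φ + ψ‖ ^ p + ‖φ - ψ‖ ^ p := by
  have hp0 : (0:ℝ) < p := by linarith
  haveI : Fact (1 ≤ ENNReal.ofReal p) := ⟨by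
    rw [← ENNReal.ofReal_one]
    exact ENNReal.ofReal_le_ofReal hp1⟩
  rcases eq_or_lt_of_le (norm_nonneg ψ) with h0 | h0
  · -- ψ = 0
    have hψ : ψ = 0 := norm_eq_zero.mp h0.symm
    subst hψ
    simp [abs_of_nonneg (norm_nonneg φ)]
  · -- main case
    have hA0 : (0:ℝ) < ‖φ‖ := lt_of_lt_of_le h0 hBA
    set r : ℝ := ‖ψ‖ / ‖φ‖ with hr
    have hr0 : 0 < r := div_pos h0 hA0
    have hr1 : r ≤ 1 := (div_le_one hA0).mpr hBA
    -- integral inequality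
    have key : hanA p r * ‖φ‖^p + hanB p r * ‖ψ‖^p ≤ ‖φ + ψ‖^p + ‖φ - ψ‖^p := by
      rw [han_norm_rpow μ hp1 φ, han_norm_rpow μ hp1 ψ, han_norm_rpow μ hp1 (φ + ψ),
        han_norm_rpow μ hp1 (φ - ψ), ← integral_const_mul, ← integral_const_mul,
        ← integral_add ((han_integrable μ hp1 φ).const_mul _)
          ((han_integrable μ hp1 ψ).const_mul _),
        ← integral_add (han_integrable μ hp1 (φ + ψ)) (han_integrable μ hp1 (φ - ψ))]
      apply integral_mono_ae
        (((han_integrable μ hp1 φ).const_mul _).add ((han_integrable μ hp1 ψ).const_mul _))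
        ((han_integrable μ hp1 (φ + ψ)).add (han_integrable μ hp1 (φ - ψ)))
      filter_upwards [Lp.coeFn_add φ ψ, Lp.coeFn_sub φ ψ] with a h1 h2
      simp only [Pi.add_apply, Pi.sub_apply]
      rw [h1, h2]
      exact han_pointwise hp1 hp2 hr0 hr1 (φ a) (ψ a)
    -- optimization equality
    have hψφ : ‖ψ‖ = ‖φ‖ * r := by rw [hr, mul_div_assoc']; exact (eq_div_iff hA0.ne').mpr (mul_comm _ _)
    have hap : (0:ℝ) < ‖φ‖^p := Real.rpow_pos_of_pos hA0 p
    have e1 : (‖φ‖ + ‖ψ‖)^p = ‖φ‖^p * (1+r)^p := by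
      rw [← Real.mul_rpow hA0.le (by nlinarith)]
      congr 1; rw [hψφ]; ring
    have e2 : (‖φ‖ - ‖ψ‖)^p = ‖φ‖^p * (1-r)^p := by
      rw [← Real.mul_rpow hA0.le (by nlinarith)]
      congr 1; rw [hψφ]; ring
    have e3 : ‖ψ‖^p = ‖φ‖^p * r^p := by
      rw [hψφ, Real.mul_rpow hA0.le hr0.le]
    have hval := hanG_value' hp0 hr0 hr1
    rw [abs_of_nonneg (by linarith : (0:ℝ) ≤ ‖φ‖ - ‖ψ‖), e1, e2]
    calc ‖φ‖^p * (1+r)^p + ‖φ‖^p * (1-r)^p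
        = ‖φ‖^p * (hanA p r + hanB p r * r^p) := by rw [hval]; ring
      _ = hanA p r * ‖φ‖^p + hanB p r * ‖ψ‖^p := by rw [e3]; ring
      _ ≤ _ := key

end Integration

theorem hanner_Lp_le_two {X : Type*} [MeasurableSpace X] (μ : Measure X)
    (p : ℝ) (hp1 : 1 ≤ p) (hp2 : p ≤ 2) (φ ψ : Lp ℝ (ENNReal.ofReal p) μ) :
    (‖φ‖ + ‖ψ‖) ^ p + |‖φ‖ - ‖ψ‖| ^ p ≤ ‖φ + ψ‖ ^ p + ‖φ - ψ‖ ^ p := by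
  have hp0 : (0:ℝ) < p := by linarith
  haveI : Fact (1 ≤ ENNReal.ofReal p) := ⟨by
    rw [← ENNReal.ofReal_one]
    exact ENNReal.ofReal_le_ofReal hp1⟩
  rcases le_total ‖ψ‖ ‖φ‖ with h | h
  · exact hanner_aux μ hp1 hp2 φ ψ h
  · have := hanner_aux μ hp1 hp2 ψ φ h
    rw [add_comm ψ φ, norm_sub_rev ψ φ] at this
    rw [add_comm ‖φ‖ ‖ψ‖, abs_sub_comm]
    exact this
end

section
/- Let p ∈ (1, 2] and 0 < ε ≤ 2. If φ, ψ ∈ L^p with ‖φ‖ = ‖ψ‖ = 1 and ‖φ - ψ‖ ≥ ε, then ‖(φ+ψ)/2‖ ≤ 1 - δ, where δ ∈ [0,1] is the unique solution of (1 - δ + ε/2)^p + |1 - δ - ε/2|^p = 2. -/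
open MeasureTheory NNReal

namespace HannerAux

variable {p : ℝ}

/-- real power of a sum, subadditivity for exponent in [0,1] -/
lemma rpow_add_le {a b q : ℝ} (ha : 0 ≤ a) (hb : 0 ≤ b) (h0 : 0 ≤ q) (h1 : q ≤ 1) :
    (a + b) ^ q ≤ a ^ q + b ^ q := by
  calc (a + b) ^ q = ((a.toNNReal + b.toNNReal : ℝ≥0) : ℝ) ^ q := by
        rw [NNReal.coe_add, Real.coe_toNNReal _ ha, Real.coe_toNNReal _ hb]
    _ = (((a.toNNReal + b.toNNReal) ^ q : ℝ≥0) : ℝ) := by rw [NNReal.coe_rpow]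
    _ ≤ ((a.toNNReal ^ q + b.toNNReal ^ q : ℝ≥0) : ℝ) := by
        exact_mod_cast NNReal.rpow_add_le_add_rpow _ _ h0 h1
    _ = a ^ q + b ^ q := by
        rw [NNReal.coe_add, NNReal.coe_rpow, NNReal.coe_rpow,
          Real.coe_toNNReal _ ha, Real.coe_toNNReal _ hb]

lemma rpow_succ {x y : ℝ} (hx : 0 ≤ x) (h : y + 1 ≠ 0) : x ^ (y + 1) = x ^ y * x :=
  Real.rpow_add_one' hx h

/-- the slope function s ↦ (s+d)^p - s^p is strictly monotone for d > 0 -/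
lemma slope_strict (hp : 1 < p) {d : ℝ} (hd : 0 < d) :
    StrictMonoOn (fun s : ℝ => (s + d) ^ p - s ^ p) (Set.Ici 0) := by
  have hp0 : (0:ℝ) ≤ p := by linarith
  apply strictMonoOn_of_deriv_pos (convex_Ici 0)
  · apply Continuous.continuousOn
    exact ((continuous_id.add continuous_const).rpow_const fun x => Or.inr hp0).sub
      (continuous_id.rpow_const fun x => Or.inr hp0)
  · intro s hs
    rw [interior_Ici] at hs
    have hs0 : (0:ℝ) < s := hs
    have h1 : HasDerivAt (fun s : ℝ => (s + d) ^ p) (1 * p * (s + d) ^ (p - 1)) s :=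
      ((hasDerivAt_id s).add_const d).rpow_const (Or.inl (by positivity))
    have h2 : HasDerivAt (fun s : ℝ => s ^ p) (1 * p * s ^ (p - 1)) s :=
      (hasDerivAt_id s).rpow_const (Or.inl (ne_of_gt hs0))
    rw [show deriv (fun s : ℝ => (s + d) ^ p - s ^ p) s = _ from (h1.sub h2).deriv]
    have hlt : s ^ (p - 1) < (s + d) ^ (p - 1) :=
      Real.rpow_lt_rpow hs0.le (by linarith) (by linarith)
    nlinarith

lemma slope_le (hp : 1 < p) {d s₁ s₂ : ℝ} (hd : 0 ≤ d) (h1 : 0 ≤ s₁) (h12 : s₁ ≤ s₂) :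
    (s₁ + d) ^ p - s₁ ^ p ≤ (s₂ + d) ^ p - s₂ ^ p := by
  rcases hd.eq_or_lt with rfl | hd'
  · simp
  rcases h12.eq_or_lt with rfl | h12'
  · exact le_rfl
  · exact (slope_strict hp hd' (Set.mem_Ici.2 h1)
      (Set.mem_Ici.2 (h1.trans h12)) h12').le

lemma pair_mono (hp : 1 < p) {x y y' : ℝ} (hx : 0 ≤ x) (hy : 0 ≤ y) (hyy : y ≤ y') :
    (x + y) ^ p + |x - y| ^ p ≤ (x + y') ^ p + |x - y'| ^ p := by
  have hp0 : 0 < p := by linarith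
  have hd0 : 0 ≤ y' - y := by linarith
  have hv : |x - y| - |x - y'| ≤ y' - y := by
    have h := abs_sub_abs_le_abs_sub (x - y) (x - y')
    have he : (x - y) - (x - y') = y' - y := by ring
    rw [he, abs_of_nonneg hd0] at h
    exact h
  have hxyd : (x + y) + (y' - y) = x + y' := by ring
  rcases le_or_gt |x - y| |x - y'| with hcase | hcase
  · have hr : (x + y) ^ p ≤ (x + y') ^ p :=
      Real.rpow_le_rpow (by linarith) (by linarith) hp0.le
    have hl : |x - y| ^ p ≤ |x - y'| ^ p :=
      Real.rpow_le_rpow (abs_nonneg _) hcase hp0.le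
    linarith
  · rcases le_or_gt |x - y| (y' - y) with hvd | hvd
    · have h1 : |x - y| ^ p ≤ (y' - y) ^ p :=
        Real.rpow_le_rpow (abs_nonneg _) hvd hp0.le
      have h2 : (0 + (y' - y)) ^ p - (0:ℝ) ^ p ≤ ((x + y) + (y' - y)) ^ p - (x + y) ^ p :=
        slope_le hp hd0 le_rfl (by positivity)
      rw [zero_add, Real.zero_rpow hp0.ne', hxyd] at h2
      have h3 : 0 ≤ |x - y'| ^ p := Real.rpow_nonneg (abs_nonneg _) p
      linarith
    · have hvu : |x - y| ≤ x + y' := abs_le.2 ⟨by linarith, by linarith⟩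
      have h2 : ((|x - y| - (y' - y)) + (y' - y)) ^ p - (|x - y| - (y' - y)) ^ p
          ≤ ((x + y) + (y' - y)) ^ p - (x + y) ^ p :=
        slope_le hp hd0 (by linarith) (by linarith)
      rw [show (|x - y| - (y' - y)) + (y' - y) = |x - y| from by ring, hxyd] at h2
      have h1 : (|x - y| - (y' - y)) ^ p ≤ |x - y'| ^ p :=
        Real.rpow_le_rpow (by linarith) (by linarith) hp0.le
      linarith

lemma pair_strict (hp : 1 < p) {t x x' : ℝ} (ht : 0 < t) (hx : 0 ≤ x) (hxx : x < x') :
    (x + t) ^ p + |x - t| ^ p < (x' + t) ^ p + |x' - t| ^ p := by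
  have hp0 : 0 < p := by linarith
  have hd0 : 0 < x' - x := by linarith
  have hv : |x - t| - |x' - t| ≤ x' - x := by
    have h := abs_sub_abs_le_abs_sub (x - t) (x' - t)
    have he : (x - t) - (x' - t) = -(x' - x) := by ring
    rw [he, abs_neg, abs_of_nonneg hd0.le] at h
    exact h
  have hxyd : (x + t) + (x' - x) = x' + t := by ring
  rcases le_or_gt |x - t| |x' - t| with hcase | hcase
  · have hr : (x + t) ^ p < (x' + t) ^ p :=
      Real.rpow_lt_rpow (by linarith) (by linarith) hp0
    have hl : |x - t| ^ p ≤ |x' - t| ^ p :=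
      Real.rpow_le_rpow (abs_nonneg _) hcase hp0.le
    linarith
  · rcases le_or_gt |x - t| (x' - x) with hvd | hvd
    · have h1 : |x - t| ^ p ≤ (x' - x) ^ p :=
        Real.rpow_le_rpow (abs_nonneg _) hvd hp0.le
      have h2 : (0 + (x' - x)) ^ p - (0:ℝ) ^ p < ((x + t) + (x' - x)) ^ p - (x + t) ^ p :=
        slope_strict hp hd0 (Set.mem_Ici.2 le_rfl) (Set.mem_Ici.2 (by positivity))
          (by positivity)
      rw [zero_add, Real.zero_rpow hp0.ne', hxyd] at h2
      have h3 : 0 ≤ |x' - t| ^ p := Real.rpow_nonneg (abs_nonneg _) p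
      linarith
    · have hvu : |x - t| < x' + t := abs_lt.2 ⟨by linarith, by linarith⟩
      have h2 : ((|x - t| - (x' - x)) + (x' - x)) ^ p - (|x - t| - (x' - x)) ^ p
          < ((x + t) + (x' - x)) ^ p - (x + t) ^ p :=
        slope_strict hp hd0 (Set.mem_Ici.2 (by linarith)) (Set.mem_Ici.2 (by positivity))
          (by linarith)
      rw [show (|x - t| - (x' - x)) + (x' - x) = |x - t| from by ring, hxyd] at h2
      have h1 : (|x - t| - (x' - x)) ^ p ≤ |x' - t| ^ p :=
        Real.rpow_le_rpow (by linarith) (by linarith) hp0.le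
      linarith

/-- β(r) ≤ α(r) for r ∈ [0,1], 1 < p ≤ 2. -/
lemma beta_le_alpha (hp1 : 1 < p) (hp2 : p ≤ 2) {r : ℝ} (hr0 : 0 ≤ r) (hr1 : r ≤ 1) :
    ((1 + r) ^ (p - 1) - (1 - r) ^ (p - 1)) * r ^ (1 - p)
      ≤ (1 + r) ^ (p - 1) + (1 - r) ^ (p - 1) := by
  have hq0 : (0:ℝ) < p - 1 := by linarith
  have hq1 : p - 1 ≤ 1 := by linarith
  rcases hr0.eq_or_lt with rfl | hrpos
  · simp [Real.zero_rpow (show (1:ℝ) - p ≠ 0 by linarith)]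
  · rw [show (1:ℝ) - p = -(p - 1) from by ring, Real.rpow_neg hr0]
    have hs : 0 < r ^ (p - 1) := Real.rpow_pos_of_pos hrpos _
    rw [← div_eq_mul_inv, div_le_iff₀ hs]
    have hsub : (1 + r) ^ (p - 1) ≤ (1 - r) ^ (p - 1) + 2 ^ (p - 1) * r ^ (p - 1) := by
      have h := rpow_add_le (show (0:ℝ) ≤ 1 - r by linarith) (show (0:ℝ) ≤ 2 * r by linarith)
        hq0.le hq1
      rw [show (1:ℝ) - r + 2 * r = 1 + r from by ring] at h
      rw [show (2:ℝ) * r = 2 * r from rfl] at h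
      have hm : ((2:ℝ) * r) ^ (p - 1) = 2 ^ (p - 1) * r ^ (p - 1) :=
        Real.mul_rpow (by norm_num) hr0
      rw [hm] at h
      exact h
    have h2 : (2:ℝ) ^ (p - 1) ≤ (1 + r) ^ (p - 1) + (1 - r) ^ (p - 1) := by
      have h := rpow_add_le (show (0:ℝ) ≤ 1 + r by linarith) (show (0:ℝ) ≤ 1 - r by linarith)
        hq0.le hq1
      rw [show (1:ℝ) + r + (1 - r) = 2 from by ring] at h
      exact h
    nlinarith [hs.le]

/-- The key lemma: α(r) + β(r) c^p ≤ (1+c)^p + (1-c)^p for r, c ∈ [0,1]. -/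
lemma keyB (hp1 : 1 < p) (hp2 : p ≤ 2) {c r : ℝ} (hc0 : 0 ≤ c) (hc1 : c ≤ 1)
    (hr0 : 0 ≤ r) (hr1 : r ≤ 1) :
    (1 + r) ^ (p - 1) + (1 - r) ^ (p - 1)
      + ((1 + r) ^ (p - 1) - (1 - r) ^ (p - 1)) * r ^ (1 - p) * c ^ p
      ≤ (1 + c) ^ p + (1 - c) ^ p := by
  have hp0 : (0:ℝ) < p := by linarith
  have hq0 : (0:ℝ) < p - 1 := by linarith
  have hq1 : p - 1 ≤ 1 := by linarith
  have hconv2 : (2:ℝ) ≤ (1 + c) ^ p + (1 - c) ^ p := by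
    have hcx := (convexOn_rpow hp1.le).2 (Set.mem_Ici.2 (show (0:ℝ) ≤ 1 + c by linarith))
      (Set.mem_Ici.2 (show (0:ℝ) ≤ 1 - c by linarith))
      (by norm_num : (0:ℝ) ≤ 1/2) (by norm_num : (0:ℝ) ≤ 1/2) (by norm_num)
    simp only [smul_eq_mul] at hcx
    rw [show (1/2 : ℝ) * (1 + c) + (1/2) * (1 - c) = 1 from by ring, Real.one_rpow] at hcx
    linarith
  rcases hr0.eq_or_lt with rfl | hrpos
  · simp only [add_zero, sub_zero, Real.one_rpow, sub_self, zero_mul]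
    linarith
  rcases hc0.eq_or_lt with rfl | hcpos
  · rw [Real.zero_rpow hp0.ne', mul_zero, add_zero, add_zero, sub_zero, Real.one_rpow]
    have hcc := (Real.concaveOn_rpow hq0.le hq1).2
      (Set.mem_Ici.2 (show (0:ℝ) ≤ 1 + r by linarith))
      (Set.mem_Ici.2 (show (0:ℝ) ≤ 1 - r by linarith))
      (by norm_num : (0:ℝ) ≤ 1/2) (by norm_num : (0:ℝ) ≤ 1/2) (by norm_num)
    simp only [smul_eq_mul] at hcc
    rw [show (1/2 : ℝ) * (1 + r) + (1/2) * (1 - r) = 1 from by ring, Real.one_rpow] at hcc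
    linarith
  -- main case 0 < r ≤ 1, 0 < c ≤ 1
  set F : ℝ → ℝ := fun t => (1 + t) ^ (p - 1) + (1 - t) ^ (p - 1)
      + ((1 + t) ^ (p - 1) - (1 - t) ^ (p - 1)) * t ^ (1 - p) * c ^ p with hFdef
  have hcont : ∀ t : ℝ, 0 < t → ContinuousAt F t := by
    intro t ht
    have c1 : ContinuousAt (fun t : ℝ => (1 + t) ^ (p - 1)) t :=
      (continuousAt_const.add continuousAt_id).rpow_const (Or.inr hq0.le)
    have c2 : ContinuousAt (fun t : ℝ => (1 - t) ^ (p - 1)) t :=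
      (continuousAt_const.sub continuousAt_id).rpow_const (Or.inr hq0.le)
    have c3 : ContinuousAt (fun t : ℝ => t ^ (1 - p)) t :=
      continuousAt_id.rpow_const (Or.inl (ne_of_gt ht))
    exact (c1.add c2).add (((c1.sub c2).mul c3).mul continuousAt_const)
  have hderiv : ∀ t ∈ Set.Ioo (0:ℝ) 1, HasDerivAt F
      ((p - 1) * ((1 + t) ^ (p - 2) - (1 - t) ^ (p - 2)) * (1 - c ^ p / t ^ p)) t := by
    intro t ht
    obtain ⟨ht0, ht1⟩ := ht
    have h1p : (0:ℝ) < 1 + t := by linarith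
    have h1m : (0:ℝ) < 1 - t := by linarith
    have h1 : HasDerivAt (fun t : ℝ => (1 + t) ^ (p - 1))
        (1 * (p - 1) * (1 + t) ^ (p - 1 - 1)) t :=
      ((hasDerivAt_id t).const_add 1).rpow_const (Or.inl h1p.ne')
    have h2 : HasDerivAt (fun t : ℝ => (1 - t) ^ (p - 1))
        ((-1) * (p - 1) * (1 - t) ^ (p - 1 - 1)) t :=
      ((hasDerivAt_id t).const_sub 1).rpow_const (Or.inl h1m.ne')
    have h3 : HasDerivAt (fun t : ℝ => t ^ (1 - p))
        (1 * (1 - p) * t ^ (1 - p - 1)) t :=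
      (hasDerivAt_id t).rpow_const (Or.inl ht0.ne')
    have hF' := ((h1.add h2).add (((h1.sub h2).mul h3).mul_const (c ^ p)))
    refine HasDerivAt.congr_deriv hF' ?_
    symm
    simp only [Pi.sub_apply]
    rw [show p - 1 - 1 = p - 2 from by ring, show (1:ℝ) - p - 1 = -p from by ring]
    have e1 : (1 + t) ^ (p - 1) = (1 + t) ^ (p - 2) * (1 + t) := by
      rw [show p - 1 = p - 2 + 1 from by ring, Real.rpow_add_one h1p.ne']
    have e2 : (1 - t) ^ (p - 1) = (1 - t) ^ (p - 2) * (1 - t) := by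
      rw [show p - 1 = p - 2 + 1 from by ring, Real.rpow_add_one h1m.ne']
    have e3 : t ^ (1 - p) = t ^ (-p) * t := by
      rw [show (1:ℝ) - p = -p + 1 from by ring, Real.rpow_add_one ht0.ne']
    have e4 : t ^ (-p : ℝ) = (t ^ p)⁻¹ := Real.rpow_neg ht0.le p
    have htp : (0:ℝ) < t ^ p := Real.rpow_pos_of_pos ht0 p
    rw [e1, e2, e3, e4]
    field_simp
    ring
  have hFc : F c = (1 + c) ^ p + (1 - c) ^ p := by
    have hc2 : c ^ (1 - p) * c ^ p = c := by
      rw [← Real.rpow_add hcpos, show (1:ℝ) - p + p = 1 from by ring, Real.rpow_one]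
    have e1 : (1 + c) ^ p = (1 + c) ^ (p - 1) * (1 + c) := by
      rw [show p = p - 1 + 1 from by ring, Real.rpow_add_one (show (1:ℝ) + c ≠ 0 by positivity)]
      ring_nf
    have e2 : (1 - c) ^ p = (1 - c) ^ (p - 1) * (1 - c) := by
      have h := rpow_succ (x := 1 - c) (y := p - 1) (show (0:ℝ) ≤ 1 - c by linarith)
        (show p - 1 + 1 ≠ 0 by intro h; linarith)
      rw [show p - 1 + 1 = p from by ring] at h
      exact h
    simp only [hFdef]
    rw [mul_assoc, hc2, e1, e2]
    ring
  have hmain : F r ≤ F c := by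
    rcases le_total r c with hrc | hcr
    · -- monotone on [r, c]
      have hmono : MonotoneOn F (Set.Icc r c) := by
        apply monotoneOn_of_deriv_nonneg (convex_Icc r c)
        · exact fun t ht => (hcont t (lt_of_lt_of_le hrpos ht.1)).continuousWithinAt
        · intro t ht
          rw [interior_Icc] at ht
          exact ((hderiv t ⟨hrpos.trans ht.1, lt_of_lt_of_le ht.2 hc1⟩).differentiableAt).differentiableWithinAt
        · intro t ht
          rw [interior_Icc] at ht
          have ht' : t ∈ Set.Ioo (0:ℝ) 1 := ⟨hrpos.trans ht.1, lt_of_lt_of_le ht.2 hc1⟩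
          rw [(hderiv t ht').deriv]
          have hAB : (1 + t) ^ (p - 2) ≤ (1 - t) ^ (p - 2) :=
            Real.rpow_le_rpow_of_nonpos (by linarith [ht'.2]) (by linarith [ht'.1]) (by linarith)
          have htp : (0:ℝ) < t ^ p := Real.rpow_pos_of_pos ht'.1 p
          have hle : t ^ p ≤ c ^ p := Real.rpow_le_rpow ht'.1.le ht.2.le hp0.le
          have h2 : (1:ℝ) - c ^ p / t ^ p ≤ 0 := by
            rw [sub_nonpos, le_div_iff₀ htp, one_mul]; exact hle
          have hin : 0 ≤ ((1 + t) ^ (p - 2) - (1 - t) ^ (p - 2)) * (1 - c ^ p / t ^ p) := by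
            nlinarith [mul_nonneg (neg_nonneg.2 (sub_nonpos.2 hAB)) (neg_nonneg.2 h2)]
          rw [mul_assoc]
          exact mul_nonneg (by linarith) hin
      exact hmono ⟨le_refl r, hrc⟩ ⟨hrc, le_refl c⟩ hrc
    · -- antitone on [c, r]
      have hanti : AntitoneOn F (Set.Icc c r) := by
        apply antitoneOn_of_deriv_nonpos (convex_Icc c r)
        · exact fun t ht => (hcont t (lt_of_lt_of_le hcpos ht.1)).continuousWithinAt
        · intro t ht
          rw [interior_Icc] at ht
          exact ((hderiv t ⟨hcpos.trans ht.1, lt_of_lt_of_le ht.2 hr1⟩).differentiableAt).differentiableWithinAt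
        · intro t ht
          rw [interior_Icc] at ht
          have ht' : t ∈ Set.Ioo (0:ℝ) 1 := ⟨hcpos.trans ht.1, lt_of_lt_of_le ht.2 hr1⟩
          rw [(hderiv t ht').deriv]
          have hAB : (1 + t) ^ (p - 2) ≤ (1 - t) ^ (p - 2) :=
            Real.rpow_le_rpow_of_nonpos (by linarith [ht'.2]) (by linarith [ht'.1]) (by linarith)
          have htp : (0:ℝ) < t ^ p := Real.rpow_pos_of_pos ht'.1 p
          have hle : c ^ p ≤ t ^ p := Real.rpow_le_rpow hc0 ht.1.le hp0.le
          have h2 : (0:ℝ) ≤ 1 - c ^ p / t ^ p := by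
            rw [sub_nonneg, div_le_one htp]; exact hle
          rw [mul_assoc]
          exact mul_nonpos_of_nonneg_of_nonpos (by linarith)
            (mul_nonpos_of_nonpos_of_nonneg (by linarith) h2)
      exact hanti ⟨le_refl c, hcr⟩ ⟨hcr, le_refl r⟩ hcr
  calc (1 + r) ^ (p - 1) + (1 - r) ^ (p - 1)
      + ((1 + r) ^ (p - 1) - (1 - r) ^ (p - 1)) * r ^ (1 - p) * c ^ p = F r := by
        simp only [hFdef]
    _ ≤ F c := hmain
    _ = (1 + c) ^ p + (1 - c) ^ p := hFc

/-- pointwise Hanner with B ≤ A -/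
lemma pointC_le (hp1 : 1 < p) (hp2 : p ≤ 2) {r A B : ℝ} (hr0 : 0 ≤ r) (hr1 : r ≤ 1)
    (hA : 0 ≤ A) (hB : 0 ≤ B) (hBA : B ≤ A) :
    ((1 + r) ^ (p - 1) + (1 - r) ^ (p - 1)) * A ^ p
      + (((1 + r) ^ (p - 1) - (1 - r) ^ (p - 1)) * r ^ (1 - p)) * B ^ p
      ≤ (A + B) ^ p + |A - B| ^ p := by
  have hp0 : (0:ℝ) < p := by linarith
  rcases hA.eq_or_lt with rfl | hApos
  · have hB0 : B = 0 := le_antisymm hBA hB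
    subst hB0
    simp [Real.zero_rpow hp0.ne']
  · set c := B / A with hc
    have hc0 : 0 ≤ c := div_nonneg hB hA
    have hc1 : c ≤ 1 := div_le_one_of_le₀ hBA hA
    have h := keyB hp1 hp2 hc0 hc1 hr0 hr1
    have hAp : (0:ℝ) < A ^ p := Real.rpow_pos_of_pos hApos p
    have h2 := mul_le_mul_of_nonneg_right h hAp.le
    have e1 : c ^ p * A ^ p = B ^ p := by
      rw [hc, Real.div_rpow hB hA, div_mul_cancel₀ _ hAp.ne']
    have e2 : (1 + c) ^ p * A ^ p = (A + B) ^ p := by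
      rw [← Real.mul_rpow (by linarith) hA]
      congr 1
      rw [hc, add_mul, one_mul, div_mul_cancel₀ _ hApos.ne']
    have e3 : (1 - c) ^ p * A ^ p = |A - B| ^ p := by
      rw [← Real.mul_rpow (by linarith) hA]
      congr 1
      rw [abs_of_nonneg (by linarith)]
      rw [hc, sub_mul, one_mul, div_mul_cancel₀ _ hApos.ne']
    calc ((1 + r) ^ (p - 1) + (1 - r) ^ (p - 1)) * A ^ p
          + (((1 + r) ^ (p - 1) - (1 - r) ^ (p - 1)) * r ^ (1 - p)) * B ^ p
        = (((1 + r) ^ (p - 1) + (1 - r) ^ (p - 1))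
          + ((1 + r) ^ (p - 1) - (1 - r) ^ (p - 1)) * r ^ (1 - p) * c ^ p) * A ^ p := by
          rw [← e1]; ring
      _ ≤ ((1 + c) ^ p + (1 - c) ^ p) * A ^ p := h2
      _ = (A + B) ^ p + |A - B| ^ p := by rw [add_mul, e2, e3]

/-- pointwise Hanner for nonnegative reals -/
lemma pointC (hp1 : 1 < p) (hp2 : p ≤ 2) {r A B : ℝ} (hr0 : 0 ≤ r) (hr1 : r ≤ 1)
    (hA : 0 ≤ A) (hB : 0 ≤ B) :
    ((1 + r) ^ (p - 1) + (1 - r) ^ (p - 1)) * A ^ p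
      + (((1 + r) ^ (p - 1) - (1 - r) ^ (p - 1)) * r ^ (1 - p)) * B ^ p
      ≤ (A + B) ^ p + |A - B| ^ p := by
  have hp0 : (0:ℝ) < p := by linarith
  rcases le_total B A with hBA | hAB
  · exact pointC_le hp1 hp2 hr0 hr1 hA hB hBA
  · have hswap := pointC_le hp1 hp2 hr0 hr1 hB hA hAB
    rw [add_comm B A, abs_sub_comm B A] at hswap
    have hba : ((1 + r) ^ (p - 1) - (1 - r) ^ (p - 1)) * r ^ (1 - p)
        ≤ (1 + r) ^ (p - 1) + (1 - r) ^ (p - 1) := beta_le_alpha hp1 hp2 hr0 hr1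
    have hpow : A ^ p ≤ B ^ p := Real.rpow_le_rpow hA hAB hp0.le
    nlinarith [hswap, hba, hpow]

/-- pointwise Hanner for arbitrary reals -/
lemma pointD (hp1 : 1 < p) (hp2 : p ≤ 2) {r : ℝ} (hr0 : 0 ≤ r) (hr1 : r ≤ 1) (a b : ℝ) :
    ((1 + r) ^ (p - 1) + (1 - r) ^ (p - 1)) * |a| ^ p
      + (((1 + r) ^ (p - 1) - (1 - r) ^ (p - 1)) * r ^ (1 - p)) * |b| ^ p
      ≤ |a + b| ^ p + |a - b| ^ p := by
  refine (pointC hp1 hp2 hr0 hr1 (abs_nonneg a) (abs_nonneg b)).trans_eq ?_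
  rcases le_total 0 a with ha | ha <;> rcases le_total 0 b with hb | hb
  · rw [abs_of_nonneg ha, abs_of_nonneg hb, abs_of_nonneg (by linarith : 0 ≤ a + b)]
  · rw [abs_of_nonneg ha, abs_of_nonpos hb, abs_of_nonneg (by linarith : 0 ≤ a - b),
      sub_neg_eq_add, show a + -b = a - b from (sub_eq_add_neg a b).symm]
    try ring
  · rw [abs_of_nonpos ha, abs_of_nonneg hb, abs_of_nonpos (by linarith : a - b ≤ 0),
      show -a - b = -(a + b) from by ring, abs_neg, show -a + b = -(a - b) from by ring]
    try ring
  · rw [abs_of_nonpos ha, abs_of_nonpos hb, abs_of_nonpos (by linarith : a + b ≤ 0),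
      show -a + -b = -(a + b) from by ring, show -a - -b = -(a - b) from by ring, abs_neg]
    try ring

section LpSide

variable {X : Type*} [MeasurableSpace X] {μ : Measure X}

lemma norm_rpow (hp1 : 1 < p) (f : Lp ℝ (ENNReal.ofReal p) μ) :
    ‖f‖ ^ p = ∫ x, |f x| ^ p ∂μ := by
  have hp0 : ENNReal.ofReal p ≠ 0 := by
    simp only [ne_eq, ENNReal.ofReal_eq_zero, not_le]; linarith
  have hpt : ENNReal.ofReal p ≠ ⊤ := ENNReal.ofReal_ne_top
  have htr : (ENNReal.ofReal p).toReal = p := ENNReal.toReal_ofReal (by linarith)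
  have hint : 0 ≤ ∫ x, ‖f x‖ ^ p ∂μ :=
    integral_nonneg fun x => Real.rpow_nonneg (norm_nonneg _) p
  rw [Lp.norm_def, MemLp.eLpNorm_eq_integral_rpow_norm hp0 hpt (Lp.memLp f), htr,
    ENNReal.toReal_ofReal (Real.rpow_nonneg hint _)]
  simp_rw [Real.norm_eq_abs] at hint ⊢
  exact Real.rpow_inv_rpow hint (by linarith)

lemma integrable_abs_rpow (hp1 : 1 < p) (f : Lp ℝ (ENNReal.ofReal p) μ) :
    Integrable (fun x => |f x| ^ p) μ := by
  have hp0 : ENNReal.ofReal p ≠ 0 := by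
    simp only [ne_eq, ENNReal.ofReal_eq_zero, not_le]; linarith
  have hpt : ENNReal.ofReal p ≠ ⊤ := ENNReal.ofReal_ne_top
  have htr : (ENNReal.ofReal p).toReal = p := ENNReal.toReal_ofReal (by linarith)
  have h := (Lp.memLp f).integrable_norm_rpow hp0 hpt
  simpa [htr, Real.norm_eq_abs] using h

/-- Hanner's inequality in L^p for 1 < p ≤ 2, assuming ‖g‖ ≤ ‖f‖. -/
lemma hanner_aux (hp1 : 1 < p) (hp2 : p ≤ 2) (f g : Lp ℝ (ENNReal.ofReal p) μ)
    (hgf : ‖g‖ ≤ ‖f‖) :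
    (‖f‖ + ‖g‖) ^ p + |‖f‖ - ‖g‖| ^ p ≤ ‖f + g‖ ^ p + ‖f - g‖ ^ p := by
  haveI : Fact (1 ≤ ENNReal.ofReal p) := ⟨ENNReal.one_le_ofReal.2 hp1.le⟩
  have hp0 : (0:ℝ) < p := by linarith
  by_cases hf0 : ‖f‖ = 0
  · have hg0 : ‖g‖ = 0 := le_antisymm (hf0 ▸ hgf) (norm_nonneg g)
    rw [hf0, hg0]
    have : ((0:ℝ) + 0) ^ p + |(0:ℝ) - 0| ^ p = 0 := by
      simp [Real.zero_rpow hp0.ne']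
    rw [this]
    positivity
  · have hfpos : 0 < ‖f‖ := (norm_nonneg f).lt_of_ne (Ne.symm hf0)
    set r := ‖g‖ / ‖f‖ with hrdef
    have hr0 : 0 ≤ r := div_nonneg (norm_nonneg g) (norm_nonneg f)
    have hr1 : r ≤ 1 := div_le_one_of_le₀ hgf (norm_nonneg f)
    have hgr : ‖g‖ = r * ‖f‖ := by rw [hrdef, div_mul_cancel₀ _ hfpos.ne']
    have key : ((1 + r) ^ (p - 1) + (1 - r) ^ (p - 1)) * ‖f‖ ^ p
        + (((1 + r) ^ (p - 1) - (1 - r) ^ (p - 1)) * r ^ (1 - p)) * ‖g‖ ^ p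
        ≤ ‖f + g‖ ^ p + ‖f - g‖ ^ p := by
      rw [norm_rpow hp1 f, norm_rpow hp1 g, norm_rpow hp1 (f + g), norm_rpow hp1 (f - g)]
      have ez1 : ∫ x, |(f + g) x| ^ p ∂μ = ∫ x, |f x + g x| ^ p ∂μ :=
        integral_congr_ae ((Lp.coeFn_add f g).mono fun x hx => by
          simp only [Pi.add_apply] at hx; simp only [hx])
      have ez2 : ∫ x, |(f - g) x| ^ p ∂μ = ∫ x, |f x - g x| ^ p ∂μ :=
        integral_congr_ae ((Lp.coeFn_sub f g).mono fun x hx => by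
          simp only [Pi.sub_apply] at hx; simp only [hx])
      have hI1 : Integrable (fun x => |f x + g x| ^ p) μ :=
        (integrable_abs_rpow hp1 (f + g)).congr ((Lp.coeFn_add f g).mono fun x hx => by
          simp only [Pi.add_apply] at hx; simp only [hx])
      have hI2 : Integrable (fun x => |f x - g x| ^ p) μ :=
        (integrable_abs_rpow hp1 (f - g)).congr ((Lp.coeFn_sub f g).mono fun x hx => by
          simp only [Pi.sub_apply] at hx; simp only [hx])
      rw [ez1, ez2, ← integral_const_mul, ← integral_const_mul,
        ← integral_add (((integrable_abs_rpow hp1 f).const_mul _))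
          ((integrable_abs_rpow hp1 g).const_mul _),
        ← integral_add hI1 hI2]
      exact integral_mono
        (((integrable_abs_rpow hp1 f).const_mul _).add
          ((integrable_abs_rpow hp1 g).const_mul _))
        (hI1.add hI2)
        (fun x => pointD hp1 hp2 hr0 hr1 (f x) (g x))
    have eq1 : ((1 + r) ^ (p - 1) + (1 - r) ^ (p - 1)) * ‖f‖ ^ p
        + (((1 + r) ^ (p - 1) - (1 - r) ^ (p - 1)) * r ^ (1 - p)) * ‖g‖ ^ p
        = (‖f‖ + ‖g‖) ^ p + |‖f‖ - ‖g‖| ^ p := by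
      rcases hr0.eq_or_lt with hr | hrpos
      · have hg0 : ‖g‖ = 0 := by rw [hgr, ← hr]; ring
        rw [hg0, Real.zero_rpow hp0.ne', mul_zero, add_zero, ← hr]
        simp only [add_zero, sub_zero, Real.one_rpow, abs_of_nonneg (norm_nonneg f)]
        ring
      · have h1 : ‖g‖ ^ p = r ^ p * ‖f‖ ^ p := by
          rw [hgr, Real.mul_rpow hr0 (norm_nonneg f)]
        have h2 : r ^ (1 - p) * r ^ p = r := by
          rw [← Real.rpow_add hrpos, show (1:ℝ) - p + p = 1 from by ring, Real.rpow_one]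
        have ep : (‖f‖ + ‖g‖) ^ p = (1 + r) ^ p * ‖f‖ ^ p := by
          rw [hgr, show ‖f‖ + r * ‖f‖ = (1 + r) * ‖f‖ from by ring,
            Real.mul_rpow (by linarith) (norm_nonneg f)]
        have em : |‖f‖ - ‖g‖| ^ p = (1 - r) ^ p * ‖f‖ ^ p := by
          rw [hgr, show ‖f‖ - r * ‖f‖ = (1 - r) * ‖f‖ from by ring,
            abs_of_nonneg (by nlinarith [norm_nonneg f] : (0:ℝ) ≤ (1 - r) * ‖f‖),
            Real.mul_rpow (by linarith) (norm_nonneg f)]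
        have s1 : (1 + r) ^ p = (1 + r) ^ (p - 1) * (1 + r) := by
          rw [show p = p - 1 + 1 from by ring, Real.rpow_add_one (by positivity : (1:ℝ) + r ≠ 0)]
          ring_nf
        have s2 : (1 - r) ^ p = (1 - r) ^ (p - 1) * (1 - r) := by
          have h := rpow_succ (x := 1 - r) (y := p - 1) (by linarith)
            (show p - 1 + 1 ≠ 0 by intro h; linarith)
          rw [show p - 1 + 1 = p from by ring] at h
          exact h
        rw [h1, ep, em, s1, s2]
        linear_combination (‖f‖ ^ p * ((1 + r) ^ (p - 1) - (1 - r) ^ (p - 1))) * h2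
    linarith [key, eq1.symm.trans_le key]

/-- Hanner's inequality in L^p for 1 < p ≤ 2. -/
lemma hanner (hp1 : 1 < p) (hp2 : p ≤ 2) (f g : Lp ℝ (ENNReal.ofReal p) μ) :
    (‖f‖ + ‖g‖) ^ p + |‖f‖ - ‖g‖| ^ p ≤ ‖f + g‖ ^ p + ‖f - g‖ ^ p := by
  haveI : Fact (1 ≤ ENNReal.ofReal p) := ⟨ENNReal.one_le_ofReal.2 hp1.le⟩
  rcases le_total ‖g‖ ‖f‖ with h | h
  · exact hanner_aux hp1 hp2 f g h
  · have hs := hanner_aux hp1 hp2 g f h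
    rw [add_comm g f, show g - f = -(f - g) from by abel, norm_neg,
      add_comm ‖g‖ ‖f‖, abs_sub_comm ‖g‖ ‖f‖] at hs
    exact hs

end LpSide

end HannerAux

open HannerAux in
theorem uniform_convexity_le_two {X : Type*} [MeasurableSpace X] (μ : Measure X)
    (p : ℝ) (hp1 : 1 < p) (hp2 : p ≤ 2) (ε : ℝ) (hε0 : 0 < ε) (hε2 : ε ≤ 2)
    (δ : ℝ) (hδ : δ ∈ Set.Icc (0 : ℝ) 1)
    (hδeq : (1 - δ + ε / 2) ^ p + |1 - δ - ε / 2| ^ p = 2)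
    (φ ψ : Lp ℝ (ENNReal.ofReal p) μ)
    (hφ : ‖φ‖ = 1) (hψ : ‖ψ‖ = 1) (hd : ε ≤ ‖φ - ψ‖) :
    ‖(2 : ℝ)⁻¹ • (φ + ψ)‖ ≤ 1 - δ := by
  haveI : Fact (1 ≤ ENNReal.ofReal p) := ⟨ENNReal.one_le_ofReal.2 hp1.le⟩
  obtain ⟨hδ0, hδ1⟩ := hδ
  have hp0 : (0:ℝ) < p := by linarith
  set f := (2:ℝ)⁻¹ • (φ + ψ) with hf
  set g := (2:ℝ)⁻¹ • (φ - ψ) with hg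
  have hfg1 : f + g = φ := by rw [hf, hg]; module
  have hfg2 : f - g = ψ := by rw [hf, hg]; module
  have hH := hanner hp1 hp2 f g
  rw [hfg1, hfg2, hφ, hψ, Real.one_rpow] at hH
  have hb : ε / 2 ≤ ‖g‖ := by
    rw [hg, norm_smul, Real.norm_eq_abs,
      abs_of_nonneg (by norm_num : (0:ℝ) ≤ (2:ℝ)⁻¹)]
    linarith
  have hmono := pair_mono hp1 (norm_nonneg f) (by linarith : (0:ℝ) ≤ ε / 2) hb
  by_contra hcon
  push_neg at hcon
  have hstrict := pair_strict hp1 (by linarith : (0:ℝ) < ε / 2)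
    (by linarith : (0:ℝ) ≤ 1 - δ) hcon
  rw [hδeq] at hstrict
  linarith
end

section
/- For p ≥ 2 and ε ∈ (0, 2], the number δ = 1 - (1 - (ε/2)^p)^(1/p) satisfies (1 - δ + ε/2)^p + |1 - δ - ε/2|^p ≥ 2; i.e., the Clarkson modulus is no larger than the Hanner modulus when p ≥ 2. -/
private lemma realA {q a b : ℝ} (hq : 1 ≤ q) (ha : 0 ≤ a) (hb : 0 ≤ b) :
    a ^ q + b ^ q ≤ (a + b) ^ q := by
  lift a to NNReal using ha
  lift b to NNReal using hb
  exact_mod_cast NNReal.add_rpow_le_rpow_add a b hq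

private lemma realB {q a b : ℝ} (hq : 1 ≤ q) (ha : 0 ≤ a) (hb : 0 ≤ b) :
    (a + b) ^ q ≤ 2 ^ (q - 1) * (a ^ q + b ^ q) := by
  lift a to NNReal using ha
  lift b to NNReal using hb
  exact_mod_cast NNReal.rpow_add_le_mul_rpow_add_rpow a b hq

private lemma key {p x y : ℝ} (hp : 2 ≤ p) (hx : 0 ≤ x) (hy : 0 ≤ y) :
    2 * (x ^ p + y ^ p) ≤ (x + y) ^ p + |x - y| ^ p := by
  have hq : 1 ≤ p / 2 := by linarith
  have hsq : ∀ z : ℝ, 0 ≤ z → (z ^ (2:ℕ) : ℝ) ^ (p / 2) = z ^ p := by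
    intro z hz
    rw [← Real.rpow_natCast z 2, ← Real.rpow_mul hz]
    norm_num
    rw [show (2:ℝ) * (p/2) = p by ring]
  have h1 : x ^ p + y ^ p ≤ (x ^ 2 + y ^ 2) ^ (p / 2) := by
    calc x ^ p + y ^ p = (x ^ (2:ℕ)) ^ (p/2) + (y ^ (2:ℕ)) ^ (p/2) := by
          rw [hsq x hx, hsq y hy]
      _ ≤ (x ^ 2 + y ^ 2) ^ (p/2) := realA hq (by positivity) (by positivity)
  have h2 : ((x + y) ^ 2 + (x - y) ^ 2) ^ (p/2)
      ≤ 2 ^ (p/2 - 1) * ((x + y) ^ p + |x - y| ^ p) := by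
    have := realB hq (a := (x+y)^2) (b := (x-y)^2) (by positivity) (by positivity)
    rwa [hsq (x+y) (by linarith), ← sq_abs (x - y), hsq |x - y| (abs_nonneg _), sq_abs (x - y)] at this
  have hxy : x ^ 2 + y ^ 2 = ((x + y) ^ 2 + (x - y) ^ 2) / 2 := by ring
  have h3 : (x ^ 2 + y ^ 2) ^ (p/2)
      = ((x + y) ^ 2 + (x - y) ^ 2) ^ (p/2) / 2 ^ (p/2) := by
    rw [hxy, Real.div_rpow (by positivity) (by norm_num)]
  have h4 : (2:ℝ) ^ (p/2 - 1) / 2 ^ (p/2) = 1 / 2 := by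
    rw [← Real.rpow_sub (by norm_num)]
    norm_num
  have h2pos : (0:ℝ) < 2 ^ (p/2) := by positivity
  have h5 : (x ^ 2 + y ^ 2) ^ (p/2) ≤ ((x + y) ^ p + |x - y| ^ p) / 2 := by
    rw [h3]
    rw [div_le_div_iff₀ h2pos (by norm_num)]
    calc ((x + y) ^ 2 + (x - y) ^ 2) ^ (p/2) * 2
        ≤ 2 ^ (p/2 - 1) * ((x + y) ^ p + |x - y| ^ p) * 2 := by nlinarith [h2]
      _ = ((x + y) ^ p + |x - y| ^ p) * 2 ^ (p/2) := by
          rw [show (2:ℝ) ^ (p/2) = 2 ^ (p/2 - 1) * 2 by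
            rw [← Real.rpow_add_one (by norm_num)]; ring_nf]
          ring
  linarith [h1]

theorem clarkson_modulus_le_hanner_modulus (p : ℝ) (hp : 2 ≤ p)
    (ε : ℝ) (hε0 : 0 < ε) (hε2 : ε ≤ 2)
    (δ : ℝ) (hδ : δ = 1 - (1 - (ε / 2) ^ p) ^ (1 / p)) :
    2 ≤ (1 - δ + ε / 2) ^ p + |1 - δ - ε / 2| ^ p := by
  set e := ε / 2 with he_def
  have he0 : 0 < e := by positivity
  have he1 : e ≤ 1 := by simp [he_def]; linarith
  have hep : e ^ p ≤ 1 := Real.rpow_le_one he0.le he1 (by linarith)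
  set a := (1 - e ^ p) ^ (1 / p) with ha_def
  have ha0 : 0 ≤ a := Real.rpow_nonneg (by linarith) _
  have hap : a ^ p = 1 - e ^ p := by
    rw [ha_def, one_div]
    exact Real.rpow_inv_rpow (by linarith) (by positivity)
  have h1δ : 1 - δ = a := by rw [hδ]; ring
  rw [h1δ]
  have hkey := key hp ha0 he0.le
  rw [hap] at hkey
  linarith
end

section
/- Let p ∈ (1, ∞) and Ω₃ = {x ∈ ℝ³ : x₁, x₂, x₃ ≥ 0 and (x₁^(1/p), x₂^(1/p), x₃^(1/p)) satisfies the triangle inequality}. Then Ω₃ is a convex cone: it is closed under nonnegative scalar multiplication and under addition. -/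
/-- The natural domain of the Bellman function `B₃`. -/
def Omega3 (p : ℝ) : Set (ℝ × ℝ × ℝ) :=
  {x | 0 ≤ x.1 ∧ 0 ≤ x.2.1 ∧ 0 ≤ x.2.2 ∧
    x.1 ^ (1 / p) ≤ x.2.1 ^ (1 / p) + x.2.2 ^ (1 / p) ∧
    x.2.1 ^ (1 / p) ≤ x.1 ^ (1 / p) + x.2.2 ^ (1 / p) ∧
    x.2.2 ^ (1 / p) ≤ x.1 ^ (1 / p) + x.2.1 ^ (1 / p)}

private lemma omega3_key {p : ℝ} (hp : 1 < p) {x1 x2 x3 y1 y2 y3 : ℝ}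
    (hx1 : 0 ≤ x1) (hx2 : 0 ≤ x2) (hx3 : 0 ≤ x3)
    (hy1 : 0 ≤ y1) (hy2 : 0 ≤ y2) (hy3 : 0 ≤ y3)
    (hx : x1 ^ (1 / p) ≤ x2 ^ (1 / p) + x3 ^ (1 / p))
    (hy : y1 ^ (1 / p) ≤ y2 ^ (1 / p) + y3 ^ (1 / p)) :
    (x1 + y1) ^ (1 / p) ≤ (x2 + y2) ^ (1 / p) + (x3 + y3) ^ (1 / p) := by
  have hp0 : (0 : ℝ) < p := lt_trans one_pos hp
  have hr : (1 / p) * p = 1 := by field_simp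
  have pow_p : ∀ z : ℝ, 0 ≤ z → (z ^ (1 / p)) ^ p = z := fun z hz => by
    rw [← Real.rpow_mul hz, hr, Real.rpow_one]
  have key : ∀ a b c : ℝ, 0 ≤ a → 0 ≤ b → 0 ≤ c →
      a ^ (1 / p) ≤ b ^ (1 / p) + c ^ (1 / p) →
      a ≤ (b ^ (1 / p) + c ^ (1 / p)) ^ p := by
    intro a b c ha hb hc h
    calc a = (a ^ (1 / p)) ^ p := (pow_p a ha).symm
    _ ≤ (b ^ (1 / p) + c ^ (1 / p)) ^ p :=
        Real.rpow_le_rpow (Real.rpow_nonneg ha _) h hp0.le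
  have h1 : x1 + y1 ≤ (x2 ^ (1/p) + x3 ^ (1/p)) ^ p + (y2 ^ (1/p) + y3 ^ (1/p)) ^ p :=
    add_le_add (key _ _ _ hx1 hx2 hx3 hx) (key _ _ _ hy1 hy2 hy3 hy)
  have h2 : ((x2 ^ (1/p) + x3 ^ (1/p)) ^ p + (y2 ^ (1/p) + y3 ^ (1/p)) ^ p) ^ (1/p)
      ≤ (x2 + y2) ^ (1/p) + (x3 + y3) ^ (1/p) := by
    have hmink := Real.Lp_add_le (Finset.univ : Finset (Fin 2))
      ![x2 ^ (1/p), y2 ^ (1/p)] ![x3 ^ (1/p), y3 ^ (1/p)] hp.le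
    simp only [Fin.sum_univ_two, Matrix.cons_val_zero, Matrix.cons_val_one,
      Matrix.head_cons] at hmink
    rw [abs_of_nonneg (by positivity), abs_of_nonneg (by positivity),
      abs_of_nonneg (by positivity), abs_of_nonneg (by positivity),
      abs_of_nonneg (by positivity), abs_of_nonneg (by positivity)] at hmink
    rw [pow_p x2 hx2, pow_p x3 hx3, pow_p y2 hy2, pow_p y3 hy3] at hmink
    exact hmink
  calc (x1 + y1) ^ (1/p)
      ≤ ((x2 ^ (1/p) + x3 ^ (1/p)) ^ p + (y2 ^ (1/p) + y3 ^ (1/p)) ^ p) ^ (1/p) :=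
        Real.rpow_le_rpow (by positivity) h1 (by positivity)
    _ ≤ _ := h2

theorem Omega3_convex_cone (p : ℝ) (hp1 : 1 < p) :
    (∀ x ∈ Omega3 p, ∀ k : ℝ, 0 ≤ k → k • x ∈ Omega3 p) ∧
    (∀ x ∈ Omega3 p, ∀ y ∈ Omega3 p, x + y ∈ Omega3 p) := by
  constructor
  · rintro ⟨x1, x2, x3⟩ ⟨h1, h2, h3, h4, h5, h6⟩ k hk
    simp only [Omega3, Set.mem_setOf_eq, Prod.smul_fst, Prod.smul_snd, smul_eq_mul]
    have hm : ∀ z : ℝ, 0 ≤ z → (k * z) ^ (1/p) = k ^ (1/p) * z ^ (1/p) := fun z hz =>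
      Real.mul_rpow hk hz
    refine ⟨mul_nonneg hk h1, mul_nonneg hk h2, mul_nonneg hk h3, ?_, ?_, ?_⟩ <;>
      rw [hm _ h1, hm _ h2, hm _ h3, ← mul_add] <;>
      exact mul_le_mul_of_nonneg_left (by assumption) (Real.rpow_nonneg hk _)
  · rintro ⟨x1, x2, x3⟩ ⟨h1, h2, h3, h4, h5, h6⟩ ⟨y1, y2, y3⟩ ⟨g1, g2, g3, g4, g5, g6⟩
    exact ⟨add_nonneg h1 g1, add_nonneg h2 g2, add_nonneg h3 g3,
      omega3_key hp1 h1 h2 h3 g1 g2 g3 h4 g4,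
      omega3_key hp1 h2 h1 h3 g2 g1 g3 h5 g5,
      omega3_key hp1 h3 h1 h2 g3 g1 g2 h6 g6⟩
end

section
/- Let p ∈ (1, ∞). For x = (x₁, x₂, x₃) ∈ ℝ³, the set T(x) = {(φ, ψ) ∈ L^p([0,1])² : ‖φ‖^p = x₁, ‖ψ‖^p = x₂, ‖φ-ψ‖^p = x₃} is nonempty if and only if x₁, x₂, x₃ ≥ 0 and the triple (x₁^(1/p), x₂^(1/p), x₃^(1/p)) satisfies the triangle inequality. -/
open MeasureTheory
open scoped ENNReal NNReal

noncomputable def pcw (t s₁ s₂ : ℝ) : Set.Icc (0:ℝ) 1 → ℝ := fun ω => if (ω:ℝ) ≤ t then s₁ else s₂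

lemma pcw_memℒp (p : ℝ) (t s₁ s₂ : ℝ) :
    MemLp (pcw t s₁ s₂) (ENNReal.ofReal p) (volume : Measure (Set.Icc (0:ℝ) 1)) := by
  apply MemLp.of_bound ((Measurable.ite (measurableSet_le (by measurability) measurable_const)
    measurable_const measurable_const).aestronglyMeasurable) (max |s₁| |s₂|)
  filter_upwards with ω
  show ‖if (ω:ℝ) ≤ t then s₁ else s₂‖ ≤ _
  rw [Real.norm_eq_abs]
  split
  · exact le_max_left _ _
  · exact le_max_right _ _

lemma measurable_setS (t : ℝ) : MeasurableSet {ω : Set.Icc (0:ℝ) 1 | (ω:ℝ) ≤ t} :=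
  measurableSet_le (by measurability) measurable_const

lemma volS (t : ℝ) (ht0 : 0 ≤ t) (ht1 : t ≤ 1) :
    volume {ω : Set.Icc (0:ℝ) 1 | (ω:ℝ) ≤ t} = ENNReal.ofReal t := by
  have : {ω : Set.Icc (0:ℝ) 1 | (ω:ℝ) ≤ t} = (Subtype.val) ⁻¹' (Set.Iic t) := rfl
  rw [this, volume_preimage_coe measurableSet_Icc.nullMeasurableSet measurableSet_Iic]
  have : Set.Iic t ∩ Set.Icc 0 1 = Set.Icc 0 t := by
    ext x; simp only [Set.mem_inter_iff, Set.mem_Iic, Set.mem_Icc]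
    constructor
    · rintro ⟨h1, h2, _⟩; exact ⟨h2, h1⟩
    · rintro ⟨h1, h2⟩; exact ⟨h2, h1, h2.trans ht1⟩
  rw [this, Real.volume_Icc, sub_zero]

lemma volSc (t : ℝ) (ht0 : 0 ≤ t) (ht1 : t ≤ 1) :
    volume {ω : Set.Icc (0:ℝ) 1 | (ω:ℝ) ≤ t}ᶜ = ENNReal.ofReal (1 - t) := by
  have : {ω : Set.Icc (0:ℝ) 1 | (ω:ℝ) ≤ t}ᶜ = (Subtype.val) ⁻¹' (Set.Ioi t) := by
    ext ω; simp [Set.mem_compl_iff, not_le]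
  rw [this, volume_preimage_coe measurableSet_Icc.nullMeasurableSet measurableSet_Ioi]
  have : Set.Ioi t ∩ Set.Icc 0 1 = Set.Ioc t 1 := by
    ext x; simp only [Set.mem_inter_iff, Set.mem_Ioi, Set.mem_Icc, Set.mem_Ioc]
    constructor
    · rintro ⟨h1, _, h3⟩; exact ⟨h1, h3⟩
    · rintro ⟨h1, h2⟩; exact ⟨h1, ht0.trans h1.le, h2⟩
  rw [this, Real.volume_Ioc]

lemma pcw_norm (p : ℝ) (hp : 0 < p) (t s₁ s₂ : ℝ) (ht0 : 0 ≤ t) (ht1 : t ≤ 1) :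
    ‖(pcw_memℒp p t s₁ s₂).toLp (pcw t s₁ s₂)‖ ^ p = t * |s₁| ^ p + (1-t) * |s₂| ^ p := by
  have hP0 : (ENNReal.ofReal p) ≠ 0 := by simp [ENNReal.ofReal_pos, hp, ne_of_gt]
  have hPt : (ENNReal.ofReal p) ≠ ⊤ := ENNReal.ofReal_ne_top
  rw [Lp.norm_toLp, eLpNorm_eq_lintegral_rpow_enorm_toReal hP0 hPt]
  rw [ENNReal.toReal_ofReal hp.le]
  set S := {ω : Set.Icc (0:ℝ) 1 | (ω:ℝ) ≤ t} with hS
  have hSm := measurable_setS t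
  have hint : ∫⁻ ω, (‖pcw t s₁ s₂ ω‖₊ : ℝ≥0∞) ^ p = ENNReal.ofReal t * (‖s₁‖₊ : ℝ≥0∞) ^ p + ENNReal.ofReal (1-t) * (‖s₂‖₊ : ℝ≥0∞) ^ p := by
    rw [← lintegral_add_compl _ hSm]
    have h1 : ∫⁻ ω in S, (‖pcw t s₁ s₂ ω‖₊ : ℝ≥0∞) ^ p = ENNReal.ofReal t * (‖s₁‖₊ : ℝ≥0∞) ^ p := by
      rw [setLIntegral_congr_fun hSm ((fun ω hω => by
        show (‖pcw t s₁ s₂ ω‖₊ : ℝ≥0∞) ^ p = (‖s₁‖₊ : ℝ≥0∞) ^ p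
        rw [show pcw t s₁ s₂ ω = s₁ from if_pos (show (ω:ℝ) ≤ t from hω)])), setLIntegral_const, volS t ht0 ht1, mul_comm]
    have h2 : ∫⁻ ω in Sᶜ, (‖pcw t s₁ s₂ ω‖₊ : ℝ≥0∞) ^ p = ENNReal.ofReal (1-t) * (‖s₂‖₊ : ℝ≥0∞) ^ p := by
      rw [setLIntegral_congr_fun hSm.compl ((fun ω hω => by
        show (‖pcw t s₁ s₂ ω‖₊ : ℝ≥0∞) ^ p = (‖s₂‖₊ : ℝ≥0∞) ^ p
        have h : ¬ ((ω:ℝ) ≤ t) := by simpa using hω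
        rw [show pcw t s₁ s₂ ω = s₂ from if_neg h])), setLIntegral_const, volSc t ht0 ht1, mul_comm]
    rw [h1, h2]
  simp only [enorm_eq_nnnorm]; rw [hint]
  set X : ℝ≥0∞ := ENNReal.ofReal t * (‖s₁‖₊ : ℝ≥0∞) ^ p + ENNReal.ofReal (1-t) * (‖s₂‖₊ : ℝ≥0∞) ^ p with hX
  have hXtop : X ≠ ⊤ := by
    apply ENNReal.add_ne_top.2
    constructor <;> exact ENNReal.mul_ne_top ENNReal.ofReal_ne_top (by
      exact ENNReal.rpow_ne_top_of_nonneg hp.le ENNReal.coe_ne_top)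
  rw [ENNReal.toReal_rpow, ← ENNReal.rpow_mul, one_div_mul_cancel hp.ne', ENNReal.rpow_one]
  rw [ENNReal.toReal_add (ENNReal.mul_ne_top ENNReal.ofReal_ne_top (ENNReal.rpow_ne_top_of_nonneg hp.le ENNReal.coe_ne_top)) (ENNReal.mul_ne_top ENNReal.ofReal_ne_top (ENNReal.rpow_ne_top_of_nonneg hp.le ENNReal.coe_ne_top)),
    ENNReal.toReal_mul, ENNReal.toReal_mul, ENNReal.toReal_ofReal ht0,
    ENNReal.toReal_ofReal (by linarith), ← ENNReal.toReal_rpow, ← ENNReal.toReal_rpow]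
  simp [Real.norm_eq_abs]

theorem T_nonempty_iff (p : ℝ) (hp1 : 1 < p) (x₁ x₂ x₃ : ℝ) :
    (∃ φ ψ : Lp ℝ (ENNReal.ofReal p) (volume : Measure (Set.Icc (0 : ℝ) 1)),
        ‖φ‖ ^ p = x₁ ∧ ‖ψ‖ ^ p = x₂ ∧ ‖φ - ψ‖ ^ p = x₃) ↔
      (0 ≤ x₁ ∧ 0 ≤ x₂ ∧ 0 ≤ x₃ ∧
        x₁ ^ (1 / p) ≤ x₂ ^ (1 / p) + x₃ ^ (1 / p) ∧
        x₂ ^ (1 / p) ≤ x₁ ^ (1 / p) + x₃ ^ (1 / p) ∧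
        x₃ ^ (1 / p) ≤ x₁ ^ (1 / p) + x₂ ^ (1 / p)) := by
  have hp : (0:ℝ) < p := lt_trans one_pos hp1
  haveI : Fact (1 ≤ ENNReal.ofReal p) := ⟨by
    rw [← ENNReal.ofReal_one]; exact ENNReal.ofReal_le_ofReal hp1.le⟩
  constructor
  · rintro ⟨φ, ψ, h1, h2, h3⟩
    have key : ∀ (f : Lp ℝ (ENNReal.ofReal p) (volume : Measure (Set.Icc (0 : ℝ) 1))),
        (‖f‖ ^ p) ^ (1/p) = ‖f‖ := fun f => by
      rw [← Real.rpow_mul (norm_nonneg f), mul_one_div_cancel hp.ne', Real.rpow_one]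
    subst h1 h2 h3
    refine ⟨Real.rpow_nonneg (norm_nonneg _) _, Real.rpow_nonneg (norm_nonneg _) _,
      Real.rpow_nonneg (norm_nonneg _) _, ?_, ?_, ?_⟩ <;> rw [key, key, key]
    · calc ‖φ‖ = ‖ψ + (φ - ψ)‖ := by rw [add_sub_cancel]
        _ ≤ ‖ψ‖ + ‖φ - ψ‖ := norm_add_le _ _
    · calc ‖ψ‖ = ‖φ - (φ - ψ)‖ := by rw [sub_sub_cancel]
        _ ≤ ‖φ‖ + ‖φ - ψ‖ := norm_sub_le _ _
    · exact norm_sub_le _ _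
  · rintro ⟨h1, h2, h3, h4, h5, h6⟩
    set a := x₁ ^ (1/p) with ha
    set b := x₂ ^ (1/p) with hb
    set c := x₃ ^ (1/p) with hc
    have ha0 : 0 ≤ a := Real.rpow_nonneg h1 _
    have hb0 : 0 ≤ b := Real.rpow_nonneg h2 _
    have hc0 : 0 ≤ c := Real.rpow_nonneg h3 _
    have hback : ∀ x : ℝ, 0 ≤ x → (x ^ (1/p)) ^ p = x := fun x hx => by
      rw [← Real.rpow_mul hx, one_div_mul_cancel hp.ne', Real.rpow_one]
    have hxa : a ^ p = x₁ := hback _ h1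
    have hxb : b ^ p = x₂ := hback _ h2
    have hxc : c ^ p = x₃ := hback _ h3
    set A := (a + b) ^ p with hA
    set B := |a - b| ^ p with hB
    have habs : |a - b| ≤ c := abs_sub_le_iff.2 ⟨by linarith, by linarith⟩
    have hcab : c ≤ a + b := h6
    have habsle : |a - b| ≤ a + b := (abs_sub_le_iff).2 ⟨by linarith, by linarith⟩
    have hBA : B ≤ A := Real.rpow_le_rpow (abs_nonneg _) habsle hp.le
    have hBc : B ≤ c ^ p := Real.rpow_le_rpow (abs_nonneg _) habs hp.le
    have hcA : c ^ p ≤ A := Real.rpow_le_rpow hc0 hcab hp.le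
    set t : ℝ := if A = B then 0 else (c ^ p - B) / (A - B) with htdef
    have ht0 : 0 ≤ t := by
      rw [htdef]; split
      · exact le_refl 0
      · next h => exact div_nonneg (by linarith) (by cases lt_or_eq_of_le hBA with
          | inl h' => linarith
          | inr h' => exact absurd h'.symm h)
    have ht1 : t ≤ 1 := by
      rw [htdef]; split
      · exact zero_le_one
      · next h =>
        have hABpos : 0 < A - B := by cases lt_or_eq_of_le hBA with
          | inl h' => linarith
          | inr h' => exact absurd h'.symm h
        rw [div_le_one hABpos]; linarith
    have hkey : t * A + (1 - t) * B = c ^ p := by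
      have : t * (A - B) + B = c ^ p := by
        rw [htdef]; split
        · next h =>
          have hc' : c = a + b := le_antisymm hcab (by
            have : a + b = |a - b| := by
              by_contra hne
              have : |a - b| < a + b := lt_of_le_of_ne habsle (fun h' => hne h'.symm)
              have : B < A := Real.rpow_lt_rpow (abs_nonneg _) this hp
              exact absurd h (by linarith : A ≠ B)
            calc a + b = |a - b| := this
            _ ≤ c := habs)
          rw [hc', ← hA, h]; ring
        · next h =>
          have hABpos : 0 < A - B := by cases lt_or_eq_of_le hBA with
            | inl h' => linarith
            | inr h' => exact absurd h'.symm h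
          rw [div_mul_cancel₀ _ hABpos.ne']; ring
      linarith [this]
    refine ⟨(pcw_memℒp p t a a).toLp _, (pcw_memℒp p t (-b) b).toLp _, ?_, ?_, ?_⟩
    · rw [pcw_norm p hp t a a ht0 ht1, abs_of_nonneg ha0, ← hxa]; ring
    · rw [pcw_norm p hp t (-b) b ht0 ht1, abs_neg, abs_of_nonneg hb0, ← hxb]; ring
    · have hfun : pcw t a a - pcw t (-b) b = pcw t (a + b) (a - b) := by
        funext ω
        simp only [Pi.sub_apply, pcw]
        split <;> ring
      have hdiff : (pcw_memℒp p t a a).toLp _ - (pcw_memℒp p t (-b) b).toLp _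
          = (pcw_memℒp p t (a+b) (a-b)).toLp _ := by
        rw [← MemLp.toLp_sub]
        exact MemLp.toLp_congr _ _ (Filter.EventuallyEq.of_eq hfun)
      rw [hdiff, pcw_norm p hp t (a+b) (a-b) ht0 ht1, abs_of_nonneg (by linarith : 0 ≤ a + b),
        ← hA, ← hB, hkey, hxc]
end

section
/- Let p ∈ (1, ∞) and define B₃(x) = sup{‖φ+ψ‖^p : (φ,ψ) ∈ T(x)} on Ω₃, where T(x) = {(φ,ψ) ∈ L^p([0,1])² : ‖φ‖^p = x₁, ‖ψ‖^p = x₂, ‖φ-ψ‖^p = x₃}. Then B₃ is concave on Ω₃. -/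
open MeasureTheory

/-- The Bellman function `B₃`. -/
noncomputable def bellman3 (p : ℝ) (x : ℝ × ℝ × ℝ) : ℝ :=
  sSup {y : ℝ | ∃ φ ψ : Lp ℝ (ENNReal.ofReal p) (volume : Measure (Set.Icc (0 : ℝ) 1)),
    ‖φ‖ ^ p = x.1 ∧ ‖ψ‖ ^ p = x.2.1 ∧ ‖φ - ψ‖ ^ p = x.2.2 ∧ y = ‖φ + ψ‖ ^ p}

namespace BellmanAux

open Set

noncomputable abbrev proj : ℝ → ↥(Set.Icc (0:ℝ) 1) := Set.projIcc 0 1 zero_le_one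

noncomputable abbrev vol : Measure ↥(Set.Icc (0:ℝ) 1) := volume

lemma hval : MeasurableEmbedding ((↑) : ↥(Set.Icc (0:ℝ) 1) → ℝ) :=
  MeasurableEmbedding.subtype_coe measurableSet_Icc

lemma vol_def : vol = Measure.comap Subtype.val volume := rfl

lemma map_val : Measure.map Subtype.val vol = volume.restrict (Set.Icc (0:ℝ) 1) := by
  rw [vol_def]; exact map_comap_subtype_coe measurableSet_Icc volume

lemma integral_I01 (F : ℝ → ℝ) : ∫ t, F ↑t ∂vol = ∫ x in Set.Icc (0:ℝ) 1, F x := by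
  rw [← map_val, hval.integral_map]

lemma null_scale {c d : ℝ} (hc : c ≠ 0) {S : Set ℝ} (hS : volume S = 0) :
    volume ((fun x => (x - d) / c) ⁻¹' S) = 0 := by
  have h1 : (fun x : ℝ => (x - d) / c) ⁻¹' S
      = (fun x : ℝ => -d + x) ⁻¹' ((fun y : ℝ => c⁻¹ * y) ⁻¹' S) := by
    ext x
    simp only [Set.mem_preimage]
    rw [div_eq_inv_mul, sub_eq_neg_add]
  rw [h1, measure_preimage_add, Real.volume_preimage_mul_left (inv_ne_zero hc), hS, mul_zero]

lemma glue_null₁ {a : ℝ} (ha : 0 < a) {N : Set ↥(Set.Icc (0:ℝ) 1)} (hN : vol N = 0) :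
    vol {t : ↥(Set.Icc (0:ℝ) 1) | (t:ℝ) < a ∧ proj ((t:ℝ)/a) ∈ N} = 0 := by
  have h0' : volume (Subtype.val '' N) = 0 := by
    rwa [vol_def, hval.comap_apply] at hN
  rw [vol_def, hval.comap_apply]
  refine measure_mono_null ?_ (null_scale (c := a) (d := 0) ha.ne' h0')
  rintro x ⟨t, ⟨ht1, ht2⟩, rfl⟩
  have hmem : ((t:ℝ))/a ∈ Set.Icc (0:ℝ) 1 :=
    ⟨div_nonneg t.2.1 ha.le, by rw [div_le_one ha]; exact ht1.le⟩
  simp only [Set.mem_preimage, sub_zero]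
  refine ⟨proj ((t:ℝ)/a), ht2, ?_⟩
  rw [show proj ((t:ℝ)/a) = ⟨(t:ℝ)/a, hmem⟩ from Set.projIcc_of_mem zero_le_one hmem]

lemma glue_null₂ {a : ℝ} (ha1 : a < 1) {N : Set ↥(Set.Icc (0:ℝ) 1)} (hN : vol N = 0) :
    vol {t : ↥(Set.Icc (0:ℝ) 1) | ¬ ((t:ℝ) < a) ∧ proj (((t:ℝ) - a)/(1 - a)) ∈ N} = 0 := by
  have h0' : volume (Subtype.val '' N) = 0 := by
    rwa [vol_def, hval.comap_apply] at hN
  rw [vol_def, hval.comap_apply]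
  have h1a : (0:ℝ) < 1 - a := by linarith
  refine measure_mono_null ?_ (null_scale (c := 1 - a) (d := a) h1a.ne' h0')
  rintro x ⟨t, ⟨ht1, ht2⟩, rfl⟩
  have hmem : ((t:ℝ) - a)/(1 - a) ∈ Set.Icc (0:ℝ) 1 := by
    constructor
    · exact div_nonneg (by linarith [not_lt.mp ht1]) h1a.le
    · rw [div_le_one h1a]; have := t.2.2; linarith
  simp only [Set.mem_preimage]
  refine ⟨proj (((t:ℝ) - a)/(1 - a)), ht2, ?_⟩
  rw [show proj (((t:ℝ) - a)/(1 - a)) = ⟨((t:ℝ) - a)/(1 - a), hmem⟩ from Set.projIcc_of_mem zero_le_one hmem]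

noncomputable def glue (a : ℝ) (f g : ↥(Set.Icc (0:ℝ) 1) → ℝ) : ↥(Set.Icc (0:ℝ) 1) → ℝ :=
  fun t => if (t:ℝ) < a then f (proj ((t:ℝ) / a)) else g (proj (((t:ℝ) - a) / (1 - a)))

lemma glue_ae {a : ℝ} (ha : 0 < a) (ha1 : a < 1) {f₁ f₂ g₁ g₂ : ↥(Set.Icc (0:ℝ) 1) → ℝ}
    (hf : f₁ =ᵐ[vol] f₂) (hg : g₁ =ᵐ[vol] g₂) : glue a f₁ g₁ =ᵐ[vol] glue a f₂ g₂ := by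
  have hNf : vol {s | ¬ f₁ s = f₂ s} = 0 := ae_iff.mp hf
  have hNg : vol {s | ¬ g₁ s = g₂ s} = 0 := ae_iff.mp hg
  rw [Filter.EventuallyEq, ae_iff]
  refine measure_mono_null (fun t ht => ?_)
    (measure_union_null (glue_null₁ ha hNf) (glue_null₂ ha1 hNg))
  simp only [Set.mem_setOf_eq, Set.mem_union] at ht ⊢
  by_cases h : (t:ℝ) < a
  · left; refine ⟨h, ?_⟩; simp only [glue, if_pos h] at ht; exact ht
  · right; refine ⟨h, ?_⟩; simp only [glue, if_neg h] at ht; exact ht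

lemma glue_measurable {a : ℝ} {f g : ↥(Set.Icc (0:ℝ) 1) → ℝ}
    (hf : Measurable f) (hg : Measurable g) : Measurable (glue a f g) := by
  have hproj : Measurable proj := continuous_projIcc.measurable
  unfold glue
  refine Measurable.ite ?_ ?_ ?_
  · exact measurableSet_lt (measurable_subtype_coe) measurable_const
  · exact (hf.comp hproj).comp (measurable_subtype_coe.div_const a)
  · exact (hg.comp hproj).comp ((measurable_subtype_coe.sub_const a).div_const (1-a))

lemma ae_ne (c : ℝ) : ∀ᵐ x : ℝ ∂volume, x ≠ c := by
  rw [ae_iff]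
  simp only [not_not, Set.setOf_eq_eq_singleton]
  exact Real.volume_singleton

lemma glue_integrable_integral {a : ℝ} (ha : 0 < a) (ha1 : a < 1)
    {f g : ↥(Set.Icc (0:ℝ) 1) → ℝ}
    (hf : Integrable f vol) (hg : Integrable g vol) :
    Integrable (glue a f g) vol ∧
      ∫ t, glue a f g t ∂vol = a * ∫ t, f t ∂vol + (1 - a) * ∫ t, g t ∂vol := by
  have h1a : (0:ℝ) < 1 - a := by linarith
  have transfer : ∀ (h : ↥(Set.Icc (0:ℝ) 1) → ℝ), Integrable h vol →
      IntervalIntegrable (h ∘ proj) volume 0 1 ∧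
        ∫ x in (0:ℝ)..1, (h ∘ proj) x = ∫ t, h t ∂vol := by
    intro h hh
    have hcomp : (h ∘ proj) ∘ (Subtype.val : ↥(Set.Icc (0:ℝ) 1) → ℝ) = h := by
      funext t; simp [Function.comp, Set.projIcc_val]
    have hI : IntegrableOn (h ∘ proj) (Set.Icc (0:ℝ) 1) volume := by
      rw [IntegrableOn, ← map_val, hval.integrable_map_iff, hcomp]; exact hh
    constructor
    · exact ⟨hI.mono_set Set.Ioc_subset_Icc_self, by
        rw [Set.Ioc_eq_empty (by norm_num)]; exact integrableOn_empty⟩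
    · rw [intervalIntegral.integral_of_le zero_le_one, ← integral_Icc_eq_integral_Ioc,
        ← integral_I01 (h ∘ proj)]
      refine integral_congr_ae (Filter.Eventually.of_forall fun t => ?_)
      simp [Function.comp, Set.projIcc_val]
  obtain ⟨hfii, hfint⟩ := transfer f hf
  obtain ⟨hgii, hgint⟩ := transfer g hg
  have p1 : IntervalIntegrable (fun x => (f ∘ proj) (x / a)) volume 0 a := by
    have h := hfii.comp_mul_left (c := a⁻¹)
    simpa [div_eq_inv_mul, one_div, inv_inv] using h
  have p2 : IntervalIntegrable (fun x => (g ∘ proj) ((x - a) / (1 - a))) volume a 1 := by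
    have h := (hgii.comp_mul_left (c := (1-a)⁻¹)).comp_sub_right a
    simpa [div_eq_inv_mul, one_div, inv_inv] using h
  set GR : ℝ → ℝ :=
    fun x => if x < a then (f ∘ proj) (x/a) else (g ∘ proj) ((x-a)/(1-a)) with hGRdef
  have hae := ae_ne a
  have hGR1 : IntervalIntegrable GR volume 0 a := by
    constructor
    · refine (p1.1).congr ?_
      filter_upwards [ae_restrict_mem measurableSet_Ioc, ae_restrict_of_ae hae] with x hx hne
      simp only [hGRdef]
      rw [if_pos (lt_of_le_of_ne hx.2 hne)]
    · rw [Set.Ioc_eq_empty (not_lt.mpr ha.le)]; exact integrableOn_empty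
  have hGR2 : IntervalIntegrable GR volume a 1 := by
    constructor
    · refine (p2.1).congr ?_
      filter_upwards [ae_restrict_mem measurableSet_Ioc] with x hx
      simp only [hGRdef]
      rw [if_neg (not_lt.mpr hx.1.le)]
    · rw [Set.Ioc_eq_empty (not_lt.mpr ha1.le)]; exact integrableOn_empty
  have hglue_eq : glue a f g = fun t : ↥(Set.Icc (0:ℝ) 1) => GR ↑t := rfl
  have hIcc : IntegrableOn GR (Set.Icc (0:ℝ) 1) volume :=
    (integrableOn_Icc_iff_integrableOn_Ioc).mpr (hGR1.trans hGR2).1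
  constructor
  · rw [hglue_eq]
    have : Integrable GR (Measure.map Subtype.val vol) := by rw [map_val]; exact hIcc
    exact hval.integrable_map_iff.mp this
  · have h3 : ∫ x in (0:ℝ)..a, GR x = a * ∫ t, f t ∂vol := by
      have heq : ∀ᵐ x ∂(volume : Measure ℝ), x ∈ Set.uIoc (0:ℝ) a → GR x = (f ∘ proj) (x / a) := by
        filter_upwards [hae] with x hne hx
        rw [Set.uIoc_of_le ha.le] at hx
        simp only [hGRdef]
        rw [if_pos (lt_of_le_of_ne hx.2 hne)]
      rw [intervalIntegral.integral_congr_ae heq,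
        intervalIntegral.integral_comp_div (f := f ∘ proj) ha.ne', zero_div, div_self ha.ne',
        smul_eq_mul, hfint]
    have h4 : ∫ x in a..1, GR x = (1 - a) * ∫ t, g t ∂vol := by
      have heq : EqOn GR (fun x => (fun y => (g ∘ proj) (y / (1-a))) (x - a)) (Set.uIcc a 1) := by
        intro x hx
        rw [Set.uIcc_of_le ha1.le] at hx
        simp only [hGRdef]
        rw [if_neg (not_lt.mpr hx.1)]
      rw [intervalIntegral.integral_congr heq,
        intervalIntegral.integral_comp_sub_right (fun y => (g ∘ proj) (y / (1-a))) a, sub_self,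
        intervalIntegral.integral_comp_div (f := g ∘ proj) h1a.ne', zero_div, div_self h1a.ne',
        smul_eq_mul, hgint]
    calc ∫ t, glue a f g t ∂vol = ∫ x in Set.Icc (0:ℝ) 1, GR x := by
          rw [hglue_eq]; exact integral_I01 GR
      _ = ∫ x in (0:ℝ)..1, GR x := by
          rw [intervalIntegral.integral_of_le zero_le_one, integral_Icc_eq_integral_Ioc]
      _ = (∫ x in (0:ℝ)..a, GR x) + ∫ x in a..1, GR x :=
          (intervalIntegral.integral_add_adjacent_intervals hGR1 hGR2).symm
      _ = a * ∫ t, f t ∂vol + (1 - a) * ∫ t, g t ∂vol := by rw [h3, h4]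

section LpLayer

variable {p : ℝ}

lemma pos_p (hp1 : 1 < p) : 0 < p := lt_trans one_pos hp1
lemma hq0 (hp1 : 1 < p) : ENNReal.ofReal p ≠ 0 := by
  simp [ENNReal.ofReal_eq_zero, not_le, pos_p hp1]
lemma hqt : (ENNReal.ofReal p) ≠ ⊤ := ENNReal.ofReal_ne_top
lemma hqr (hp1 : 1 < p) : (ENNReal.ofReal p).toReal = p :=
  ENNReal.toReal_ofReal (pos_p hp1).le

noncomputable abbrev LpI (p : ℝ) := Lp ℝ (ENNReal.ofReal p) vol

instance : IsProbabilityMeasure vol := by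
  constructor
  rw [vol_def, hval.comap_apply, Set.image_univ, Subtype.range_coe, Real.volume_Icc]
  norm_num

lemma norm_pow (hp1 : 1 < p) (φ : LpI p) : ‖φ‖ ^ p = ∫ t, |φ t| ^ p ∂vol := by
  have hme := Lp.memLp φ
  rw [Lp.norm_def, hme.eLpNorm_eq_integral_rpow_norm (hq0 hp1) hqt,
    ENNReal.toReal_ofReal (Real.rpow_nonneg
      (integral_nonneg fun t => Real.rpow_nonneg (norm_nonneg _) _) _),
    hqr hp1,
    Real.rpow_inv_rpow (integral_nonneg fun t => Real.rpow_nonneg (norm_nonneg _) _)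
      (pos_p hp1).ne']
  simp [Real.norm_eq_abs]

lemma integrable_abs_rpow (hp1 : 1 < p) (φ : LpI p) :
    Integrable (fun t => |φ t| ^ p) vol := by
  have := (Lp.memLp φ).integrable_norm_rpow (hq0 hp1) hqt
  simpa [hqr hp1, Real.norm_eq_abs] using this

lemma glue_abs_rpow (a : ℝ) (f g : ↥(Set.Icc (0:ℝ) 1) → ℝ) :
    (fun t => |glue a f g t| ^ p) = glue a (fun t => |f t| ^ p) (fun t => |g t| ^ p) := by
  funext t
  simp only [glue]
  split_ifs <;> rfl

lemma glue_memℒp (hp1 : 1 < p) {a : ℝ} (ha : 0 < a) (ha1 : a < 1) (φ ψ : LpI p) :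
    MemLp (glue a ⇑φ ⇑ψ) (ENNReal.ofReal p) vol := by
  have hmeas : Measurable (glue a ⇑φ ⇑ψ) :=
    glue_measurable (Lp.stronglyMeasurable φ).measurable (Lp.stronglyMeasurable ψ).measurable
  have habs : Integrable (fun t => ‖glue a ⇑φ ⇑ψ t‖ ^ (ENNReal.ofReal p).toReal) vol := by
    simp only [hqr hp1, Real.norm_eq_abs]
    rw [glue_abs_rpow]
    exact (glue_integrable_integral ha ha1
      (integrable_abs_rpow hp1 φ) (integrable_abs_rpow hp1 ψ)).1
  have h1 : MemLp (fun t => ‖glue a ⇑φ ⇑ψ t‖ ^ (ENNReal.ofReal p).toReal)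
      (ENNReal.ofReal p / ENNReal.ofReal p) vol := by
    rw [ENNReal.div_self (hq0 hp1) hqt, memLp_one_iff_integrable]
    exact habs
  exact (memLp_norm_rpow_iff hmeas.aestronglyMeasurable (hq0 hp1) hqt).mp h1

noncomputable def glueLp (hp1 : 1 < p) {a : ℝ} (ha : 0 < a) (ha1 : a < 1)
    (φ ψ : LpI p) : LpI p :=
  (glue_memℒp hp1 ha ha1 φ ψ).toLp _

lemma glueLp_norm (hp1 : 1 < p) {a : ℝ} (ha : 0 < a) (ha1 : a < 1) (φ ψ : LpI p) :
    ‖glueLp hp1 ha ha1 φ ψ‖ ^ p = a * ‖φ‖ ^ p + (1 - a) * ‖ψ‖ ^ p := by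
  rw [norm_pow hp1]
  have hae : ⇑(glueLp hp1 ha ha1 φ ψ) =ᵐ[vol] glue a ⇑φ ⇑ψ := MemLp.coeFn_toLp _
  rw [integral_congr_ae (hae.mono fun t ht => by rw [ht]), glue_abs_rpow,
    (glue_integrable_integral ha ha1 (integrable_abs_rpow hp1 φ) (integrable_abs_rpow hp1 ψ)).2,
    ← norm_pow hp1 φ, ← norm_pow hp1 ψ]

lemma glueLp_sub (hp1 : 1 < p) {a : ℝ} (ha : 0 < a) (ha1 : a < 1)
    (φ₁ ψ₁ φ₂ ψ₂ : LpI p) :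
    glueLp hp1 ha ha1 (φ₁ - φ₂) (ψ₁ - ψ₂) = glueLp hp1 ha ha1 φ₁ ψ₁ - glueLp hp1 ha ha1 φ₂ ψ₂ := by
  apply Lp.ext
  have e0 : ⇑(glueLp hp1 ha ha1 (φ₁ - φ₂) (ψ₁ - ψ₂)) =ᵐ[vol] glue a ⇑(φ₁ - φ₂) ⇑(ψ₁ - ψ₂) :=
    MemLp.coeFn_toLp _
  have e1 : glue a ⇑(φ₁ - φ₂) ⇑(ψ₁ - ψ₂) =ᵐ[vol] glue a (⇑φ₁ - ⇑φ₂) (⇑ψ₁ - ⇑ψ₂) :=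
    glue_ae ha ha1 (Lp.coeFn_sub _ _) (Lp.coeFn_sub _ _)
  have e2 : ⇑(glueLp hp1 ha ha1 φ₁ ψ₁) =ᵐ[vol] glue a ⇑φ₁ ⇑ψ₁ := MemLp.coeFn_toLp _
  have e3 : ⇑(glueLp hp1 ha ha1 φ₂ ψ₂) =ᵐ[vol] glue a ⇑φ₂ ⇑ψ₂ := MemLp.coeFn_toLp _
  have e4 : ⇑(glueLp hp1 ha ha1 φ₁ ψ₁ - glueLp hp1 ha ha1 φ₂ ψ₂)
      =ᵐ[vol] ⇑(glueLp hp1 ha ha1 φ₁ ψ₁) - ⇑(glueLp hp1 ha ha1 φ₂ ψ₂) := Lp.coeFn_sub _ _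
  filter_upwards [e0, e1, e2, e3, e4] with t h0 h1 h2 h3 h4
  rw [h0, h1, h4, Pi.sub_apply, h2, h3]
  simp only [glue, Pi.sub_apply]
  split_ifs <;> rfl

lemma glueLp_add (hp1 : 1 < p) {a : ℝ} (ha : 0 < a) (ha1 : a < 1)
    (φ₁ ψ₁ φ₂ ψ₂ : LpI p) :
    glueLp hp1 ha ha1 (φ₁ + φ₂) (ψ₁ + ψ₂) = glueLp hp1 ha ha1 φ₁ ψ₁ + glueLp hp1 ha ha1 φ₂ ψ₂ := by
  apply Lp.ext
  have e0 : ⇑(glueLp hp1 ha ha1 (φ₁ + φ₂) (ψ₁ + ψ₂)) =ᵐ[vol] glue a ⇑(φ₁ + φ₂) ⇑(ψ₁ + ψ₂) :=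
    MemLp.coeFn_toLp _
  have e1 : glue a ⇑(φ₁ + φ₂) ⇑(ψ₁ + ψ₂) =ᵐ[vol] glue a (⇑φ₁ + ⇑φ₂) (⇑ψ₁ + ⇑ψ₂) :=
    glue_ae ha ha1 (Lp.coeFn_add _ _) (Lp.coeFn_add _ _)
  have e2 : ⇑(glueLp hp1 ha ha1 φ₁ ψ₁) =ᵐ[vol] glue a ⇑φ₁ ⇑ψ₁ := MemLp.coeFn_toLp _
  have e3 : ⇑(glueLp hp1 ha ha1 φ₂ ψ₂) =ᵐ[vol] glue a ⇑φ₂ ⇑ψ₂ := MemLp.coeFn_toLp _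
  have e4 : ⇑(glueLp hp1 ha ha1 φ₁ ψ₁ + glueLp hp1 ha ha1 φ₂ ψ₂)
      =ᵐ[vol] ⇑(glueLp hp1 ha ha1 φ₁ ψ₁) + ⇑(glueLp hp1 ha ha1 φ₂ ψ₂) := Lp.coeFn_add _ _
  filter_upwards [e0, e1, e2, e3, e4] with t h0 h1 h2 h3 h4
  rw [h0, h1, h4, Pi.add_apply, h2, h3]
  simp only [glue, Pi.add_apply]
  split_ifs <;> rfl

noncomputable def constLp (p : ℝ) (c : ℝ) : LpI p :=
  (memLp_const c).toLp _

lemma constLp_norm (hp1 : 1 < p) (c : ℝ) : ‖constLp p c‖ ^ p = |c| ^ p := by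
  rw [norm_pow hp1]
  have hae : ⇑(constLp p c) =ᵐ[vol] (fun _ => c) := MemLp.coeFn_toLp _
  rw [integral_congr_ae (hae.mono fun t ht => by rw [ht])]
  simp

lemma constLp_sub (c d : ℝ) : constLp p c - constLp p d = constLp p (c - d) := by
  apply Lp.ext
  have e1 : ⇑(constLp p c - constLp p d) =ᵐ[vol] ⇑(constLp p c) - ⇑(constLp p d) :=
    Lp.coeFn_sub _ _
  have e2 : ⇑(constLp p c) =ᵐ[vol] fun _ => c := MemLp.coeFn_toLp _
  have e3 : ⇑(constLp p d) =ᵐ[vol] fun _ => d := MemLp.coeFn_toLp _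
  have e4 : ⇑(constLp p (c - d)) =ᵐ[vol] fun _ => c - d := MemLp.coeFn_toLp _
  filter_upwards [e1, e2, e3, e4] with t h1 h2 h3 h4
  rw [h1, Pi.sub_apply, h2, h3, h4]

lemma glueLp_const (hp1 : 1 < p) {a : ℝ} (ha : 0 < a) (ha1 : a < 1) (c : ℝ) :
    glueLp hp1 ha ha1 (constLp p c) (constLp p c) = constLp p c := by
  apply Lp.ext
  have e0 : ⇑(glueLp hp1 ha ha1 (constLp p c) (constLp p c))
      =ᵐ[vol] glue a ⇑(constLp p c) ⇑(constLp p c) := MemLp.coeFn_toLp _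
  have e1 : glue a ⇑(constLp p c) ⇑(constLp p c)
      =ᵐ[vol] glue a (fun _ => c) (fun _ => c) :=
    glue_ae ha ha1 (MemLp.coeFn_toLp _) (MemLp.coeFn_toLp _)
  have e2 : ⇑(constLp p c) =ᵐ[vol] fun _ => c := MemLp.coeFn_toLp _
  filter_upwards [e0, e1, e2] with t h0 h1 h2
  rw [h0, h1, h2]
  simp only [glue]
  split_ifs <;> rfl

end LpLayer

section Main

variable {p : ℝ}

/-- The set of achievable values. -/
def S (p : ℝ) (x : ℝ × ℝ × ℝ) : Set ℝ :=
  {y : ℝ | ∃ φ ψ : Lp ℝ (ENNReal.ofReal p) (volume : Measure (Set.Icc (0 : ℝ) 1)),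
    ‖φ‖ ^ p = x.1 ∧ ‖ψ‖ ^ p = x.2.1 ∧ ‖φ - ψ‖ ^ p = x.2.2 ∧ y = ‖φ + ψ‖ ^ p}

lemma bellman3_eq (x : ℝ × ℝ × ℝ) : bellman3 p x = sSup (S p x) := rfl

lemma S_bddAbove (hp1 : 1 < p) (x : ℝ × ℝ × ℝ) : BddAbove (S p x) := by
  haveI : Fact (1 ≤ ENNReal.ofReal p) := ⟨ENNReal.one_le_ofReal.mpr hp1.le⟩
  refine ⟨(x.1 ^ (1/p) + x.2.1 ^ (1/p)) ^ p, ?_⟩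
  rintro y ⟨φ, ψ, h1, h2, h3, rfl⟩
  have hφ : ‖φ‖ = x.1 ^ (1/p) := by
    rw [← h1, one_div, Real.rpow_rpow_inv (norm_nonneg _) (pos_p hp1).ne']
  have hψ : ‖ψ‖ = x.2.1 ^ (1/p) := by
    rw [← h2, one_div, Real.rpow_rpow_inv (norm_nonneg _) (pos_p hp1).ne']
  calc ‖φ + ψ‖ ^ p ≤ (‖φ‖ + ‖ψ‖) ^ p :=
        Real.rpow_le_rpow (norm_nonneg _) (norm_add_le _ _) (pos_p hp1).le
    _ = _ := by rw [hφ, hψ]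

lemma mem_Omega3_of_rel (hp1 : 1 < p) {x : ℝ × ℝ × ℝ}
    (φ ψ : LpI p) (h1 : ‖φ‖ ^ p = x.1) (h2 : ‖ψ‖ ^ p = x.2.1) (h3 : ‖φ - ψ‖ ^ p = x.2.2) :
    x ∈ Omega3 p := by
  haveI : Fact (1 ≤ ENNReal.ofReal p) := ⟨ENNReal.one_le_ofReal.mpr hp1.le⟩
  have hp := (pos_p hp1).ne'
  have e1 : x.1 ^ (1/p) = ‖φ‖ := by
    rw [← h1, one_div, Real.rpow_rpow_inv (norm_nonneg _) hp]
  have e2 : x.2.1 ^ (1/p) = ‖ψ‖ := by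
    rw [← h2, one_div, Real.rpow_rpow_inv (norm_nonneg _) hp]
  have e3 : x.2.2 ^ (1/p) = ‖φ - ψ‖ := by
    rw [← h3, one_div, Real.rpow_rpow_inv (norm_nonneg _) hp]
  refine ⟨h1 ▸ Real.rpow_nonneg (norm_nonneg _) _,
    h2 ▸ Real.rpow_nonneg (norm_nonneg _) _,
    h3 ▸ Real.rpow_nonneg (norm_nonneg _) _, ?_, ?_, ?_⟩
  · rw [e1, e2, e3]
    calc ‖φ‖ = ‖ψ + (φ - ψ)‖ := by rw [show ψ + (φ - ψ) = φ by abel]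
      _ ≤ ‖ψ‖ + ‖φ - ψ‖ := norm_add_le _ _
  · rw [e1, e2, e3]
    calc ‖ψ‖ = ‖φ - (φ - ψ)‖ := by rw [show φ - (φ - ψ) = ψ by abel]
      _ ≤ ‖φ‖ + ‖φ - ψ‖ := norm_sub_le _ _
  · rw [e1, e2, e3]
    exact norm_sub_le _ _

lemma exists_rel (hp1 : 1 < p) {x : ℝ × ℝ × ℝ} (hx : x ∈ Omega3 p) :
    ∃ φ ψ : LpI p, ‖φ‖ ^ p = x.1 ∧ ‖ψ‖ ^ p = x.2.1 ∧ ‖φ - ψ‖ ^ p = x.2.2 := by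
  obtain ⟨x1, x2, x3⟩ := x
  obtain ⟨hx1, hx2, hx3, ht1, ht2, ht3⟩ := hx
  dsimp only at hx1 hx2 hx3 ht1 ht2 ht3 ⊢
  have hp := (pos_p hp1).ne'
  have hppos := (pos_p hp1).le
  set s1 : ℝ := x1 ^ (1/p) with hs1def
  set s2 : ℝ := x2 ^ (1/p) with hs2def
  set s3 : ℝ := x3 ^ (1/p) with hs3def
  have hs1 : 0 ≤ s1 := Real.rpow_nonneg hx1 _
  have hs2 : 0 ≤ s2 := Real.rpow_nonneg hx2 _
  have hs3 : 0 ≤ s3 := Real.rpow_nonneg hx3 _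
  have e1 : s1 ^ p = x1 := by rw [hs1def, one_div, Real.rpow_inv_rpow hx1 hp]
  have e2 : s2 ^ p = x2 := by rw [hs2def, one_div, Real.rpow_inv_rpow hx2 hp]
  have e3 : s3 ^ p = x3 := by rw [hs3def, one_div, Real.rpow_inv_rpow hx3 hp]
  have habs : |s1 - s3| ≤ s2 := abs_sub_le_iff.mpr ⟨by linarith, by linarith⟩
  have hL : |s1 - s3| ^ p ≤ x2 := by
    rw [← e2]; exact Real.rpow_le_rpow (abs_nonneg _) habs hppos
  have hU : x2 ≤ (s1 + s3) ^ p := by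
    rw [← e2]; exact Real.rpow_le_rpow hs2 ht2 hppos
  have hφ : ‖constLp p s1‖ ^ p = x1 := by
    rw [constLp_norm hp1, abs_of_nonneg hs1, e1]
  by_cases hcU : x2 = (s1 + s3) ^ p
  · refine ⟨constLp p s1, constLp p (s1 + s3), hφ, ?_, ?_⟩
    · rw [constLp_norm hp1, abs_of_nonneg (by linarith)]; exact hcU.symm
    · rw [constLp_sub, show s1 - (s1 + s3) = -s3 by ring, constLp_norm hp1, abs_neg,
        abs_of_nonneg hs3, e3]
  by_cases hcL : x2 = |s1 - s3| ^ p
  · refine ⟨constLp p s1, constLp p (s1 - s3), hφ, ?_, ?_⟩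
    · rw [constLp_norm hp1]; exact hcL.symm
    · rw [constLp_sub, show s1 - (s1 - s3) = s3 by ring, constLp_norm hp1,
        abs_of_nonneg hs3, e3]
  · have hLlt : |s1 - s3| ^ p < x2 := lt_of_le_of_ne hL (Ne.symm hcL)
    have hUlt : x2 < (s1 + s3) ^ p := lt_of_le_of_ne hU hcU
    have hDpos : (0:ℝ) < (s1 + s3) ^ p - |s1 - s3| ^ p := by linarith
    set m : ℝ := ((s1 + s3) ^ p - x2) / ((s1 + s3) ^ p - |s1 - s3| ^ p) with hmdef
    have hm0 : 0 < m := div_pos (by linarith) hDpos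
    have hm1 : m < 1 := (div_lt_one hDpos).mpr (by linarith)
    refine ⟨constLp p s1, glueLp hp1 hm0 hm1 (constLp p (s1 - s3)) (constLp p (s1 + s3)),
      hφ, ?_, ?_⟩
    · rw [glueLp_norm hp1, constLp_norm hp1, constLp_norm hp1,
        abs_of_nonneg (by linarith : (0:ℝ) ≤ s1 + s3)]
      have expand : m * |s1 - s3| ^ p + (1 - m) * (s1 + s3) ^ p
          = (s1 + s3) ^ p - m * ((s1 + s3) ^ p - |s1 - s3| ^ p) := by ring
      rw [expand, hmdef, div_mul_cancel₀ _ hDpos.ne']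
      ring
    · rw [show constLp p s1
          = glueLp hp1 hm0 hm1 (constLp p s1) (constLp p s1) from (glueLp_const hp1 hm0 hm1 s1).symm,
        ← glueLp_sub hp1 hm0 hm1, constLp_sub, constLp_sub,
        show s1 - (s1 - s3) = s3 by ring, show s1 - (s1 + s3) = -s3 by ring,
        glueLp_norm hp1, constLp_norm hp1, constLp_norm hp1, abs_neg, abs_of_nonneg hs3, e3]
      ring

lemma S_nonempty (hp1 : 1 < p) {x : ℝ × ℝ × ℝ} (hx : x ∈ Omega3 p) : (S p x).Nonempty := by
  obtain ⟨φ, ψ, h1, h2, h3⟩ := exists_rel hp1 hx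
  exact ⟨‖φ + ψ‖ ^ p, φ, ψ, h1, h2, h3, rfl⟩

lemma prod_comp1 (a b : ℝ) (x y : ℝ × ℝ × ℝ) :
    (a • x + b • y).1 = a * x.1 + b * y.1 := by simp
lemma prod_comp2 (a b : ℝ) (x y : ℝ × ℝ × ℝ) :
    (a • x + b • y).2.1 = a * x.2.1 + b * y.2.1 := by simp
lemma prod_comp3 (a b : ℝ) (x y : ℝ × ℝ × ℝ) :
    (a • x + b • y).2.2 = a * x.2.2 + b * y.2.2 := by simp

lemma comb (hp1 : 1 < p) {a : ℝ} (ha : 0 < a) (ha1 : a < 1) {x y : ℝ × ℝ × ℝ} {u v : ℝ}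
    (hu : u ∈ S p x) (hv : v ∈ S p y) :
    a * u + (1 - a) * v ∈ S p (a • x + (1 - a) • y) := by
  obtain ⟨φ₁, ψ₁, hx1, hx2, hx3, rfl⟩ := hu
  obtain ⟨φ₂, ψ₂, hy1, hy2, hy3, rfl⟩ := hv
  refine ⟨glueLp hp1 ha ha1 φ₁ φ₂, glueLp hp1 ha ha1 ψ₁ ψ₂, ?_, ?_, ?_, ?_⟩
  · rw [glueLp_norm hp1, hx1, hy1, prod_comp1]
  · rw [glueLp_norm hp1, hx2, hy2, prod_comp2]
  · rw [← glueLp_sub hp1 ha ha1, glueLp_norm hp1, hx3, hy3, prod_comp3]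
  · rw [← glueLp_add hp1 ha ha1, glueLp_norm hp1]

lemma omega3_convex (hp1 : 1 < p) : Convex ℝ (Omega3 p) := by
  intro x hx y hy a b ha hb hab
  rcases eq_or_lt_of_le ha with ha0 | hapos
  · have hb1 : b = 1 := by linarith
    subst hb1
    rw [← ha0]
    simpa using hy
  rcases eq_or_lt_of_le hb with hb0 | hbpos
  · have ha1 : a = 1 := by linarith
    subst ha1
    rw [← hb0]
    simpa using hx
  have hb' : b = 1 - a := by linarith
  subst hb'
  have ha1 : a < 1 := by linarith
  obtain ⟨φ₁, ψ₁, hx1, hx2, hx3⟩ := exists_rel hp1 hx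
  obtain ⟨φ₂, ψ₂, hy1, hy2, hy3⟩ := exists_rel hp1 hy
  refine mem_Omega3_of_rel hp1 (glueLp hp1 hapos ha1 φ₁ φ₂) (glueLp hp1 hapos ha1 ψ₁ ψ₂)
    ?_ ?_ ?_
  · rw [glueLp_norm hp1, hx1, hy1, prod_comp1]
  · rw [glueLp_norm hp1, hx2, hy2, prod_comp2]
  · rw [← glueLp_sub hp1 hapos ha1, glueLp_norm hp1, hx3, hy3, prod_comp3]

end Main

end BellmanAux

theorem bellman3_concave (p : ℝ) (hp1 : 1 < p) :
    ConcaveOn ℝ (Omega3 p) (bellman3 p) := by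
  constructor
  · exact BellmanAux.omega3_convex hp1
  · intro x hx y hy a b ha hb hab
    simp only [smul_eq_mul]
    rcases eq_or_lt_of_le ha with ha0 | hapos
    · have hb1 : b = 1 := by linarith
      subst hb1
      rw [← ha0]
      simp
    rcases eq_or_lt_of_le hb with hb0 | hbpos
    · have ha1 : a = 1 := by linarith
      subst ha1
      rw [← hb0]
      simp
    have hb' : b = 1 - a := by linarith
    subst hb'
    have ha1 : a < 1 := by linarith
    have hSx := BellmanAux.S_nonempty hp1 hx
    have hSy := BellmanAux.S_nonempty hp1 hy
    have hbddz := BellmanAux.S_bddAbove hp1 (a • x + (1 - a) • y)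
    rw [BellmanAux.bellman3_eq, BellmanAux.bellman3_eq, BellmanAux.bellman3_eq]
    have key : ∀ u ∈ BellmanAux.S p x, ∀ v ∈ BellmanAux.S p y,
        a * u + (1 - a) * v ≤ sSup (BellmanAux.S p (a • x + (1 - a) • y)) := fun u hu v hv =>
      le_csSup hbddz (BellmanAux.comb hp1 hapos ha1 hu hv)
    have step1 : ∀ u ∈ BellmanAux.S p x,
        a * u + (1 - a) * sSup (BellmanAux.S p y)
          ≤ sSup (BellmanAux.S p (a • x + (1 - a) • y)) := by
      intro u hu
      have h2 : sSup (BellmanAux.S p y)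
          ≤ (sSup (BellmanAux.S p (a • x + (1 - a) • y)) - a * u) / (1 - a) :=
        csSup_le hSy fun v hv =>
          (le_div_iff₀ (by linarith)).mpr (by linarith [key u hu v hv])
      have h3 := mul_le_mul_of_nonneg_left h2 (by linarith : (0:ℝ) ≤ 1 - a)
      rw [mul_div_cancel₀ _ (by linarith : (1:ℝ) - a ≠ 0)] at h3
      linarith
    have step2 : sSup (BellmanAux.S p x)
        ≤ (sSup (BellmanAux.S p (a • x + (1 - a) • y))
            - (1 - a) * sSup (BellmanAux.S p y)) / a :=
      csSup_le hSx fun u hu => (le_div_iff₀ hapos).mpr (by linarith [step1 u hu])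
    have h4 := mul_le_mul_of_nonneg_left step2 hapos.le
    rw [mul_div_cancel₀ _ hapos.ne'] at h4
    linarith
end

section
/- Let ω ⊂ ℝ^d be a compact strictly convex set with nonempty interior, f : ∂ω → ℝ continuous, and 𝔅 the minimal concave function on ω majorizing f on ∂ω. Then for every x₀ ∈ ω there exist k ≤ d+1 points x₁, …, x_k ∈ ∂ω such that x₀ ∈ conv(x₁, …, x_k), 𝔅(x_i) = f(x_i) for each i, and 𝔅 is affine on conv(x₁, …, x_k). -/
open Finset Set

/-- Convex hull of a compact set in a finite-dimensional normed real vector space is compact. -/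
lemma myIsCompactConvexHull {E : Type*} [NormedAddCommGroup E] [NormedSpace ℝ E]
    [FiniteDimensional ℝ E] {A : Set E} (hA : IsCompact A) : IsCompact (convexHull ℝ A) := by
  classical
  rcases A.eq_empty_or_nonempty with rfl | ⟨a₀, ha₀⟩
  · simp
  set n := Module.finrank ℝ E + 1 with hn
  set T : (Fin n → ℝ) × (Fin n → E) → E := fun q => ∑ j, q.1 j • q.2 j with hT
  have hTc : Continuous T := by
    apply continuous_finset_sum
    intro j _
    exact ((continuous_apply j).comp continuous_fst).smul
      ((continuous_apply j).comp continuous_snd)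
  set D : Set ((Fin n → ℝ) × (Fin n → E)) :=
    (stdSimplex ℝ (Fin n)) ×ˢ (Set.univ.pi fun _ : Fin n => A) with hD
  have hDc : IsCompact D := (isCompact_stdSimplex ℝ _).prod (isCompact_univ_pi fun _ => hA)
  have key : convexHull ℝ A = T '' D := by
    apply Set.Subset.antisymm
    · intro x hx
      obtain ⟨ι, hι, z, w, hzA, hai, hw0, hw1, hsum⟩ :=
        eq_pos_convex_span_of_mem_convexHull hx
      have hne : Nonempty ι := by
        by_contra h
        rw [not_nonempty_iff] at h
        simp at hw1
      have hcard : Fintype.card ι ≤ n := by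
        refine (hai.card_le_finrank_succ.trans ?_)
        have := Submodule.finrank_le (vectorSpan ℝ (Set.range z))
        omega
      obtain ⟨e⟩ : Nonempty (ι ↪ Fin n) := by
        apply Function.Embedding.nonempty_of_card_le
        simpa using hcard
      set w' : Fin n → ℝ := Function.extend e w 0 with hw'
      set z' : Fin n → E := Function.extend e z (fun _ => a₀) with hz'
      have hw'e : ∀ i, w' (e i) = w i := fun i => e.injective.extend_apply _ _ _
      have hz'e : ∀ i, z' (e i) = z i := fun i => e.injective.extend_apply _ _ _
      have hw'0 : ∀ j, j ∉ Finset.univ.image e → w' j = 0 := by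
        intro j hj
        apply Function.extend_apply'
        rintro ⟨i, rfl⟩
        exact hj (Finset.mem_image_of_mem e (Finset.mem_univ i))
      have hsum' : ∀ (F : Fin n → ℝ → E → E), (∀ t y, F 0 t y = 0) → True := fun _ _ => trivial
      refine ⟨(w', z'), ⟨?_, ?_⟩, ?_⟩
      · constructor
        · intro j
          show 0 ≤ w' j
          rcases em (∃ i, e i = j) with ⟨i, rfl⟩ | hj
          · rw [hw'e]; exact (hw0 i).le
          · rw [hw', Function.extend_apply' _ _ _ hj]; rfl
        · rw [← Finset.sum_subset (Finset.subset_univ (Finset.univ.image e)) fun j _ hj => hw'0 j hj]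
          rw [Finset.sum_image (fun i _ j _ h => e.injective h)]
          simpa [hw'e] using hw1
      · intro j _
        show z' j ∈ A
        rcases em (∃ i, e i = j) with ⟨i, rfl⟩ | hj
        · rw [hz'e]; exact hzA (Set.mem_range_self i)
        · rw [hz', Function.extend_apply' _ _ _ hj]; exact ha₀
      · show ∑ j, w' j • z' j = x
        rw [← Finset.sum_subset (Finset.subset_univ (Finset.univ.image e))
          (fun j _ hj => by rw [hw'0 j hj, zero_smul])]
        rw [Finset.sum_image (fun i _ j _ h => e.injective h)]
        simpa [hw'e, hz'e] using hsum
    · rintro _ ⟨⟨w, z⟩, ⟨⟨hw0, hw1⟩, hzA⟩, rfl⟩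
      have : T (w, z) = Finset.univ.centerMass w z := by
        rw [Finset.centerMass_eq_of_sum_1 _ _ hw1]
      rw [this]
      exact Finset.centerMass_mem_convexHull _ (fun i _ => hw0 i) (by rw [hw1]; norm_num)
        (fun i _ => hzA i (Set.mem_univ i))
  rw [key]
  exact hDc.image hTc

/-- A linear functional with prescribed values on a finite linearly independent family. -/
lemma myExistsLinearMap {E : Type*} [NormedAddCommGroup E] [InnerProductSpace ℝ E]
    [FiniteDimensional ℝ E] {ι : Type*} [Fintype ι] {v : ι → E}
    (hv : LinearIndependent ℝ v) (c : ι → ℝ) : ∃ L : E →ₗ[ℝ] ℝ, ∀ i, L (v i) = c i := by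
  set W := Submodule.span ℝ (Set.range v) with hW
  have hmem : ∀ i, v i ∈ W := fun i => Submodule.subset_span (Set.mem_range_self i)
  set B : Module.Basis ι ℝ W := Module.Basis.span hv with hB
  set φ : W →ₗ[ℝ] ℝ := B.constr ℝ c with hφ
  refine ⟨φ.comp (W.orthogonalProjectionOnto).toLinearMap, fun i => ?_⟩
  have h1 : W.orthogonalProjectionOnto (v i) = ⟨v i, hmem i⟩ := by
    exact Submodule.orthogonalProjectionOnto_mem_subspace_eq_self (⟨v i, hmem i⟩ : W)
  simp only [LinearMap.comp_apply, ContinuousLinearMap.coe_coe, h1]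
  have h2 : (⟨v i, hmem i⟩ : W) = B i := by
    apply Subtype.ext
    rw [Module.Basis.span_apply]
  rw [h2, hφ, Module.Basis.constr_basis]

open Set

/-- In a compact set, every point is in the convex hull of the frontier,
provided the frontier is nonempty. -/
lemma myMemConvexHullFrontier {E : Type*} [NormedAddCommGroup E] [NormedSpace ℝ E]
    {ω : Set E} (hc : IsCompact ω) {y : E} (hy : y ∈ frontier ω) {x : E} (hx : x ∈ ω) :
    x ∈ convexHull ℝ (frontier ω) := by
  have hcl : IsClosed ω := hc.isClosed
  have hfr : frontier ω ⊆ ω := hcl.frontier_subset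
  by_cases hxy : x = y
  · exact subset_convexHull ℝ _ (hxy ▸ hy)
  set v := x - y with hv
  have hv0 : v ≠ 0 := sub_ne_zero.mpr hxy
  set T : Set ℝ := {t : ℝ | y + t • v ∈ ω} with hT
  have h1T : (1 : ℝ) ∈ T := by simp [hT, hv, hx]
  have hTne : T.Nonempty := ⟨1, h1T⟩
  have hTbdd : BddAbove T := by
    obtain ⟨R, hR⟩ := hc.isBounded.subset_closedBall 0
    refine ⟨(R + ‖y‖) / ‖v‖, fun t ht => ?_⟩
    have h1 : ‖y + t • v‖ ≤ R := by simpa using hR ht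
    have h2 : ‖t • v‖ ≤ R + ‖y‖ := by
      have he : t • v = (y + t • v) - y := by abel
      rw [he]
      exact (norm_sub_le _ _).trans (by linarith)
    have h3 : |t| * ‖v‖ ≤ R + ‖y‖ := by
      rw [← Real.norm_eq_abs, ← norm_smul]
      exact h2
    have hvpos : 0 < ‖v‖ := norm_pos_iff.mpr hv0
    rw [le_div_iff₀ hvpos]
    calc t * ‖v‖ ≤ |t| * ‖v‖ := by nlinarith [le_abs_self t, hvpos.le]
    _ ≤ R + ‖y‖ := h3
  have hTcl : IsClosed T := hcl.preimage (by continuity)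
  set b := sSup T with hb
  have hbT : b ∈ T := hTcl.csSup_mem hTne hTbdd
  have hb1 : 1 ≤ b := le_csSup hTbdd h1T
  set z := y + b • v with hz
  have hzω : z ∈ ω := hbT
  have hzfr : z ∈ frontier ω := by
    rw [frontier_eq_closure_inter_closure, hcl.closure_eq]
    refine ⟨hzω, ?_⟩
    rw [mem_closure_iff]
    intro U hU hzU
    by_contra hcon
    push_neg at hcon
    -- U ∩ ωᶜ = ∅, so U ⊆ ω
    have hUω : U ⊆ ω := by
      intro u hu
      by_contra h
      exact Set.eq_empty_iff_forall_notMem.mp hcon u ⟨hu, h⟩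
    -- the map t ↦ y + t • v is continuous; preimage of U is open and contains b
    have hco : Continuous (fun t : ℝ => y + t • v) := by continuity
    have : IsOpen ((fun t : ℝ => y + t • v) ⁻¹' U) := hU.preimage hco
    obtain ⟨δ, hδ, hball⟩ := Metric.isOpen_iff.mp this b hzU
    have hmem : b + δ/2 ∈ T := by
      apply hUω
      apply hball
      rw [Metric.mem_ball, Real.dist_eq]
      have : b + δ/2 - b = δ/2 := by ring
      rw [this, abs_of_pos (by linarith)]
      linarith
    linarith [le_csSup hTbdd hmem]
  -- x = (1 - 1/b) • y + (1/b) • z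
  have hbpos : 0 < b := lt_of_lt_of_le one_pos hb1
  have hxeq : (1 - 1/b) • y + (1/b) • z = x := by
    rw [hz, smul_add, smul_smul]
    have : (1/b) * b = 1 := by field_simp
    rw [this]
    rw [hv]
    module
  have hc1 : (0:ℝ) ≤ 1 - 1/b := by
    rw [sub_nonneg]
    rw [div_le_one hbpos]
    exact hb1
  have hc2 : (0:ℝ) ≤ 1/b := by positivity
  rw [← hxeq]
  exact (convex_convexHull ℝ (frontier ω)) (subset_convexHull ℝ _ hy)
    (subset_convexHull ℝ _ hzfr) hc1 hc2 (by ring)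

set_option maxHeartbeats 2000000 in
theorem minimal_concave_caratheodory
    (d : ℕ) (ω : Set (EuclideanSpace ℝ (Fin d)))
    (hωc : IsCompact ω) (hωsc : StrictConvex ℝ ω)
    (hωint : (interior ω).Nonempty)
    (f : EuclideanSpace ℝ (Fin d) → ℝ) (hf : ContinuousOn f (frontier ω))
    (𝔅 : EuclideanSpace ℝ (Fin d) → ℝ)
    (h𝔅conc : ConcaveOn ℝ ω 𝔅)
    (h𝔅maj : ∀ z ∈ frontier ω, f z ≤ 𝔅 z)
    (h𝔅min : ∀ G : EuclideanSpace ℝ (Fin d) → ℝ,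
      ConcaveOn ℝ ω G → (∀ z ∈ frontier ω, f z ≤ G z) → ∀ x ∈ ω, 𝔅 x ≤ G x) :
    ∀ x₀ ∈ ω, ∃ (k : ℕ), k ≤ d + 1 ∧ ∃ xs : Fin k → EuclideanSpace ℝ (Fin d),
      (∀ i, xs i ∈ frontier ω) ∧
      x₀ ∈ convexHull ℝ (Set.range xs) ∧
      (∀ i, 𝔅 (xs i) = f (xs i)) ∧
      ∃ g : EuclideanSpace ℝ (Fin d) →ᵃ[ℝ] ℝ,
        ∀ z ∈ convexHull ℝ (Set.range xs), 𝔅 z = g z := by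
  classical
  intro x₀ hx₀
  have hωconv : Convex ℝ ω := hωsc.convex
  have hωcl : IsClosed ω := hωc.isClosed
  have hfr : frontier ω ⊆ ω := hωcl.frontier_subset
  rcases (frontier ω).eq_empty_or_nonempty with hSe | ⟨y₀, hy₀⟩
  · exfalso
    have hcc : ConcaveOn ℝ ω (fun _ => 𝔅 x₀ - 1) := concaveOn_const _ hωconv
    have := h𝔅min _ hcc
      (fun z hz => by rw [hSe] at hz; exact absurd hz (Set.notMem_empty z)) x₀ hx₀
    linarith
  set S := frontier ω with hSdef
  set A : Set (EuclideanSpace ℝ (Fin d) × ℝ) := (fun z => (z, f z)) '' S with hA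
  have hScomp : IsCompact S := hωc.of_isClosed_subset isClosed_frontier hfr
  have hAcomp : IsCompact A := hScomp.image_of_continuousOn (continuousOn_id.prodMk hf)
  set K := convexHull ℝ A with hK
  have hKcomp : IsCompact K := myIsCompactConvexHull hAcomp
  have hKA : A ⊆ K := subset_convexHull ℝ A
  have hKhyp : K ⊆ {q : EuclideanSpace ℝ (Fin d) × ℝ | q.1 ∈ ω ∧ q.2 ≤ 𝔅 q.1} := by
    apply convexHull_min _ h𝔅conc.convex_hypograph
    rintro _ ⟨z, hz, rfl⟩
    exact ⟨hfr hz, h𝔅maj z hz⟩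
  -- sections of K
  have hsecbdd : ∀ x : EuclideanSpace ℝ (Fin d), BddAbove {t | (x, t) ∈ K} := by
    intro x
    have h1 : BddAbove (Prod.snd '' K) := (hKcomp.image continuous_snd).bddAbove
    have h2 : {t | (x, t) ∈ K} ⊆ Prod.snd '' K := fun t ht => ⟨(x, t), ht, rfl⟩
    exact h1.mono h2
  have hseccl : ∀ x : EuclideanSpace ℝ (Fin d), IsClosed {t | (x, t) ∈ K} :=
    fun x => hKcomp.isClosed.preimage (Continuous.prodMk_right x)
  have hsecne : ∀ x ∈ ω, {t | (x, t) ∈ K}.Nonempty := by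
    intro x hx
    have h1 : x ∈ convexHull ℝ S := myMemConvexHullFrontier hωc hy₀ hx
    have h2 : (⇑(LinearMap.fst ℝ (EuclideanSpace ℝ (Fin d)) ℝ)) '' K =
        convexHull ℝ ((⇑(LinearMap.fst ℝ (EuclideanSpace ℝ (Fin d)) ℝ)) '' A) :=
      (LinearMap.fst ℝ (EuclideanSpace ℝ (Fin d)) ℝ).image_convexHull A
    have h3 : (⇑(LinearMap.fst ℝ (EuclideanSpace ℝ (Fin d)) ℝ)) '' A = S := by
      rw [hA, Set.image_image]
      simp
    rw [h3] at h2
    rw [← h2] at h1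
    obtain ⟨⟨q1, q2⟩, hqK, rfl⟩ := h1
    exact ⟨q2, by simpa using hqK⟩
  set G : EuclideanSpace ℝ (Fin d) → ℝ := fun x => sSup {t | (x, t) ∈ K} with hG
  have hGmem : ∀ x ∈ ω, (x, G x) ∈ K :=
    fun x hx => (hseccl x).csSup_mem (hsecne x hx) (hsecbdd x)
  have hle : ∀ x t, (x, t) ∈ K → t ≤ G x := fun x t ht => le_csSup (hsecbdd x) ht
  have hGconc : ConcaveOn ℝ ω G := by
    refine ⟨hωconv, fun x hx y hy a b ha hb hab => ?_⟩
    apply hle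
    have := (convex_convexHull ℝ A) (hGmem x hx) (hGmem y hy) ha hb hab
    simpa [Prod.smul_mk, Prod.mk_add_mk, smul_eq_mul] using this
  have hGf : ∀ z ∈ frontier ω, f z ≤ G z := fun z hz => hle z (f z) (hKA ⟨z, hz, rfl⟩)
  have hx₀K : (x₀, 𝔅 x₀) ∈ K := by
    have h1 : 𝔅 x₀ ≤ G x₀ := h𝔅min G hGconc hGf x₀ hx₀
    have h2 : G x₀ ≤ 𝔅 x₀ := (hKhyp (hGmem x₀ hx₀)).2
    have : G x₀ = 𝔅 x₀ := le_antisymm h2 h1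
    rw [← this]
    exact hGmem x₀ hx₀
  have hmax : ∀ t, (x₀, t) ∈ K → t ≤ 𝔅 x₀ := fun t ht => (hKhyp ht).2
  -- Carathéodory
  obtain ⟨ι, hι, p, w, hpA, hai, hw0, hw1, hsum⟩ := eq_pos_convex_span_of_mem_convexHull hx₀K
  haveI hne : Nonempty ι := by
    rcases isEmpty_or_nonempty ι with h | h
    · exfalso; rw [Finset.univ_eq_empty, Finset.sum_empty] at hw1; exact zero_ne_one hw1
    · exact h
  have hfst : ∑ i, w i • (p i).1 = x₀ := by
    have := congrArg Prod.fst hsum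
    simpa [Prod.fst_sum] using this
  have hsnd : ∑ i, w i * (p i).2 = 𝔅 x₀ := by
    have := congrArg Prod.snd hsum
    simpa [Prod.snd_sum, smul_eq_mul] using this
  have hpfr : ∀ i, (p i).1 ∈ S ∧ (p i).2 = f ((p i).1) := by
    intro i
    obtain ⟨z, hz, hzp⟩ := hpA (Set.mem_range_self i)
    rw [← hzp]
    exact ⟨hz, rfl⟩
  have hlift : ∀ u : ι → ℝ, (∀ i, 0 ≤ u i) → ∑ i, u i = 1 →
      (∑ i, u i • (p i).1, ∑ i, u i * (p i).2) ∈ K := by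
    intro u hu0 hu1
    have h1 : Finset.univ.centerMass u p ∈ K :=
      Finset.centerMass_mem_convexHull _ (fun i _ => hu0 i) (by rw [hu1]; norm_num)
        (fun i _ => hpA (Set.mem_range_self i))
    have h2 : Finset.univ.centerMass u p = (∑ i, u i • (p i).1, ∑ i, u i * (p i).2) := by
      rw [Finset.centerMass_eq_of_sum_1 _ _ hu1]
      rw [Prod.ext_iff]
      constructor
      · simp [Prod.fst_sum]
      · simp [Prod.snd_sum, smul_eq_mul]
    rw [h2] at h1
    exact h1
  -- affine independence of projections
  have hxai : AffineIndependent ℝ (fun i => (p i).1) := by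
    rw [affineIndependent_iff_of_fintype]
    intro u hu0 hulin
    rw [Finset.weightedVSub_eq_linear_combination _ hu0] at hulin
    by_contra hcon
    push_neg at hcon
    obtain ⟨j, hj⟩ := hcon
    set r := ∑ i, u i * (p i).2 with hr
    rcases eq_or_ne r 0 with hr0 | hr0
    · apply hj
      refine (affineIndependent_iff_of_fintype ℝ p).mp hai u hu0 ?_ j
      rw [Finset.weightedVSub_eq_linear_combination _ hu0]
      rw [Prod.ext_iff]
      constructor
      · simpa [Prod.fst_sum] using hulin
      · simpa [Prod.snd_sum, smul_eq_mul] using hr0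
    · set M := Finset.univ.sup' Finset.univ_nonempty (fun i => |u i|) with hM
      have hMle : ∀ i, |u i| ≤ M := by
        intro i
        rw [hM]
        exact Finset.le_sup' (fun i => |u i|) (Finset.mem_univ i)
      have hM0 : 0 ≤ M := le_trans (abs_nonneg (u j)) (hMle j)
      set m := Finset.univ.inf' Finset.univ_nonempty w with hm
      have hm0 : 0 < m := by
        rw [hm, Finset.lt_inf'_iff]
        exact fun i _ => hw0 i
      have hmle : ∀ i, m ≤ w i := by
        intro i
        rw [hm]
        exact Finset.inf'_le w (Finset.mem_univ i)
      set cc := if 0 < r then m / (M + 1) else -(m / (M + 1)) with hcc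
      have hq0 : 0 < m / (M + 1) := div_pos hm0 (by linarith)
      have hcabs : |cc| = m / (M + 1) := by
        rw [hcc]
        split_ifs
        · exact abs_of_pos hq0
        · rw [abs_neg]; exact abs_of_pos hq0
      have hcpos : 0 < cc * r := by
        rw [hcc]
        split_ifs with h
        · exact mul_pos hq0 h
        · have hrneg : r < 0 := lt_of_le_of_ne (not_lt.mp h) hr0
          have : 0 < (m / (M + 1)) * (-r) := mul_pos hq0 (by linarith)
          nlinarith
      have hw' : ∀ i, 0 ≤ w i + cc * u i := by
        intro i
        have h1 : |cc * u i| ≤ (m / (M + 1)) * M := by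
          rw [abs_mul, hcabs]
          exact mul_le_mul_of_nonneg_left (hMle i) hq0.le
        have h2 : (m / (M + 1)) * M ≤ m := by
          rw [div_mul_eq_mul_div, div_le_iff₀ (by linarith : (0:ℝ) < M + 1)]
          nlinarith
        have h3 := neg_abs_le (cc * u i)
        have h4 := hmle i
        linarith
      have hsum1 : ∑ i, (w i + cc * u i) = 1 := by
        rw [Finset.sum_add_distrib, hw1, ← Finset.mul_sum, hu0, mul_zero, add_zero]
      have hK' := hlift _ hw' hsum1
      have e1 : ∑ i, (w i + cc * u i) • (p i).1 = x₀ := by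
        simp only [add_smul]
        rw [Finset.sum_add_distrib, hfst]
        have e : ∑ i, (cc * u i) • (p i).1 = cc • ∑ i, u i • (p i).1 := by
          rw [Finset.smul_sum]
          exact Finset.sum_congr rfl (fun i _ => by rw [smul_smul])
        rw [e, hulin, smul_zero, add_zero]
      have e2 : ∑ i, (w i + cc * u i) * (p i).2 = 𝔅 x₀ + cc * r := by
        simp only [add_mul]
        rw [Finset.sum_add_distrib, hsnd, hr, Finset.mul_sum]
        congr 1
        exact Finset.sum_congr rfl (fun i _ => by ring)
      rw [e1, e2] at hK'
      have := hmax _ hK'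
      linarith
  -- cardinality bound
  have hcard : Fintype.card ι ≤ d + 1 := by
    have h1 := hxai.card_le_finrank_succ
    have h2 : Module.finrank ℝ (vectorSpan ℝ (Set.range fun i => (p i).1)) ≤
        Module.finrank ℝ (EuclideanSpace ℝ (Fin d)) := Submodule.finrank_le _
    rw [finrank_euclideanSpace_fin] at h2
    omega
  -- 𝔅 = f at the points
  have h𝔅eqf : ∀ i, 𝔅 ((p i).1) = f ((p i).1) := by
    by_contra hcon
    push_neg at hcon
    obtain ⟨j, hj⟩ := hcon
    have hltj : f ((p j).1) < 𝔅 ((p j).1) :=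
      lt_of_le_of_ne (h𝔅maj _ (hpfr j).1) (fun h => hj h.symm)
    have hjensen : ∑ i, w i • 𝔅 ((p i).1) ≤ 𝔅 (∑ i, w i • (p i).1) :=
      h𝔅conc.le_map_sum (fun i _ => (hw0 i).le) hw1 (fun i _ => hfr (hpfr i).1)
    rw [hfst] at hjensen
    simp only [smul_eq_mul] at hjensen
    have hstrict : ∑ i, w i * f ((p i).1) < ∑ i, w i * 𝔅 ((p i).1) := by
      apply Finset.sum_lt_sum
      · intro i _
        exact mul_le_mul_of_nonneg_left (h𝔅maj _ (hpfr i).1) (hw0 i).le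
      · exact ⟨j, Finset.mem_univ j, by nlinarith [hw0 j]⟩
    have heq2 : ∑ i, w i * f ((p i).1) = 𝔅 x₀ := by
      rw [← hsnd]
      exact Finset.sum_congr rfl (fun i _ => by rw [(hpfr i).2])
    linarith
  -- affine map g
  set i₀ := Classical.arbitrary ι with hi₀
  have hlin : LinearIndependent ℝ (fun i : {x : ι // x ≠ i₀} => (p (i : ι)).1 - (p i₀).1) := by
    have h := (affineIndependent_iff_linearIndependent_vsub ℝ (fun i => (p i).1) i₀).mp hxai
    simpa [vsub_eq_sub] using h
  obtain ⟨L, hL⟩ := myExistsLinearMap hlin (fun i => f ((p (i : ι)).1) - f ((p i₀).1))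
  set c₀ := f ((p i₀).1) - L ((p i₀).1) with hc₀
  set g : EuclideanSpace ℝ (Fin d) →ᵃ[ℝ] ℝ :=
    ⟨fun z => L z + c₀, L, by intro q v; simp [map_add]; ring⟩ with hg
  have hgval : ∀ z, g z = L z + c₀ := fun z => rfl
  have hgf : ∀ i, g ((p i).1) = f ((p i).1) := by
    intro i
    rcases eq_or_ne i i₀ with rfl | hii
    · rw [hgval, hc₀]; ring
    · have h := hL ⟨i, hii⟩
      rw [map_sub] at h
      rw [hgval, hc₀]
      simp only at h
      linarith
  -- representation over ι
  set X := Set.range (fun i => (p i).1) with hX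
  have hXfr : X ⊆ S := by rintro _ ⟨i, rfl⟩; exact (hpfr i).1
  have hXω : convexHull ℝ X ⊆ ω := convexHull_min (hXfr.trans hfr) hωconv
  have hinj : Function.Injective (fun i => (p i).1) := hxai.injective
  have hrep : ∀ z ∈ convexHull ℝ X, ∃ μ : ι → ℝ,
      (∀ i, 0 ≤ μ i) ∧ ∑ i, μ i = 1 ∧ ∑ i, μ i • (p i).1 = z := by
    intro z hz
    set s : Finset (EuclideanSpace ℝ (Fin d)) := Finset.univ.image (fun i => (p i).1) with hs
    have hsX : (s : Set (EuclideanSpace ℝ (Fin d))) = X := by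
      rw [hs, Finset.coe_image, Finset.coe_univ, Set.image_univ]
    rw [← hsX, Finset.convexHull_eq] at hz
    obtain ⟨u, hu0, hu1, hcm⟩ := hz
    refine ⟨fun i => u ((p i).1),
      fun i => hu0 _ (by rw [hs]; exact Finset.mem_image_of_mem _ (Finset.mem_univ i)), ?_, ?_⟩
    · rw [← hu1, hs, Finset.sum_image (fun a _ b _ h => hinj h)]
    · rw [← hcm, Finset.centerMass_eq_of_sum_1 _ _ hu1, hs,
        Finset.sum_image (fun a _ b _ h => hinj h)]
      simp
  have hmemhull : ∀ μ : ι → ℝ, (∀ i, 0 ≤ μ i) → ∑ i, μ i = 1 →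
      ∑ i, μ i • (p i).1 ∈ convexHull ℝ X := by
    intro μ hμ0 hμ1
    have h1 : Finset.univ.centerMass μ (fun i => (p i).1) ∈ convexHull ℝ X :=
      Finset.centerMass_mem_convexHull _ (fun i _ => hμ0 i) (by rw [hμ1]; norm_num)
        (fun i _ => Set.mem_range_self i)
    rwa [Finset.centerMass_eq_of_sum_1 _ _ hμ1] at h1
  have hgsum : ∀ μ : ι → ℝ, ∑ i, μ i = 1 →
      g (∑ i, μ i • (p i).1) = ∑ i, μ i * g ((p i).1) := by
    intro μ hμ
    simp only [hgval]
    rw [map_sum]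
    simp only [map_smul, smul_eq_mul, mul_add]
    rw [Finset.sum_add_distrib, ← Finset.sum_mul, hμ, one_mul]
  have hlow : ∀ z ∈ convexHull ℝ X, g z ≤ 𝔅 z := by
    intro z hz
    obtain ⟨μ, hμ0, hμ1, hμs⟩ := hrep z hz
    have hKz := hlift μ hμ0 hμ1
    have h1 : ∑ i, μ i * (p i).2 ≤ 𝔅 (∑ i, μ i • (p i).1) := (hKhyp hKz).2
    rw [hμs] at h1
    have h2 : g z = ∑ i, μ i * (p i).2 := by
      rw [← hμs, hgsum μ hμ1]
      exact Finset.sum_congr rfl (fun i _ => by rw [hgf i, (hpfr i).2])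
    linarith
  have hgx₀ : g x₀ = 𝔅 x₀ := by
    conv_lhs => rw [← hfst]
    rw [hgsum w hw1, ← hsnd]
    exact Finset.sum_congr rfl (fun i _ => by rw [hgf i, (hpfr i).2])
  have hx₀mem : x₀ ∈ convexHull ℝ X := by
    rw [← hfst]
    exact hmemhull w (fun i => (hw0 i).le) hw1
  have hupp : ∀ z ∈ convexHull ℝ X, 𝔅 z ≤ g z := by
    intro z hz
    by_contra hlt
    push_neg at hlt
    have hgz := hlow z hz
    obtain ⟨μ, hμ0, hμ1, hμs⟩ := hrep z hz
    set m := Finset.univ.inf' Finset.univ_nonempty w with hm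
    have hm0 : 0 < m := by
      rw [hm, Finset.lt_inf'_iff]
      exact fun i _ => hw0 i
    have hmle : ∀ i, m ≤ w i := by
      intro i
      rw [hm]
      exact Finset.inf'_le w (Finset.mem_univ i)
    have hm1 : m ≤ 1 := by
      have h1 := hmle (Classical.arbitrary ι)
      have h2 : w (Classical.arbitrary ι) ≤ 1 := by
        rw [← hw1]
        exact Finset.single_le_sum (fun i _ => (hw0 i).le) (Finset.mem_univ _)
      linarith
    set α := m / 2 with hα
    have hα0 : 0 < α := by positivity
    have hα1 : α < 1 := by rw [hα]; linarith
    have hμle1 : ∀ i, μ i ≤ 1 := fun i => by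
      rw [← hμ1]
      exact Finset.single_le_sum (fun i _ => hμ0 i) (Finset.mem_univ i)
    set ν := fun i => (w i - α * μ i) / (1 - α) with hν
    have hν0 : ∀ i, 0 ≤ ν i := by
      intro i
      apply div_nonneg _ (by linarith)
      have h1 : α * μ i ≤ α := by nlinarith [hμ0 i, hμle1 i]
      have h2 := hmle i
      rw [hα] at h1 ⊢
      linarith
    have hν1 : ∑ i, ν i = 1 := by
      simp only [hν]
      rw [← Finset.sum_div, Finset.sum_sub_distrib, hw1, ← Finset.mul_sum, hμ1, mul_one,
        div_self (by linarith : (1:ℝ) - α ≠ 0)]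
    set z' := ∑ i, ν i • (p i).1 with hz'
    have hz'mem : z' ∈ convexHull ℝ X := hmemhull ν hν0 hν1
    have hcombo : α • z + (1 - α) • z' = x₀ := by
      rw [hz', ← hμs, ← hfst, Finset.smul_sum, Finset.smul_sum, ← Finset.sum_add_distrib]
      apply Finset.sum_congr rfl
      intro i _
      rw [smul_smul, smul_smul, ← add_smul]
      congr 1
      rw [hν]
      have h1α : (1:ℝ) - α ≠ 0 := by linarith
      field_simp
      ring
    have hconc := h𝔅conc.2 (hXω hz) (hXω hz'mem) hα0.le
      (by linarith : (0:ℝ) ≤ 1 - α) (by ring)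
    rw [hcombo] at hconc
    have h1 : g z' ≤ 𝔅 z' := hlow _ hz'mem
    have h3 : g x₀ = α * g z + (1 - α) * g z' := by
      rw [← hcombo]
      simp only [hgval, map_add, map_smul, smul_eq_mul]
      ring
    rw [hgx₀] at h3
    simp only [smul_eq_mul] at hconc
    nlinarith
  -- assemble
  set e := Fintype.equivFin ι with he
  have hXeq : Set.range (fun j : Fin (Fintype.card ι) => (p (e.symm j)).1) = X := by
    rw [hX]
    have : (fun j : Fin (Fintype.card ι) => (p (e.symm j)).1) =
        (fun i => (p i).1) ∘ e.symm := rfl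
    rw [this]
    exact Function.Surjective.range_comp e.symm.surjective (fun i => (p i).1)
  refine ⟨Fintype.card ι, hcard, fun j => (p (e.symm j)).1, fun j => (hpfr _).1, ?_,
    fun j => h𝔅eqf _, ⟨g, ?_⟩⟩
  · rw [hXeq]
    exact hx₀mem
  · intro z hz
    rw [hXeq] at hz
    exact le_antisymm (hupp z hz) (hlow z hz)
end

section
/- Let γ = (γ₁, γ₂) : I → ℝ² and f : I → ℝ be C³ with γ₁' > 0 on I. Set v = γ₂'/γ₁' and u = f'/γ₁'. Then (u''v' - u'v'')·(γ₁')³ equals the 3×3 determinant with rows (γ₁', γ₂', f'), (γ₁'', γ₂'', f''), (γ₁''', γ₂''', f'''). -/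
open Set

lemma quot_derivs (s : Set ℝ) (hs : IsOpen s) (p q w : ℝ → ℝ)
    (hp : ContDiffOn ℝ 2 p s) (hq : ContDiffOn ℝ 2 q s)
    (hq0 : ∀ t ∈ s, q t ≠ 0)
    (hw : ∀ t ∈ s, w t = p t / q t) :
    (∀ t ∈ s, deriv w t =
      (deriv p t * q t - p t * deriv q t) / (q t) ^ 2) ∧
    (∀ t ∈ s, deriv (deriv w) t =
      ((deriv (deriv p) t * q t - p t * deriv (deriv q) t) * q t
        - 2 * deriv q t * (deriv p t * q t - p t * deriv q t)) / (q t) ^ 3) := by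
  have hp' : ContDiffOn ℝ 1 (deriv p) s := hp.deriv_of_isOpen hs (by norm_num)
  have hq' : ContDiffOn ℝ 1 (deriv q) s := hq.deriv_of_isOpen hs (by norm_num)
  have hdp : ∀ t ∈ s, DifferentiableAt ℝ p t := fun t ht =>
    (hp.contDiffAt (hs.mem_nhds ht)).differentiableAt (by norm_num)
  have hdq : ∀ t ∈ s, DifferentiableAt ℝ q t := fun t ht =>
    (hq.contDiffAt (hs.mem_nhds ht)).differentiableAt (by norm_num)
  have hdp' : ∀ t ∈ s, DifferentiableAt ℝ (deriv p) t := fun t ht =>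
    (hp'.contDiffAt (hs.mem_nhds ht)).differentiableAt one_ne_zero
  have hdq' : ∀ t ∈ s, DifferentiableAt ℝ (deriv q) t := fun t ht =>
    (hq'.contDiffAt (hs.mem_nhds ht)).differentiableAt one_ne_zero
  have h1 : ∀ t ∈ s, deriv w t =
      (deriv p t * q t - p t * deriv q t) / (q t) ^ 2 := by
    intro t ht
    have hev : w =ᶠ[nhds t] fun x => p x / q x :=
      Filter.eventuallyEq_of_mem (hs.mem_nhds ht) hw
    rw [hev.deriv_eq, deriv_fun_div (hdp t ht) (hdq t ht) (hq0 t ht)]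
  refine ⟨h1, ?_⟩
  intro t ht
  have hev : deriv w =ᶠ[nhds t]
      fun x => (deriv p x * q x - p x * deriv q x) / (q x) ^ 2 :=
    Filter.eventuallyEq_of_mem (hs.mem_nhds ht) h1
  rw [hev.deriv_eq]
  have hN : DifferentiableAt ℝ (fun x => deriv p x * q x - p x * deriv q x) t :=
    ((hdp' t ht).mul (hdq t ht)).sub ((hdp t ht).mul (hdq' t ht))
  have hD : DifferentiableAt ℝ (fun x => (q x) ^ 2) t := (hdq t ht).pow 2
  rw [deriv_fun_div hN hD (pow_ne_zero 2 (hq0 t ht))]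
  rw [deriv_fun_sub (f := fun x => deriv p x * q x) (g := fun x => p x * deriv q x) ((hdp' t ht).mul (hdq t ht)) ((hdp t ht).mul (hdq' t ht)),
    deriv_fun_mul (hdp' t ht) (hdq t ht), deriv_fun_mul (hdp t ht) (hdq' t ht),
    deriv_fun_pow (hdq t ht) 2]
  field_simp [hq0 t ht]
  ring

theorem torsion_determinant_identity
    (a b : ℝ) (hab : a < b) (γ₁ γ₂ f : ℝ → ℝ)
    (hγ₁ : ContDiffOn ℝ 3 γ₁ (Set.Ioo a b))
    (hγ₂ : ContDiffOn ℝ 3 γ₂ (Set.Ioo a b))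
    (hf : ContDiffOn ℝ 3 f (Set.Ioo a b))
    (hγ₁' : ∀ t ∈ Set.Ioo a b, 0 < deriv γ₁ t)
    (v u : ℝ → ℝ)
    (hv : ∀ t ∈ Set.Ioo a b, v t = deriv γ₂ t / deriv γ₁ t)
    (hu : ∀ t ∈ Set.Ioo a b, u t = deriv f t / deriv γ₁ t) :
    ∀ t ∈ Set.Ioo a b,
      (deriv (deriv u) t * deriv v t - deriv u t * deriv (deriv v) t) *
          (deriv γ₁ t) ^ 3 =
        Matrix.det !![deriv γ₁ t, deriv γ₂ t, deriv f t;
          deriv (deriv γ₁) t, deriv (deriv γ₂) t, deriv (deriv f) t;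
          deriv (deriv (deriv γ₁)) t, deriv (deriv (deriv γ₂)) t,
            deriv (deriv (deriv f)) t] := by
  intro t ht
  have hs : IsOpen (Set.Ioo a b) := isOpen_Ioo
  have hq0 : ∀ x ∈ Set.Ioo a b, deriv γ₁ x ≠ 0 := fun x hx => (hγ₁' x hx).ne'
  have hq : ContDiffOn ℝ 2 (deriv γ₁) (Set.Ioo a b) :=
    hγ₁.deriv_of_isOpen hs (by norm_num)
  have hpu : ContDiffOn ℝ 2 (deriv f) (Set.Ioo a b) :=
    hf.deriv_of_isOpen hs (by norm_num)
  have hpv : ContDiffOn ℝ 2 (deriv γ₂) (Set.Ioo a b) :=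
    hγ₂.deriv_of_isOpen hs (by norm_num)
  obtain ⟨hu1, hu2⟩ := quot_derivs _ hs (deriv f) (deriv γ₁) u hpu hq hq0 hu
  obtain ⟨hv1, hv2⟩ := quot_derivs _ hs (deriv γ₂) (deriv γ₁) v hpv hq hq0 hv
  rw [hu1 t ht, hu2 t ht, hv1 t ht, hv2 t ht, Matrix.det_fin_three]
  field_simp [hq0 t ht]
  simp only [Matrix.of_apply, Matrix.cons_val', Matrix.cons_val_zero, Matrix.cons_val_one,
    Matrix.cons_val_two, Matrix.empty_val', Matrix.cons_val_fin_one, Matrix.head_cons, Matrix.tail_cons, Matrix.vecHead, Matrix.vecTail,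
    Function.comp_apply, Matrix.cons_val_succ]
  ring
end

section
/- Let p > 2 and t ∈ [0, 4]. Then sup{‖φ+ψ‖_p^p : φ, ψ ∈ L^p([0,1]), ‖φ‖_p = ‖ψ‖_p = 1, ‖φ-ψ‖_p^p = t} = 2^p - t. In particular, if ‖φ‖_p = ‖ψ‖_p = 1 then ‖φ+ψ‖_p^p + ‖φ-ψ‖_p^p ≤ 2^p. -/
open MeasureTheory

section Aux

variable {α : Type*} [MeasurableSpace α] {μ : Measure α}

private lemma clarkson_point {p : ℝ} (hp : 2 ≤ p) (a b : ℝ) :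
    ‖a + b‖₊ ^ p + ‖a - b‖₊ ^ p ≤ 2 ^ (p - 1) * (‖a‖₊ ^ p + ‖b‖₊ ^ p) := by
  have hp0 : (0:ℝ) < p := by linarith
  have h1 : ‖a + b‖₊ ^ p + ‖a - b‖₊ ^ p ≤ (‖a + b‖₊ ^ (2:ℝ) + ‖a - b‖₊ ^ (2:ℝ)) ^ (p / 2) := by
    have := NNReal.rpow_add_rpow_le (p := 2) (q := p) ‖a + b‖₊ ‖a - b‖₊ (by norm_num) hp
    have h2 := NNReal.rpow_le_rpow this (le_of_lt hp0)
    rwa [← NNReal.rpow_mul, ← NNReal.rpow_mul, one_div, inv_mul_cancel₀ (ne_of_gt hp0),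
      NNReal.rpow_one, show (1/2:ℝ) * p = p / 2 by ring] at h2
  have h2 : ‖a + b‖₊ ^ (2:ℝ) + ‖a - b‖₊ ^ (2:ℝ) = 2 * (‖a‖₊ ^ (2:ℝ) + ‖b‖₊ ^ (2:ℝ)) := by
    have : ∀ x : ℝ, ‖x‖₊ ^ (2:ℝ) = (‖x‖₊ : NNReal) ^ (2:ℕ) := by
      intro x; rw [← NNReal.rpow_natCast]; norm_num
    apply NNReal.coe_injective
    push_cast [this]
    simp only [Real.nnnorm_abs, coe_nnnorm, Real.norm_eq_abs, sq_abs]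
    ring
  rw [h2] at h1
  have h3 : ((2:NNReal) * (‖a‖₊ ^ (2:ℝ) + ‖b‖₊ ^ (2:ℝ))) ^ (p/2)
      = 2 ^ (p/2) * (‖a‖₊ ^ (2:ℝ) + ‖b‖₊ ^ (2:ℝ)) ^ (p/2) := by
    rw [NNReal.mul_rpow]
  have h4 : (‖a‖₊ ^ (2:ℝ) + ‖b‖₊ ^ (2:ℝ)) ^ (p/2)
      ≤ 2 ^ (p/2 - 1) * (‖a‖₊ ^ p + ‖b‖₊ ^ p) := by
    have := NNReal.rpow_add_le_mul_rpow_add_rpow (‖a‖₊ ^ (2:ℝ)) (‖b‖₊ ^ (2:ℝ))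
      (p := p/2) (by linarith)
    rwa [← NNReal.rpow_mul, ← NNReal.rpow_mul, show (2:ℝ) * (p/2) = p by ring] at this
  calc ‖a + b‖₊ ^ p + ‖a - b‖₊ ^ p ≤ 2 ^ (p/2) * (‖a‖₊ ^ (2:ℝ) + ‖b‖₊ ^ (2:ℝ)) ^ (p/2) := by
        rw [← h3]; exact h1
    _ ≤ 2 ^ (p/2) * (2 ^ (p/2 - 1) * (‖a‖₊ ^ p + ‖b‖₊ ^ p)) := mul_le_mul_right h4 _
    _ = 2 ^ (p - 1) * (‖a‖₊ ^ p + ‖b‖₊ ^ p) := by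
        rw [← mul_assoc, ← NNReal.rpow_add (by norm_num)]; ring_nf

private lemma clarkson_point_ennreal {p : ℝ} (hp : 2 ≤ p) (a b : ℝ) :
    (‖a + b‖₊ : ENNReal) ^ p + (‖a - b‖₊ : ENNReal) ^ p
      ≤ 2 ^ (p - 1) * ((‖a‖₊ : ENNReal) ^ p + (‖b‖₊ : ENNReal) ^ p) := by
  have hp0 : (0:ℝ) ≤ p := by linarith
  have h := clarkson_point hp a b
  calc (‖a + b‖₊ : ENNReal) ^ p + (‖a - b‖₊ : ENNReal) ^ p
      = ((‖a + b‖₊ ^ p + ‖a - b‖₊ ^ p : NNReal) : ENNReal) := by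
        push_cast [ENNReal.coe_rpow_of_nonneg _ hp0]; rfl
    _ ≤ ((2 ^ (p - 1) * (‖a‖₊ ^ p + ‖b‖₊ ^ p) : NNReal) : ENNReal) := ENNReal.coe_le_coe.mpr h
    _ = 2 ^ (p - 1) * ((‖a‖₊ : ENNReal) ^ p + (‖b‖₊ : ENNReal) ^ p) := by
        push_cast [ENNReal.coe_rpow_of_nonneg _ hp0,
          ENNReal.coe_rpow_of_nonneg _ (by linarith : (0:ℝ) ≤ p - 1)]
        rfl

private lemma Lp_norm_rpow {p : ℝ} (hp : 0 < p) (f : Lp ℝ (ENNReal.ofReal p) μ) :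
    ‖f‖ ^ p = (∫⁻ a, (‖f a‖₊ : ENNReal) ^ p ∂μ).toReal := by
  have hq0 : ENNReal.ofReal p ≠ 0 := by simp [ENNReal.ofReal_eq_zero, not_le, hp]
  have hqt : ENNReal.ofReal p ≠ ⊤ := ENNReal.ofReal_ne_top
  rw [Lp.norm_def, eLpNorm_eq_lintegral_rpow_enorm_toReal hq0 hqt, ENNReal.toReal_ofReal hp.le,
    ENNReal.toReal_rpow, ← ENNReal.rpow_mul, one_div, inv_mul_cancel₀ hp.ne',
    ENNReal.rpow_one]
  rfl

private lemma lintegral_rpow_eq {p : ℝ} (hp : 0 < p) (f : Lp ℝ (ENNReal.ofReal p) μ) :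
    (∫⁻ a, (‖f a‖₊ : ENNReal) ^ p ∂μ) = (eLpNorm f (ENNReal.ofReal p) μ) ^ p := by
  have hq0 : ENNReal.ofReal p ≠ 0 := by simp [ENNReal.ofReal_eq_zero, not_le, hp]
  rw [eLpNorm_eq_lintegral_rpow_enorm_toReal hq0 ENNReal.ofReal_ne_top, ENNReal.toReal_ofReal hp.le,
    ← ENNReal.rpow_mul, one_div, inv_mul_cancel₀ hp.ne', ENNReal.rpow_one]
  rfl

private lemma Lp_norm_rpow_of_ae {p : ℝ} (hp : 0 < p) (f : Lp ℝ (ENNReal.ofReal p) μ)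
    {g : α → ℝ} (hg : (f : α → ℝ) =ᵐ[μ] g) :
    ‖f‖ ^ p = (∫⁻ a, (‖g a‖₊ : ENNReal) ^ p ∂μ).toReal := by
  rw [Lp_norm_rpow hp, lintegral_congr_ae (hg.mono fun a ha => by rw [ha])]

private lemma Lp_clarkson {p : ℝ} (hp : 2 ≤ p) (φ ψ : Lp ℝ (ENNReal.ofReal p) μ) :
    ‖φ + ψ‖ ^ p + ‖φ - ψ‖ ^ p ≤ 2 ^ (p - 1) * (‖φ‖ ^ p + ‖ψ‖ ^ p) := by
  have hp0 : (0:ℝ) < p := by linarith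
  have key : (∫⁻ a, (‖(φ + ψ) a‖₊ : ENNReal) ^ p ∂μ) + (∫⁻ a, (‖(φ - ψ) a‖₊ : ENNReal) ^ p ∂μ)
      ≤ 2 ^ (p - 1) * ((∫⁻ a, (‖φ a‖₊ : ENNReal) ^ p ∂μ)
        + (∫⁻ a, (‖ψ a‖₊ : ENNReal) ^ p ∂μ)) := by
    have m1 : AEMeasurable (fun a => (‖(φ + ψ) a‖₊ : ENNReal) ^ p) μ :=
      ((Lp.aestronglyMeasurable (φ + ψ)).enorm).pow_const p
    have m3 : AEMeasurable (fun a => (‖φ a‖₊ : ENNReal) ^ p) μ :=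
      ((Lp.aestronglyMeasurable φ).enorm).pow_const p
    have m4 : AEMeasurable (fun a => (‖ψ a‖₊ : ENNReal) ^ p) μ :=
      ((Lp.aestronglyMeasurable ψ).enorm).pow_const p
    rw [← lintegral_add_left' m1, ← lintegral_add_left' m3, ← lintegral_const_mul'' _ (f := fun a => (‖φ a‖₊ : ENNReal) ^ p + (‖ψ a‖₊ : ENNReal) ^ p) (m3.add m4)]
    refine lintegral_mono_ae ?_
    filter_upwards [Lp.coeFn_add φ ψ, Lp.coeFn_sub φ ψ] with a ha hs
    rw [ha, hs]
    exact clarkson_point_ennreal hp (φ a) (ψ a)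
  have fin : ∀ f : Lp ℝ (ENNReal.ofReal p) μ, (∫⁻ a, (‖f a‖₊ : ENNReal) ^ p ∂μ) ≠ ⊤ := by
    intro f
    rw [lintegral_rpow_eq hp0 f]
    exact ENNReal.rpow_ne_top_of_nonneg hp0.le (Lp.eLpNorm_ne_top f)
  rw [Lp_norm_rpow hp0, Lp_norm_rpow hp0, Lp_norm_rpow hp0, Lp_norm_rpow hp0]
  have h2 : (2:ℝ) ^ (p - 1) = ((2:ENNReal) ^ (p-1)).toReal := by
    rw [← ENNReal.toReal_rpow]; norm_num
  rw [h2, ← ENNReal.toReal_add (fin _) (fin _), ← ENNReal.toReal_add (fin _) (fin _),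
    ← ENNReal.toReal_mul]
  apply ENNReal.toReal_mono
  · exact ENNReal.mul_ne_top (ENNReal.rpow_ne_top_of_nonneg (by linarith) (by norm_num))
      (ENNReal.add_ne_top.mpr ⟨fin _, fin _⟩)
  · exact key

private lemma clarkson_unit {p : ℝ} (hp : 2 ≤ p) (φ ψ : Lp ℝ (ENNReal.ofReal p) μ)
    (h1 : ‖φ‖ = 1) (h2 : ‖ψ‖ = 1) : ‖φ + ψ‖ ^ p + ‖φ - ψ‖ ^ p ≤ 2 ^ p := by
  have := Lp_clarkson hp φ ψ
  rw [h1, h2, Real.one_rpow] at this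
  have h22 : (2:ℝ) ^ (p - 1) * (1 + 1) = 2 ^ p := by
    rw [show (1:ℝ) + 1 = 2 ^ (1:ℝ) by norm_num, ← Real.rpow_add two_pos]
    norm_num
  linarith

end Aux

private lemma rpow_eq_one_imp {p x : ℝ} (hp : 0 < p) (hx : 0 ≤ x) (h : x ^ p = 1) : x = 1 := by
  have : (x ^ p) ^ (1/p) = x := by
    rw [← Real.rpow_mul hx, one_div, mul_inv_cancel₀ hp.ne', Real.rpow_one]
  rw [h, Real.one_rpow] at this
  exact this.symm

private lemma exists_extremal (p t : ℝ) (hp : 2 < p) (ht0 : 0 ≤ t) (ht4 : t ≤ 4) :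
    ∃ φ ψ : Lp ℝ (ENNReal.ofReal p) (volume : Measure (Set.Icc (0 : ℝ) 1)),
      ‖φ‖ = 1 ∧ ‖ψ‖ = 1 ∧ ‖φ - ψ‖ ^ p = t ∧ ‖φ + ψ‖ ^ p = 2 ^ p - t := by
  have hp0 : (0:ℝ) < p := by linarith
  have h2p : (0:ℝ) < 2 ^ p := Real.rpow_pos_of_pos two_pos p
  have h4 : (4:ℝ) < 2 ^ p := by
    have h := (Real.rpow_lt_rpow_left_iff (x := 2) (y := 2) (z := p) one_lt_two).mpr hp
    rwa [show (2:ℝ) ^ (2:ℝ) = 4 by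
      rw [show ((2:ℝ):ℝ) = ((2:ℕ):ℝ) by norm_num, Real.rpow_natCast]; norm_num] at h
  set s : ℝ := t / 2 ^ p with hs_def
  have hs0 : 0 ≤ s := div_nonneg ht0 h2p.le
  have hs1 : s < 1 := (div_lt_one h2p).mpr (lt_of_le_of_lt ht4 h4)
  set r : ℝ := 1 - s with hr_def
  have hr0 : 0 < r := by simp only [hr_def]; linarith
  have hr1 : r ≤ 1 := by simp only [hr_def]; linarith
  set μ : Measure (Set.Icc (0:ℝ) 1) := volume with hμ_def
  have hcomap : μ = Measure.comap Subtype.val volume := rfl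
  have himg : ∀ u : Set (Set.Icc (0:ℝ) 1), MeasurableSet u → MeasurableSet (Subtype.val '' u) :=
    fun u hu => MeasurableSet.subtype_image measurableSet_Icc hu
  set E : Set (Set.Icc (0:ℝ) 1) := Subtype.val ⁻¹' (Set.Iic r) with hE_def
  have hE : MeasurableSet E := measurableSet_Iic.preimage measurable_subtype_coe
  have hμE : μ E = ENNReal.ofReal r := by
    rw [hcomap, Measure.comap_apply _ Subtype.coe_injective himg _ hE, hE_def,
      Subtype.image_preimage_coe,
      show Set.Icc (0:ℝ) 1 ∩ Set.Iic r = Set.Icc 0 r by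
        ext x
        simp only [Set.mem_inter_iff, Set.mem_Icc, Set.mem_Iic]
        constructor
        · rintro ⟨⟨h0, _⟩, h2⟩; exact ⟨h0, h2⟩
        · rintro ⟨h0, h2⟩; exact ⟨⟨h0, le_trans h2 hr1⟩, h2⟩,
      Real.volume_Icc, sub_zero]
  have hμEc : μ Eᶜ = ENNReal.ofReal s := by
    have hEc : Eᶜ = Subtype.val ⁻¹' (Set.Ioi r) := by
      rw [hE_def, ← Set.preimage_compl, Set.compl_Iic]
    rw [hcomap, Measure.comap_apply _ Subtype.coe_injective himg _ hE.compl, hEc,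
      Subtype.image_preimage_coe,
      show Set.Icc (0:ℝ) 1 ∩ Set.Ioi r = Set.Ioc r 1 by
        ext x
        simp only [Set.mem_inter_iff, Set.mem_Icc, Set.mem_Ioc, Set.mem_Ioi]
        constructor
        · rintro ⟨⟨_, h1⟩, h2⟩; exact ⟨h2, h1⟩
        · rintro ⟨h0, h1⟩; exact ⟨⟨le_trans hr0.le h0.le, h1⟩, h0⟩,
      Real.volume_Ioc]
    congr 1
    simp only [hr_def]; ring
  have hμuniv : μ Set.univ = 1 := by
    rw [hcomap, Measure.comap_apply _ Subtype.coe_injective himg _ MeasurableSet.univ,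
      Set.image_univ, Subtype.range_coe, Real.volume_Icc]
    norm_num
  haveI : IsFiniteMeasure μ := ⟨by rw [hμuniv]; norm_num⟩
  set f : Set.Icc (0:ℝ) 1 → ℝ := fun x => if (x:ℝ) ≤ r then 1 else -1 with hf_def
  have hfm : AEStronglyMeasurable f μ :=
    (Measurable.ite hE measurable_const measurable_const).aestronglyMeasurable
  have hf : MemLp f (ENNReal.ofReal p) μ :=
    MemLp.of_bound hfm 1 (ae_of_all _ fun x => by
      by_cases h : (x:ℝ) ≤ r <;> simp [hf_def, h])
  set φ : Lp ℝ (ENNReal.ofReal p) μ := MemLp.toLp _ (memLp_const (1:ℝ)) with hφ_def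
  set ψ : Lp ℝ (ENNReal.ofReal p) μ := MemLp.toLp f hf with hψ_def
  -- ‖φ‖ = 1
  have hφ1 : ‖φ‖ = 1 := by
    have : ‖φ‖ ^ p = 1 := by
      rw [Lp_norm_rpow_of_ae hp0 φ (MemLp.coeFn_toLp _)]
      simp [hμuniv]
    exact rpow_eq_one_imp hp0 (by rw [Lp.norm_def]; exact ENNReal.toReal_nonneg) this
  have hψ1 : ‖ψ‖ = 1 := by
    have : ‖ψ‖ ^ p = 1 := by
      rw [Lp_norm_rpow_of_ae hp0 ψ (MemLp.coeFn_toLp _)]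
      have : ∀ a, (‖f a‖₊ : ENNReal) ^ p = 1 := by
        intro a
        by_cases h : (a:ℝ) ≤ r <;> simp [hf_def, h]
      rw [lintegral_congr this]
      simp [hμuniv]
    exact rpow_eq_one_imp hp0 (by rw [Lp.norm_def]; exact ENNReal.toReal_nonneg) this
  -- φ + ψ
  have hadd_ae : ((φ + ψ : Lp ℝ (ENNReal.ofReal p) μ) : Set.Icc (0:ℝ) 1 → ℝ)
      =ᵐ[μ] fun a => if (a:ℝ) ≤ r then (2:ℝ) else 0 := by
    filter_upwards [Lp.coeFn_add φ ψ, MemLp.coeFn_toLp (memLp_const (1:ℝ)),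
      MemLp.coeFn_toLp hf] with a h1 h2 h3
    rw [h1, Pi.add_apply]
    rw [← hφ_def] at h2
    rw [← hψ_def] at h3
    rw [h2, h3]
    by_cases h : (a:ℝ) ≤ r <;> simp [hf_def, h] <;> norm_num
  have hsub_ae : ((φ - ψ : Lp ℝ (ENNReal.ofReal p) μ) : Set.Icc (0:ℝ) 1 → ℝ)
      =ᵐ[μ] fun a => if (a:ℝ) ≤ r then (0:ℝ) else 2 := by
    filter_upwards [Lp.coeFn_sub φ ψ, MemLp.coeFn_toLp (memLp_const (1:ℝ)),
      MemLp.coeFn_toLp hf] with a h1 h2 h3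
    rw [h1, Pi.sub_apply]
    rw [← hφ_def] at h2
    rw [← hψ_def] at h3
    rw [h2, h3]
    by_cases h : (a:ℝ) ≤ r <;> simp [hf_def, h] <;> norm_num
  have haddnorm : ‖φ + ψ‖ ^ p = 2 ^ p - t := by
    rw [Lp_norm_rpow_of_ae hp0 _ hadd_ae]
    have hind : (fun a : Set.Icc (0:ℝ) 1 =>
        (‖(if (a:ℝ) ≤ r then (2:ℝ) else 0)‖₊ : ENNReal) ^ p)
        = E.indicator (fun _ => (2:ENNReal) ^ p) := by
      funext a
      by_cases h : (a:ℝ) ≤ r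
      · rw [if_pos h, Set.indicator_of_mem (by exact h)]
        norm_num
        try rw [ENNReal.coe_rpow_of_nonneg _ hp0.le]
        try norm_num
      · rw [if_neg h, Set.indicator_of_notMem (by exact h)]
        simp [ENNReal.zero_rpow_of_pos hp0]
    rw [hind, lintegral_indicator_const hE, hμE, ENNReal.toReal_mul,
      ENNReal.toReal_ofReal hr0.le, ← ENNReal.toReal_rpow]
    norm_num
    try rw [hr_def, hs_def, mul_sub, mul_one, mul_div_cancel₀ _ h2p.ne']
  have hsubnorm : ‖φ - ψ‖ ^ p = t := by
    rw [Lp_norm_rpow_of_ae hp0 _ hsub_ae]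
    have hind : (fun a : Set.Icc (0:ℝ) 1 =>
        (‖(if (a:ℝ) ≤ r then (0:ℝ) else 2)‖₊ : ENNReal) ^ p)
        = Eᶜ.indicator (fun _ => (2:ENNReal) ^ p) := by
      funext a
      by_cases h : (a:ℝ) ≤ r
      · rw [if_pos h, Set.indicator_of_notMem (by simp; exact h)]
        simp [ENNReal.zero_rpow_of_pos hp0]
      · rw [if_neg h, Set.indicator_of_mem (by simp; exact h)]
        norm_num
        try rw [ENNReal.coe_rpow_of_nonneg _ hp0.le]
        try norm_num
    rw [hind, lintegral_indicator_const hE.compl, hμEc, ENNReal.toReal_mul,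
      ENNReal.toReal_ofReal hs0, ← ENNReal.toReal_rpow]
    norm_num
    try rw [hs_def, mul_div_cancel₀ _ h2p.ne']
  exact ⟨φ, ψ, hφ1, hψ1, hsubnorm, haddnorm⟩

theorem bellman_value_on_diagonal (p : ℝ) (hp : 2 < p) (t : ℝ) (ht0 : 0 ≤ t) (ht4 : t ≤ 4) :
    sSup {y : ℝ | ∃ φ ψ : Lp ℝ (ENNReal.ofReal p) (volume : Measure (Set.Icc (0 : ℝ) 1)),
        ‖φ‖ = 1 ∧ ‖ψ‖ = 1 ∧ ‖φ - ψ‖ ^ p = t ∧ y = ‖φ + ψ‖ ^ p} = 2 ^ p - t ∧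
    ∀ φ ψ : Lp ℝ (ENNReal.ofReal p) (volume : Measure (Set.Icc (0 : ℝ) 1)),
      ‖φ‖ = 1 → ‖ψ‖ = 1 → ‖φ + ψ‖ ^ p + ‖φ - ψ‖ ^ p ≤ 2 ^ p := by
  constructor
  · apply IsGreatest.csSup_eq
    constructor
    · obtain ⟨φ, ψ, h1, h2, h3, h4⟩ := exists_extremal p t hp ht0 ht4
      exact ⟨φ, ψ, h1, h2, h3, h4.symm⟩
    · rintro y ⟨φ, ψ, h1, h2, h3, rfl⟩
      have := clarkson_unit hp.le φ ψ h1 h2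
      linarith [h3 ▸ this]
  · exact fun φ ψ h1 h2 => clarkson_unit hp.le φ ψ h1 h2
end
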